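/- arXiv:math/9302209 — 7 statements merged into one kernel-verified Lean document; each statement's English description precedes it below -/
import Mathlib

section
/- (Rockafellar) Let T : E → 2^{E*} be maximal monotone on a real Banach space E and suppose the interior of the convex hull of D(T) is nonempty. Then int D(T) = int(co D(T)) (in particular int D(T) is convex), T is locally bounded at each point of int D(T), and the closure of D(T) equals the closure of int D(T), hence is convex. -/
open NormedSpace Set Metric

namespace Rockafellar

variable {E : Type*} [NormedAddCommGroup E] [NormedSpace ℝ E]

/-- Anchored graph triples: `(v, g, s)` with `g ∈ T (x+v)` and `s = g v`. -/
def Spts (T : E → Set (StrongDual ℝ E)) (x : E) : Set (E × StrongDual ℝ E × ℝ) :=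
  {p | p.2.1 ∈ T (x + p.1) ∧ p.2.2 = p.2.1 p.1}

def Hull (T : E → Set (StrongDual ℝ E)) (x : E) : Set (E × StrongDual ℝ E × ℝ) :=
  convexHull ℝ (Spts T x)

lemma convex_halfspaceP (w : E) (h : StrongDual ℝ E) (r : ℝ) :
    Convex ℝ {p : E × StrongDual ℝ E × ℝ | h p.1 + p.2.1 w ≤ p.2.2 + r} := by
  intro p hp q hq a b ha hb hab
  simp only [mem_setOf_eq] at *
  have e1 : (a • p + b • q).1 = a • p.1 + b • q.1 := rfl
  have e2 : (a • p + b • q).2.1 = a • p.2.1 + b • q.2.1 := rfl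
  have e3 : (a • p + b • q).2.2 = a * p.2.2 + b * q.2.2 := rfl
  rw [e1, e2, e3, map_add, map_smul, map_smul]
  simp only [ContinuousLinearMap.add_apply, ContinuousLinearMap.coe_smul',
    Pi.smul_apply, smul_eq_mul]
  have hr : a * r + b * r = r := by rw [← add_mul, hab, one_mul]
  nlinarith [mul_le_mul_of_nonneg_left hp ha, mul_le_mul_of_nonneg_left hq hb]

lemma pair_ineq {T : E → Set (StrongDual ℝ E)}
    (hmono : ∀ x y x' y', x' ∈ T x → y' ∈ T y → 0 ≤ (x' - y') (x - y)) (x : E) :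
    ∀ p ∈ Hull T x, ∀ q ∈ Hull T x,
      q.2.1 p.1 + p.2.1 q.1 ≤ p.2.2 + q.2.2 := by
  -- first: q in Spts, p in Hull
  have base : ∀ p ∈ Spts T x, ∀ q ∈ Spts T x,
      q.2.1 p.1 + p.2.1 q.1 ≤ p.2.2 + q.2.2 := by
    rintro ⟨v, g, s⟩ ⟨hg, hs⟩ ⟨w, h, r⟩ ⟨hh, hr⟩
    have := hmono (x + v) (x + w) g h hg hh
    simp only [ContinuousLinearMap.sub_apply, add_sub_add_left_eq_sub, map_sub] at this
    simp only [hs, hr] at *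
    linarith
  have step1 : ∀ q ∈ Spts T x, ∀ p ∈ Hull T x,
      q.2.1 p.1 + p.2.1 q.1 ≤ p.2.2 + q.2.2 := by
    intro q hq
    have : Hull T x ⊆ {p : E × StrongDual ℝ E × ℝ | q.2.1 p.1 + p.2.1 q.1 ≤ p.2.2 + q.2.2} := by
      apply convexHull_min _ (convex_halfspaceP q.1 q.2.1 q.2.2)
      intro p hp
      exact base p hp q hq
    exact fun p hp => this hp
  intro p hp q hq
  have : Hull T x ⊆ {q : E × StrongDual ℝ E × ℝ | p.2.1 q.1 + q.2.1 p.1 ≤ q.2.2 + p.2.2} := by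
    apply convexHull_min _ (convex_halfspaceP p.1 p.2.1 p.2.2)
    intro q' hq'
    have := step1 q' hq' p hp
    simp only [mem_setOf_eq]
    linarith
  have := this hq
  simp only [mem_setOf_eq] at this
  linarith

lemma self_ineq {T : E → Set (StrongDual ℝ E)}
    (hmono : ∀ x y x' y', x' ∈ T x → y' ∈ T y → 0 ≤ (x' - y') (x - y)) (x : E) :
    ∀ p ∈ Hull T x, p.2.1 p.1 ≤ p.2.2 := by
  intro p hp
  have := pair_ineq hmono x p hp p hp
  linarith

/-- Every point of the convex hull of the domain (shifted by `x`) appears as a first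
coordinate in the hull of graph triples. -/
lemma proj_hull {T : E → Set (StrongDual ℝ E)} (x : E) :
    ∀ y ∈ convexHull ℝ {z | (T z).Nonempty}, ∃ h r, (y - x, h, r) ∈ Hull T x := by
  have hA : Convex ℝ {y : E | ∃ h r, (y - x, h, r) ∈ Hull T x} := by
    rintro y₁ ⟨h₁, r₁, hy₁⟩ y₂ ⟨h₂, r₂, hy₂⟩ a b ha hb hab
    refine ⟨a • h₁ + b • h₂, a * r₁ + b * r₂, ?_⟩
    have := (convex_convexHull ℝ (Spts T x)) hy₁ hy₂ ha hb hab
    have he : a • ((y₁ - x : E), h₁, r₁) + b • (y₂ - x, h₂, r₂)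
        = ((a • y₁ + b • y₂ - x : E), a • h₁ + b • h₂, a * r₁ + b * r₂) := by
      have : a • (y₁ - x) + b • (y₂ - x) = a • y₁ + b • y₂ - x := by
        have hx : a • x + b • x = x := by rw [← add_smul, hab, one_smul]
        rw [smul_sub, smul_sub, sub_add_sub_comm, hx]
      simp only [Prod.smul_mk, Prod.mk_add_mk, smul_eq_mul, this]
    rw [he] at this
    exact this
  intro y hy
  refine convexHull_min ?_ hA hy
  rintro d ⟨d', hd'⟩
  exact ⟨d', d' (d - x), by
    simp only [Hull]
    apply subset_convexHull
    exact ⟨by simpa using hd', rfl⟩⟩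

/-- The truncated sets used for the Baire argument. -/
def Xi (T : E → Set (StrongDual ℝ E)) (x : E) (n : ℕ) : Set E :=
  {w | ∃ h r, (w, h, r) ∈ Hull T x ∧ ‖h‖ ≤ n ∧ r ≤ n}

lemma convex_Xi (T : E → Set (StrongDual ℝ E)) (x : E) (n : ℕ) : Convex ℝ (Xi T x n) := by
  rintro w₁ ⟨h₁, r₁, hm₁, hn₁, hr₁⟩ w₂ ⟨h₂, r₂, hm₂, hn₂, hr₂⟩ a b ha hb hab
  refine ⟨a • h₁ + b • h₂, a * r₁ + b * r₂, ?_, ?_, ?_⟩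
  · have := (convex_convexHull ℝ (Spts T x)) hm₁ hm₂ ha hb hab
    simpa only [Hull, Prod.smul_mk, Prod.mk_add_mk, smul_eq_mul] using this
  · calc ‖a • h₁ + b • h₂‖ ≤ ‖a • h₁‖ + ‖b • h₂‖ := norm_add_le _ _
      _ = a * ‖h₁‖ + b * ‖h₂‖ := by
          rw [norm_smul, norm_smul, Real.norm_of_nonneg ha, Real.norm_of_nonneg hb]
      _ ≤ a * n + b * n := by
          gcongr
      _ = n := by rw [← add_mul, hab, one_mul]
  · nlinarith [mul_le_mul_of_nonneg_left hr₁ ha, mul_le_mul_of_nonneg_left hr₂ hb]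


lemma baire_step [CompleteSpace E] (T : E → Set (StrongDual ℝ E)) (x : E) (δ : ℝ) (hδ : 0 < δ)
    (hsub : closedBall x (2*δ) ⊆ convexHull ℝ {z | (T z).Nonempty}) :
    ∃ (N : ℕ) (w₀ : E) (ρ : ℝ), 0 < ρ ∧ ρ ≤ δ ∧ ρ ≤ 1 ∧ ‖w₀‖ ≤ 2*δ ∧
      ball w₀ ρ ⊆ closure (Xi T x N) := by
  have hXiU : ∀ w : E, ‖w‖ ≤ 2*δ → ∃ n, w ∈ Xi T x n := by
    intro w hw
    have hx : x + w ∈ closedBall x (2*δ) := by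
      simp only [mem_closedBall, dist_eq_norm, add_sub_cancel_left]; exact hw
    obtain ⟨h, r, hm⟩ := proj_hull x (x + w) (hsub hx)
    obtain ⟨n, hn⟩ := exists_nat_ge (max ‖h‖ r)
    exact ⟨n, h, r, by simpa using hm, le_trans (le_max_left _ _) hn,
      le_trans (le_max_right _ _) hn⟩
  set F : ℕ → Set E := fun n => closure (Xi T x n ∩ closedBall 0 (2*δ)) with hF
  have hcov : ball (0:E) (2*δ) ⊆ ⋃ n, F n := by
    intro w hw
    have hw' : ‖w‖ ≤ 2*δ := by
      have := mem_ball_iff_norm.mp hw; simp only [sub_zero] at this; linarith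
    obtain ⟨n, hn⟩ := hXiU w hw'
    exact mem_iUnion.mpr ⟨n, subset_closure ⟨hn, by simpa [mem_closedBall, dist_eq_norm]
      using hw'⟩⟩
  have hballne : (ball (0:E) (2*δ)).Nonempty := by
    refine ⟨0, ?_⟩; simp only [mem_ball, dist_self]; linarith
  have hexN : ∃ n, (interior (F n)).Nonempty := by
    by_contra hc
    push_neg at hc
    have hmeag : IsMeagre (⋃ n, F n) := by
      apply isMeagre_iUnion
      intro n
      have hint : interior (F n) = ∅ := hc n
      -- complement is open dense
      have hdense : Dense (F n)ᶜ := interior_eq_empty_iff_dense_compl.mp hint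
      exact residual_of_dense_open (isClosed_closure.isOpen_compl) hdense
    have hdense : Dense (⋃ n, F n)ᶜ := dense_of_mem_residual hmeag
    obtain ⟨y, hyU, hyc⟩ := hdense.exists_mem_open isOpen_ball hballne
    exact hyU (hcov hyc)
  obtain ⟨N, w₁, hw₁⟩ := hexN
  obtain ⟨ρ₁, hρ₁, hball⟩ := Metric.isOpen_iff.mp isOpen_interior w₁ hw₁
  have hFsub : F N ⊆ closure (Xi T x N) := closure_mono inter_subset_left
  have hFnorm : F N ⊆ closedBall 0 (2*δ) :=
    closure_minimal inter_subset_right Metric.isClosed_closedBall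
  have hw₁n : ‖w₁‖ ≤ 2*δ := by
    have := hFnorm (interior_subset hw₁)
    simpa [mem_closedBall, dist_eq_norm] using this
  refine ⟨N, w₁, min ρ₁ (min δ 1), ?_, ?_, ?_, hw₁n, ?_⟩
  · exact lt_min hρ₁ (lt_min hδ one_pos)
  · exact le_trans (min_le_right _ _) (min_le_left _ _)
  · exact le_trans (min_le_right _ _) (min_le_right _ _)
  · refine subset_trans ?_ (subset_trans (subset_trans hball interior_subset) hFsub)
    exact ball_subset_ball (min_le_left _ _)


lemma norm_bound {T : E → Set (StrongDual ℝ E)}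
    (hmono : ∀ x y x' y', x' ∈ T x → y' ∈ T y → 0 ≤ (x' - y') (x - y)) (x : E)
    {N : ℕ} {w₀ : E} {ρ : ℝ} (hρ : 0 < ρ)
    (hballXi : ball w₀ ρ ⊆ closure (Xi T x N))
    {h₂ : StrongDual ℝ E} {r₂ : ℝ} (hrep : ((-w₀ : E), h₂, r₂) ∈ Hull T x)
    {C : ℝ} (hC1 : (N:ℝ) ≤ C) (hC2 : |r₂| ≤ C) (hC3 : ‖h₂‖ ≤ C) :
    ∀ p ∈ Hull T x, ‖p.2.1‖ * ρ ≤ 4 * p.2.2 + 4*C*(1+‖p.1‖) := by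
  rintro ⟨v, g, s⟩ hp
  set t := ‖v‖ with ht
  have ht0 : 0 ≤ t := norm_nonneg v
  have hC0 : 0 ≤ C := le_trans (abs_nonneg r₂) hC2
  -- (b): bound on closure of Xi N
  have h1 : ∀ w ∈ closure (Xi T x N), g w ≤ s + C*(1+t) := by
    have hcl : closure (Xi T x N) ⊆ {w : E | g w ≤ s + C*(1+t)} := by
      apply closure_minimal
      · rintro w ⟨h, r, hm, hn, hr⟩
        have hpair := pair_ineq hmono x (v, g, s) hp (w, h, r) hm
        simp only at hpair
        have habs : |h v| ≤ ‖h‖ * ‖v‖ := by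
          rw [← Real.norm_eq_abs]; exact h.le_opNorm v
        have h1' : -(h v) ≤ (N:ℝ) * t := by
          have : ‖h‖ * ‖v‖ ≤ (N:ℝ) * t := by
            apply mul_le_mul hn le_rfl ht0 (Nat.cast_nonneg N)
          linarith [(abs_le.mp habs).1]
        have hNt : (N:ℝ) + (N:ℝ)*t ≤ C*(1+t) := by nlinarith
        simp only [mem_setOf_eq]
        linarith
      · exact isClosed_le (g.continuous) continuous_const
    intro w hw; exact hcl hw
  -- (c): bound at -w₀
  have h2 : g (-w₀) ≤ s + C*(1+t) := by
    have hpair := pair_ineq hmono x (v, g, s) hp ((-w₀ : E), h₂, r₂) hrep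
    have habs' : |h₂ v| ≤ ‖h₂‖ * ‖v‖ := by
      rw [← Real.norm_eq_abs]; exact h₂.le_opNorm v
    have habs := (abs_le.mp habs').1
    have : ‖h₂‖ * ‖v‖ ≤ C * t := mul_le_mul hC3 le_rfl ht0 hC0
    have hr2 : r₂ ≤ C := le_trans (le_abs_self r₂) hC2
    nlinarith
  set K := 2*s + 2*C*(1+t) with hKdef
  have h3 : ∀ u : E, ‖u‖ < ρ → g u ≤ K := by
    intro u hu
    have hmem : w₀ + u ∈ ball w₀ ρ := by
      simp only [mem_ball, dist_eq_norm, add_sub_cancel_left]; exact hu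
    have hb1 := h1 (w₀ + u) (hballXi hmem)
    have : g u = g (w₀ + u) + g (-w₀) := by
      rw [map_add, map_neg]; ring
    rw [this]; rw [hKdef]; linarith
  have hK0 : 0 ≤ K := by
    have := h3 0 (by simpa using hρ)
    simpa using this
  have h4 : ‖g‖ ≤ 2*K/ρ := by
    apply ContinuousLinearMap.opNorm_le_bound g (by positivity)
    intro u
    rcases eq_or_ne u 0 with rfl | hu
    · simp
    · have hun : 0 < ‖u‖ := norm_pos_iff.mpr hu
      set a := ρ/(2*‖u‖) with hadef
      have ha : 0 < a := by positivity
      have hz : ‖a • u‖ = ρ/2 := by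
        rw [norm_smul, Real.norm_of_nonneg ha.le, hadef]
        field_simp
      have hz1 : g (a • u) ≤ K := h3 _ (by rw [hz]; linarith)
      have hz2 : g (-(a • u)) ≤ K := h3 _ (by rw [norm_neg, hz]; linarith)
      have habs : |g (a • u)| ≤ K := by
        rw [abs_le]
        constructor
        · rw [map_neg] at hz2; linarith
        · exact hz1
      rw [map_smul, smul_eq_mul, abs_mul, abs_of_pos ha] at habs
      rw [hadef, div_mul_eq_mul_div, div_le_iff₀ (by positivity)] at habs
      rw [Real.norm_eq_abs]
      rw [div_mul_eq_mul_div, le_div_iff₀ hρ]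
      nlinarith
  have := mul_le_mul_of_nonneg_right h4 hρ.le
  rw [div_mul_cancel₀ _ (ne_of_gt hρ)] at this
  simp only at this ⊢
  linarith


set_option maxHeartbeats 1600000 in
lemma lin_bound {T : E → Set (StrongDual ℝ E)}
    (hmono : ∀ x y x' y', x' ∈ T x → y' ∈ T y → 0 ≤ (x' - y') (x - y)) (x : E)
    {N : ℕ} {w₀ : E} {ρ δ : ℝ} (hρ : 0 < ρ) (hδ : 0 < δ) (hδ1 : δ ≤ 1) (hρδ : ρ ≤ δ)
    (hballXi : ball w₀ ρ ⊆ closure (Xi T x N))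
    {h₂ : StrongDual ℝ E} {r₂ : ℝ} (hrep : ((-w₀ : E), h₂, r₂) ∈ Hull T x)
    {C : ℝ} (hC1 : (N:ℝ) ≤ C) (hC2 : |r₂| ≤ C) (hC3 : ‖h₂‖ ≤ C) (hC4 : 1 ≤ C) :
    ∀ p ∈ Hull T x, (-p.2.2) * (ρ*δ) ≤ 9*C*‖p.1‖ := by
  have hC0 : (0:ℝ) < C := lt_of_lt_of_le one_pos hC4
  rintro ⟨v, g, s⟩ hp
  simp only
  set t := ‖v‖ with htdef
  have ht0 : 0 ≤ t := norm_nonneg v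
  have hCt : 0 ≤ 9*C*t := by positivity
  rcases le_or_gt 0 s with hs | hs
  · have : -s * (ρ*δ) ≤ 0 :=
      mul_nonpos_of_nonpos_of_nonneg (by linarith) (by positivity)
    linarith
  -- s < 0 from here on
  have hnb := norm_bound hmono x hρ hballXi hrep hC1 hC2 hC3 (v, g, s) hp
  simp only at hnb
  have hself := self_ineq hmono x (v, g, s) hp
  simp only at hself
  have hgv : -(‖g‖ * t) ≤ g v := by
    have h1 : |g v| ≤ ‖g‖ * t := by rw [← Real.norm_eq_abs]; exact g.le_opNorm v
    linarith [(abs_le.mp h1).1]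
  rcases le_or_gt t δ with htδ | htδ
  · -- small/medium offset
    have e1 : ρ * (-s) ≤ (4*s + 4*C*(1+t)) * t := by
      have h5 : -s ≤ ‖g‖ * t := by linarith
      have := mul_le_mul_of_nonneg_right hnb ht0
      nlinarith [mul_le_mul_of_nonneg_left h5 hρ.le]
    have ht1 : t ≤ 1 := le_trans htδ hδ1
    have htt : t*t ≤ t := by nlinarith
    have h4st : s*t ≤ 0 := mul_nonpos_of_nonpos_of_nonneg hs.le ht0
    have hCtt : C*(t*t) ≤ C*t := mul_le_mul_of_nonneg_left htt hC0.le
    have h8 : ρ * (-s) ≤ 8*C*t := by nlinarith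
    have h9 : (ρ * (-s)) * δ ≤ (8*C*t) * δ := mul_le_mul_of_nonneg_right h8 hδ.le
    have h10 : (8*C*t) * δ ≤ 8*C*t := by nlinarith [mul_nonneg hC0.le ht0]
    nlinarith
  · -- large offset: mixing argument
    have htpos : 0 < t := lt_trans hδ htδ
    set α := ρ/(ρ+4*t) with hα
    have hα0 : 0 < α := by positivity
    have hα1 : α < 1 := by
      rw [hα, div_lt_one (by positivity)]; linarith
    have hgb : ρ * ‖g‖ ≤ 4*C*(1+t) := by nlinarith
    set C9 := 4*C/ρ + 3*C with hC9
    have hC9pos : 0 < C9 := by positivity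
    have hkey : ∀ ε : ℝ, 0 < ε → -C9*ε - C ≤ α * s := by
      intro ε hε
      have hpt : ‖-(ρ/(4*t)) • v‖ = ρ/4 := by
        rw [norm_smul, norm_neg, Real.norm_of_nonneg (by positivity), ← htdef]
        field_simp
      set z := w₀ + (2:ℝ) • (-(ρ/(4*t)) • v) with hzdef
      have hzball : z ∈ ball w₀ ρ := by
        rw [hzdef, mem_ball, dist_eq_norm, add_sub_cancel_left, norm_smul,
          Real.norm_ofNat, hpt]
        linarith
      obtain ⟨z', hz'Xi, hz'close⟩ := Metric.mem_closure_iff.mp (hballXi hzball) ε hε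
      obtain ⟨h', r', hm', hn', hr'⟩ := hz'Xi
      have hHconv : Convex ℝ (Hull T x) := convex_convexHull ℝ (Spts T x)
      have hm₁ : ((1/2 : ℝ) • z' + (1/2 : ℝ) • (-w₀),
          (1/2 : ℝ) • h' + (1/2 : ℝ) • h₂,
          (1/2 : ℝ) * r' + (1/2 : ℝ) * r₂) ∈ Hull T x := by
        have := hHconv hm' hrep (by norm_num : (0:ℝ) ≤ 1/2) (by norm_num : (0:ℝ) ≤ 1/2)
          (by norm_num)
        simpa only [Prod.smul_mk, Prod.mk_add_mk, smul_eq_mul] using this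
      have hmH : (α • v + (1-α) • ((1/2 : ℝ) • z' + (1/2 : ℝ) • (-w₀)),
          α • g + (1-α) • ((1/2 : ℝ) • h' + (1/2 : ℝ) • h₂),
          α * s + (1-α) * ((1/2 : ℝ) * r' + (1/2 : ℝ) * r₂)) ∈ Hull T x := by
        have := hHconv hp hm₁ hα0.le (by linarith : (0:ℝ) ≤ 1-α) (by ring)
        simpa only [Prod.smul_mk, Prod.mk_add_mk, smul_eq_mul] using this
      set vm := α • v + (1-α) • ((1/2 : ℝ) • z' + (1/2 : ℝ) • (-w₀)) with hvmdef
      set gm := α • g + (1-α) • ((1/2 : ℝ) • h' + (1/2 : ℝ) • h₂) with hgmdef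
      have hveq : vm = ((1-α)/2) • (z' - z) := by
        rw [hvmdef, hzdef]
        have h4t : (4:ℝ)*t ≠ 0 := by positivity
        have hsum : ρ + 4*t ≠ 0 := by positivity
        match_scalars
        · rw [hα]; field_simp; ring
        · ring
        · rw [hα]; field_simp
      have hvm : ‖vm‖ ≤ ε := by
        rw [hveq, norm_smul, Real.norm_of_nonneg (by linarith)]
        have hzz : ‖z' - z‖ < ε := by
          rw [← dist_eq_norm, dist_comm]; exact hz'close
        nlinarith [norm_nonneg (z' - z)]
      have hgm : ‖gm‖ ≤ C9 := by
        rw [hgmdef]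
        have hb1 : ‖α • g‖ ≤ 4*C/ρ + C := by
          rw [norm_smul, Real.norm_of_nonneg hα0.le, hα, div_mul_eq_mul_div]
          rw [div_le_iff₀ (by positivity)]
          have hdiv : (4*C/ρ) * ρ = 4*C := by field_simp
          nlinarith [hgb, hdiv, mul_nonneg (show (0:ℝ) ≤ 4*C/ρ by positivity) htpos.le,
            mul_nonneg hC0.le hρ.le, mul_nonneg hC0.le htpos.le]
        have hb2 : ‖(1-α) • ((1/2 : ℝ) • h' + (1/2 : ℝ) • h₂)‖ ≤ C := by
          rw [norm_smul, Real.norm_of_nonneg (by linarith : (0:ℝ) ≤ 1-α)]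
          have hin : ‖(1/2 : ℝ) • h' + (1/2 : ℝ) • h₂‖ ≤ C := by
            calc ‖(1/2 : ℝ) • h' + (1/2 : ℝ) • h₂‖ ≤ ‖(1/2 : ℝ) • h'‖ + ‖(1/2 : ℝ) • h₂‖ :=
                norm_add_le _ _
              _ = (1/2)*‖h'‖ + (1/2)*‖h₂‖ := by
                  rw [norm_smul, norm_smul, Real.norm_of_nonneg (by norm_num : (0:ℝ) ≤ 1/2)]
              _ ≤ C := by nlinarith [le_trans hn' hC1]
          nlinarith [norm_nonneg ((1/2 : ℝ) • h' + (1/2 : ℝ) • h₂)]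
        calc ‖α • g + (1-α) • ((1/2 : ℝ) • h' + (1/2 : ℝ) • h₂)‖
            ≤ ‖α • g‖ + ‖(1-α) • ((1/2 : ℝ) • h' + (1/2 : ℝ) • h₂)‖ := norm_add_le _ _
          _ ≤ C9 := by rw [hC9]; linarith
      have hsm := self_ineq hmono x _ hmH
      simp only at hsm
      have hlow : -(C9 * ε) ≤ gm vm := by
        have h1 : |gm vm| ≤ ‖gm‖ * ‖vm‖ := by
          rw [← Real.norm_eq_abs]; exact gm.le_opNorm vm
        have h2' : ‖gm‖ * ‖vm‖ ≤ C9 * ε :=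
          mul_le_mul hgm hvm (norm_nonneg _) hC9pos.le
        linarith [(abs_le.mp h1).1]
      have hrr : (1-α) * ((1/2) * r' + (1/2) * r₂) ≤ C := by
        have hr2' : r₂ ≤ C := le_trans (le_abs_self _) hC2
        have hr'' : r' ≤ C := le_trans hr' hC1
        rcases le_or_gt ((1/2) * r' + (1/2) * r₂) 0 with hneg | hpos
        · nlinarith
        · nlinarith
      linarith
    -- pass to the limit ε → 0
    have hfin : -C ≤ α * s := by
      by_contra hcon
      push_neg at hcon
      have hd : 0 < (-C - α*s) := by linarith
      have hε : 0 < (-C - α*s)/(C9+1) := by positivity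
      have hk := hkey _ hε
      have hclear : C9 * ((-C - α*s)/(C9+1)) < (-C - α*s) := by
        rw [mul_div_assoc'] 
        rw [div_lt_iff₀ (by positivity)]
        nlinarith
      linarith
    -- conclude
    have hαs : -C * (ρ + 4*t) ≤ ρ * s := by
      rw [hα, div_mul_eq_mul_div, le_div_iff₀ (by positivity)] at hfin
      linarith
    have e2 : ρ*(-s) ≤ C*ρ + 4*C*t := by linarith
    have e3 : (ρ*(-s))*δ ≤ (C*ρ + 4*C*t)*δ := mul_le_mul_of_nonneg_right e2 hδ.le
    have e4 : C*ρ*δ ≤ C*t := by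
      have k1 := mul_le_mul_of_nonneg_left hρδ (mul_nonneg hC0.le hδ.le)
      have k2 := mul_le_mul_of_nonneg_left htδ.le (mul_nonneg hC0.le hδ.le)
      have k3 := mul_le_mul_of_nonneg_right hδ1 (mul_nonneg hC0.le htpos.le)
      nlinarith
    have e5 : (4*C*t)*δ ≤ 4*(C*t) := by
      have k3 := mul_le_mul_of_nonneg_right hδ1 (mul_nonneg hC0.le htpos.le)
      nlinarith
    nlinarith


set_option maxHeartbeats 1600000 in
lemma finite_feas {T : E → Set (StrongDual ℝ E)} (x : E) {ρδ C : ℝ}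
    (hρδ0 : 0 < ρδ) (hC0 : 0 < C)
    (hlin : ∀ p ∈ Hull T x, (-p.2.2) * ρδ ≤ 9*C*‖p.1‖)
    (u : Finset (E × StrongDual ℝ E)) (hu : ∀ q ∈ u, q.2 ∈ T q.1) :
    ∃ x' : StrongDual ℝ E, ‖x'‖ ≤ 9*C/ρδ ∧ ∀ q ∈ u, q.2 (x - q.1) ≤ x' (x - q.1) := by
  classical
  set R := 9*C/ρδ with hR
  have hR0 : 0 < R := by positivity
  rcases u.eq_empty_or_nonempty with rfl | hune
  · exact ⟨0, by simp [hR0.le], by simp⟩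
  have hι : Nonempty ↥u := hune.to_subtype
  set ι := ↥u
  set Z : ι → E := fun i => x - (i : E × StrongDual ℝ E).1 with hZ
  set b : ι → ℝ := fun i => (i : E × StrongDual ℝ E).2 (x - (i : E × StrongDual ℝ E).1) with hb
  set Bpre : Set (WeakDual ℝ E) := WeakDual.toStrongDual ⁻¹' closedBall 0 R with hBpre
  set K : Set (ι → ℝ) := (fun x' : WeakDual ℝ E => fun i => x' (Z i)) '' Bpre with hK
  set Q : Set (ι → ℝ) := {q | ∀ i, b i ≤ q i} with hQ
  rcases (K ∩ Q).eq_empty_or_nonempty with hdisj | hne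
  -- Case 1: separation leads to contradiction with `hlin`
  · exfalso
    have hKcpt : IsCompact K := by
      apply (WeakDual.isCompact_closedBall (0 : StrongDual ℝ E) R).image
      exact continuous_pi fun i => WeakDual.eval_continuous (Z i)
    have hKconv : Convex ℝ K := by
      have hBconv : Convex ℝ Bpre :=
        (convex_closedBall (0 : StrongDual ℝ E) R).linear_preimage
          (WeakDual.toStrongDual (𝕜 := ℝ) (E := E)).toLinearMap
      exact hBconv.linear_image
        { toFun := fun x' : WeakDual ℝ E => fun i => x' (Z i)
          map_add' := fun a b => by funext i; rfl
          map_smul' := fun c a => by funext i; rfl }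
    have hQconv : Convex ℝ Q := by
      intro q1 hq1 q2 hq2 a c ha hc hac
      intro i
      have h1 := hq1 i
      have h2 := hq2 i
      simp only [Pi.add_apply, Pi.smul_apply, smul_eq_mul]
      have hbc : a * b i + c * b i = b i := by rw [← add_mul, hac, one_mul]
      nlinarith [mul_le_mul_of_nonneg_left h1 ha, mul_le_mul_of_nonneg_left h2 hc]
    have hQclosed : IsClosed Q := by
      have : Q = ⋂ i, {q : ι → ℝ | b i ≤ q i} := by
        ext q; simp [hQ, Set.mem_iInter]
      rw [this]
      exact isClosed_iInter fun i => isClosed_le continuous_const (continuous_apply i)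
    obtain ⟨f, uu, vv, hKlt, huv, hQgt⟩ :=
      geometric_hahn_banach_compact_closed hKconv hKcpt hQconv hQclosed
        (Set.disjoint_iff_inter_eq_empty.mpr hdisj)
    -- coordinates of f
    set e : ι → (ι → ℝ) := fun i => fun j => if i = j then (1:ℝ) else 0 with he
    set φ : ι → ℝ := fun i => f (e i) with hφ
    have hf : ∀ q : ι → ℝ, f q = ∑ i, q i * φ i := by
      intro q
      conv_lhs => rw [pi_eq_sum_univ q, map_sum]
      refine Finset.sum_congr rfl fun i _ => ?_
      rw [map_smul, smul_eq_mul, hφ]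
    -- 0 ∈ K and the zero vector value
    have h0K : (fun _ : ι => (0:ℝ)) ∈ K := by
      refine ⟨0, ?_, ?_⟩
      · simp [hBpre, mem_preimage, mem_closedBall, hR0.le]
      · funext i; rfl
    have hu0 : (0:ℝ) < uu := by
      have h00 := hKlt _ h0K
      rw [show (fun _ : ι => (0:ℝ)) = 0 from rfl, map_zero] at h00
      exact h00
    -- φ is nonnegative
    have hφ0 : ∀ i, 0 ≤ φ i := by
      intro j
      by_contra hneg
      push_neg at hneg
      set base : ι → ℝ := fun i => |b i| with hbase
      set M : ℝ := max 0 ((vv - f base)/φ j) with hM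
      have hM0 : 0 ≤ M := le_max_left _ _
      have hmem : base + M • e j ∈ Q := by
        intro i
        simp only [Pi.add_apply, Pi.smul_apply, smul_eq_mul, hbase, he]
        split_ifs with hij
        · have := le_abs_self (b i); nlinarith
        · simpa using le_abs_self (b i)
      have hval : f (base + M • e j) = f base + M * φ j := by
        rw [map_add, map_smul, smul_eq_mul, hφ]
      have hMle : M * φ j ≤ vv - f base := by
        have h1 : (vv - f base)/φ j ≤ M := le_max_right _ _
        have := mul_le_mul_of_nonpos_right h1 hneg.le
        rwa [div_mul_cancel₀ _ (ne_of_lt hneg)] at this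
      have := hQgt _ hmem
      rw [hval] at this
      linarith
    -- sum of φ is positive
    have hφsum : 0 < ∑ i, φ i := by
      rcases (Finset.sum_nonneg fun i _ => hφ0 i).lt_or_eq with h | h
      · exact h
      · exfalso
        have hall : ∀ i ∈ Finset.univ, φ i = 0 :=
          (Finset.sum_eq_zero_iff_of_nonneg fun i _ => hφ0 i).mp h.symm
        have hbQ : b ∈ Q := fun i => le_rfl
        have := hQgt _ hbQ
        rw [hf b] at this
        have hzero : ∑ i, b i * φ i = 0 :=
          Finset.sum_eq_zero fun i hi => by rw [hall i hi, mul_zero]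
        rw [hzero] at this
        linarith
    -- the convex combination in the Hull
    set pts : ι → E × StrongDual ℝ E × ℝ := fun i =>
      ((i : E × StrongDual ℝ E).1 - x, (i : E × StrongDual ℝ E).2,
        (i : E × StrongDual ℝ E).2 ((i : E × StrongDual ℝ E).1 - x)) with hpts
    have hptsS : ∀ i : ι, pts i ∈ Spts T x := by
      intro i
      refine ⟨?_, rfl⟩
      simp only [hpts, add_sub_cancel]
      exact hu _ i.2
    have hPmem : Finset.univ.centerMass φ pts ∈ Hull T x :=
      Finset.centerMass_mem_convexHull _ (fun i _ => hφ0 i) hφsum fun i _ =>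
        hptsS i
    set invS := (∑ i, φ i)⁻¹ with hinv
    have hinv0 : 0 < invS := by positivity
    have hcm : Finset.univ.centerMass φ pts = invS • ∑ i, φ i • pts i := by
      rw [Finset.centerMass]
    have hfst : (Finset.univ.centerMass φ pts).1 =
        invS • ∑ i, φ i • ((i : E × StrongDual ℝ E).1 - x) := by
      rw [hcm]
      have : (∑ i, φ i • pts i).1 = ∑ i, φ i • ((i : E × StrongDual ℝ E).1 - x) := by
        rw [Prod.fst_sum]
        rfl
      rw [show (invS • ∑ i, φ i • pts i).1 = invS • (∑ i, φ i • pts i).1 from rfl, this]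
    have hthd : (Finset.univ.centerMass φ pts).2.2 =
        invS * ∑ i, φ i * ((i : E × StrongDual ℝ E).2 ((i : E × StrongDual ℝ E).1 - x)) := by
      rw [hcm]
      have : (∑ i, φ i • pts i).2.2 =
          ∑ i, φ i * ((i : E × StrongDual ℝ E).2 ((i : E × StrongDual ℝ E).1 - x)) := by
        rw [Prod.snd_sum, Prod.snd_sum]
        rfl
      rw [show (invS • ∑ i, φ i • pts i).2.2 = invS * (∑ i, φ i • pts i).2.2 from rfl, this]
    have hlin' := hlin _ hPmem
    rw [hfst, hthd] at hlin'
    -- identify the third coordinate sum with -∑ b φ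
    have hthird : ∑ i, φ i * ((i : E × StrongDual ℝ E).2 ((i : E × StrongDual ℝ E).1 - x)) =
        -∑ i, b i * φ i := by
      rw [← Finset.sum_neg_distrib]
      refine Finset.sum_congr rfl fun i _ => ?_
      have : ((i : E × StrongDual ℝ E).2) ((i : E × StrongDual ℝ E).1 - x) = - b i := by
        rw [hb]
        simp only [← map_neg, neg_sub]
      rw [this]; ring
    -- the vector ζ
    set ζ : E := ∑ i, φ i • Z i with hζ
    have hfirst : ∑ i, φ i • ((i : E × StrongDual ℝ E).1 - x) = -ζ := by
      rw [hζ, ← Finset.sum_neg_distrib]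
      refine Finset.sum_congr rfl fun i _ => ?_
      rw [hZ, ← smul_neg, neg_sub]
    rw [hthird, hfirst] at hlin'
    -- upper bound : R * ‖ζ‖ < uu  (or ζ = 0 and 0 < uu)
    have hzeta : R * ‖ζ‖ < uu ∨ (ζ = 0 ∧ 0 < uu) := by
      rcases eq_or_ne ζ 0 with hz0 | hz0
      · exact Or.inr ⟨hz0, hu0⟩
      · left
        obtain ⟨g₀, hg₀norm, hg₀val'⟩ := exists_dual_vector ℝ ζ (norm_ne_zero_iff.mpr hz0)
        have hg₀val : g₀ ζ = ‖ζ‖ := by exact_mod_cast hg₀val'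
        set x'w : WeakDual ℝ E := StrongDual.toWeakDual (R • g₀) with hx'w
        have hx'mem : x'w ∈ Bpre := by
          simp only [hBpre, mem_preimage, mem_closedBall, dist_zero_right]
          have : WeakDual.toStrongDual x'w = R • g₀ := rfl
          rw [this, norm_smul, Real.norm_of_nonneg hR0.le, hg₀norm, mul_one]
        have hKmem : (fun i => x'w (Z i)) ∈ K := ⟨x'w, hx'mem, rfl⟩
        have := hKlt _ hKmem
        rw [hf] at this
        have hx'val : ∑ i, x'w (Z i) * φ i = R * ‖ζ‖ := by
          have h1 : ∀ i, x'w (Z i) * φ i = (R • g₀) (φ i • Z i) := by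
            intro i
            have : x'w (Z i) = (R • g₀) (Z i) := rfl
            rw [this, map_smul, smul_eq_mul, mul_comm]
          rw [Finset.sum_congr rfl fun i _ => h1 i, ← map_sum, ← hζ]
          rw [ContinuousLinearMap.smul_apply, hg₀val, smul_eq_mul]
        rw [hx'val] at this
        exact this
    -- combine for the contradiction
    have hbv : vv < ∑ i, b i * φ i := by
      have hbQ : b ∈ Q := fun i => le_rfl
      have := hQgt _ hbQ
      rwa [hf b] at this
    have hnorm : ‖invS • -ζ‖ = invS * ‖ζ‖ := by
      rw [norm_smul, Real.norm_of_nonneg hinv0.le, norm_neg]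
    rw [hnorm] at hlin'
    -- hlin' : -(invS * -∑ b φ) * ρδ ≤ 9C * (invS * ‖ζ‖)
    have hζnn : 0 ≤ ‖ζ‖ := norm_nonneg ζ
    rcases hzeta with hzlt | ⟨hz0, hupos⟩
    · have h9 : 9*C*‖ζ‖ = R * ‖ζ‖ * ρδ := by
        rw [hR]; field_simp
      nlinarith [mul_pos hinv0 hρδ0, mul_le_mul_of_nonneg_left hzlt.le hinv0.le,
        mul_lt_mul_of_pos_right hzlt (mul_pos hinv0 hρδ0)]
    · rw [hz0] at hlin'
      simp only [norm_zero, mul_zero] at hlin'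
      nlinarith [mul_pos hinv0 hρδ0]
  -- Case 2: a feasible point exists
  · obtain ⟨q, ⟨x'w, hx'w, rfl⟩, hqQ⟩ := hne
    refine ⟨WeakDual.toStrongDual x'w, ?_, ?_⟩
    · simpa [hBpre, mem_preimage, mem_closedBall, dist_zero_right] using hx'w
    · intro q hq
      have := hqQ ⟨q, hq⟩
      simpa [hb, hZ] using this


set_option maxHeartbeats 1600000 in
lemma anchor [CompleteSpace E] {T : E → Set (StrongDual ℝ E)}
    (hmono : ∀ x y x' y', x' ∈ T x → y' ∈ T y → 0 ≤ (x' - y') (x - y))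
    (hmax : ∀ x x', (∀ y y', y' ∈ T y → 0 ≤ (x' - y') (x - y)) → x' ∈ T x)
    (x : E) (δ : ℝ) (hδ : 0 < δ) (hδ1 : δ ≤ 1)
    (hsub : closedBall x (2*δ) ⊆ convexHull ℝ {z | (T z).Nonempty}) :
    (T x).Nonempty ∧ ∃ r > 0, ∃ M : ℝ, ∀ u ∈ ball x r, ∀ u' ∈ T u, ‖u'‖ ≤ M := by
  classical
  obtain ⟨N, w₀, ρ, hρ, hρδ, hρ1, hw₀, hballXi⟩ := baire_step T x δ hδ hsub
  have hmem : x + (-w₀) ∈ closedBall x (2*δ) := by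
    simp only [mem_closedBall, dist_eq_norm, add_sub_cancel_left, norm_neg]
    exact hw₀
  obtain ⟨h₂, r₂, hrep'⟩ := proj_hull x (x + (-w₀)) (hsub hmem)
  have hrep : ((-w₀ : E), h₂, r₂) ∈ Hull T x := by simpa using hrep'
  set C := (N:ℝ) + |r₂| + ‖h₂‖ + 1 with hC
  have hC1 : (N:ℝ) ≤ C := by
    have := abs_nonneg r₂; have := norm_nonneg h₂; rw [hC]; linarith
  have hC2 : |r₂| ≤ C := by
    have := Nat.cast_nonneg (α := ℝ) N; have := norm_nonneg h₂; rw [hC]; linarith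
  have hC3 : ‖h₂‖ ≤ C := by
    have := Nat.cast_nonneg (α := ℝ) N; have := abs_nonneg r₂; rw [hC]; linarith
  have hC4 : (1:ℝ) ≤ C := by
    have := Nat.cast_nonneg (α := ℝ) N; have := abs_nonneg r₂; have := norm_nonneg h₂
    rw [hC]; linarith
  have hC0 : (0:ℝ) < C := lt_of_lt_of_le one_pos hC4
  have hlin := lin_bound hmono x hρ hδ hδ1 hρδ hballXi hrep hC1 hC2 hC3 hC4
  constructor
  · -- existence of an element of T x, via weak* compactness
    set R := 9*C/(ρ*δ) with hRdef
    set Bpre : Set (WeakDual ℝ E) := WeakDual.toStrongDual ⁻¹' closedBall 0 R with hBpre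
    set σ := {q : E × StrongDual ℝ E // q.2 ∈ T q.1} with hσ
    set tset : σ → Set (WeakDual ℝ E) := fun i =>
      {x' | (i : E × StrongDual ℝ E).2 (x - (i : E × StrongDual ℝ E).1) ≤
        x' (x - (i : E × StrongDual ℝ E).1)} with htset
    have hc : ∀ i, IsClosed (tset i) := fun i =>
      isClosed_le continuous_const (WeakDual.eval_continuous _)
    have hcpt : IsCompact Bpre := WeakDual.isCompact_closedBall (0 : StrongDual ℝ E) R
    have hne : (Bpre ∩ ⋂ i, tset i).Nonempty := by
      by_contra hcon
      rw [Set.not_nonempty_iff_eq_empty] at hcon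
      obtain ⟨fin, hfin⟩ := hcpt.elim_finite_subfamily_closed tset hc hcon
      set u : Finset (E × StrongDual ℝ E) := fin.image Subtype.val with hufin
      have hu : ∀ q ∈ u, q.2 ∈ T q.1 := by
        intro q hq
        rw [hufin, Finset.mem_image] at hq
        obtain ⟨j, hj, hjq⟩ := hq
        rw [← hjq]
        exact j.property
      obtain ⟨x', hx'norm, hx'⟩ := finite_feas x (by positivity : (0:ℝ) < ρ*δ) hC0 hlin u hu
      apply Set.eq_empty_iff_forall_notMem.mp hfin (StrongDual.toWeakDual x')
      constructor
      · simp only [hBpre, mem_preimage, mem_closedBall, dist_zero_right]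
        exact hx'norm
      · rw [Set.mem_iInter₂]
        intro i hi
        have hiu : (i : E × StrongDual ℝ E) ∈ u := by
          rw [hufin]; exact Finset.mem_image_of_mem Subtype.val hi
        exact hx' _ hiu
    obtain ⟨x'w, hx'w, hall⟩ := hne
    refine ⟨WeakDual.toStrongDual x'w, hmax x _ ?_⟩
    intro y y' hy'
    have hmem' := Set.mem_iInter.mp hall ⟨(y, y'), hy'⟩
    simp only [htset, mem_setOf_eq] at hmem'
    simp only [ContinuousLinearMap.sub_apply]
    have : (WeakDual.toStrongDual x'w) (x - y) = x'w (x - y) := rfl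
    rw [this]
    linarith
  · -- local boundedness
    refine ⟨ρ/16, by positivity, 11*C/ρ, ?_⟩
    intro u hu u' hu'
    have hp : ((u - x : E), u', u' (u - x)) ∈ Hull T x := by
      apply subset_convexHull
      exact ⟨by simpa using hu', rfl⟩
    have hnb := norm_bound hmono x hρ hballXi hrep hC1 hC2 hC3 _ hp
    simp only at hnb
    set τ := ‖u - x‖ with hτ
    have hτρ : τ < ρ/16 := by
      rw [hτ, ← dist_eq_norm]; exact mem_ball.mp hu
    have hτ0 : 0 ≤ τ := norm_nonneg _
    have hτ1 : τ ≤ 1 := by linarith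
    have happ : u' (u - x) ≤ ‖u'‖ * τ := by
      have h1 : |u' (u - x)| ≤ ‖u'‖ * τ := by
        rw [← Real.norm_eq_abs]; exact u'.le_opNorm _
      linarith [(abs_le.mp h1).2]
    rw [le_div_iff₀ hρ]
    nlinarith [norm_nonneg u', mul_le_mul_of_nonneg_left hτρ.le (norm_nonneg u')]


end Rockafellar

open Rockafellar in
/-- **Rockafellar.** If `T` is maximal monotone on a real Banach space `E` and the interior of
the convex hull of `D(T)` is nonempty, then `int D(T) = int (co D(T))` (so `int D(T)` is
convex), `T` is locally bounded at every point of `int D(T)`, and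
`closure D(T) = closure (int D(T))`, hence `closure D(T)` is convex. -/
theorem rockafellar_local_boundedness_and_convexity
    {E : Type*} [NormedAddCommGroup E] [NormedSpace ℝ E] [CompleteSpace E]
    (T : E → Set (StrongDual ℝ E))
    (hmono : ∀ x y x' y', x' ∈ T x → y' ∈ T y → 0 ≤ (x' - y') (x - y))
    (hmax : ∀ x x', (∀ y y', y' ∈ T y → 0 ≤ (x' - y') (x - y)) → x' ∈ T x)
    (hint : (interior (convexHull ℝ {x | (T x).Nonempty})).Nonempty) :
    interior {x | (T x).Nonempty} = interior (convexHull ℝ {x | (T x).Nonempty}) ∧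
    Convex ℝ (interior {x | (T x).Nonempty}) ∧
    (∀ x ∈ interior {x | (T x).Nonempty},
      ∃ U ∈ nhds x, Bornology.IsBounded (⋃ u ∈ U, T u)) ∧
    closure {x | (T x).Nonempty} = closure (interior {x | (T x).Nonempty}) ∧
    Convex ℝ (closure {x | (T x).Nonempty}) := by
  set Dset := {x | (T x).Nonempty} with hDset
  set co := convexHull ℝ Dset with hco
  have hcoConv : Convex ℝ co := convex_convexHull ℝ Dset
  -- from interior membership to anchored hypotheses
  have hanchor : ∀ x ∈ interior co,
      (T x).Nonempty ∧ ∃ r > 0, ∃ M : ℝ, ∀ u ∈ Metric.ball x r, ∀ u' ∈ T u, ‖u'‖ ≤ M := by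
    intro x hx
    obtain ⟨ε, hε, hball⟩ := Metric.mem_nhds_iff.mp (mem_interior_iff_mem_nhds.mp hx)
    set δ := min (ε/3) (1/2) with hδdef
    have hδ : 0 < δ := lt_min (by linarith) (by norm_num)
    have hδ1 : δ ≤ 1 := le_trans (min_le_right _ _) (by norm_num)
    have h2δ : 2*δ < ε := by
      have := min_le_left (ε/3) (1/2)
      have : δ ≤ ε/3 := this
      linarith
    have hsub : Metric.closedBall x (2*δ) ⊆ co :=
      subset_trans (Metric.closedBall_subset_ball h2δ) hball
    exact anchor hmono hmax x δ hδ hδ1 hsub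
  have key : interior co ⊆ Dset := fun x hx => (hanchor x hx).1
  have int_eq : interior Dset = interior co := by
    apply Subset.antisymm
    · exact interior_mono (subset_convexHull ℝ Dset)
    · exact interior_maximal key isOpen_interior
  have conv_int : Convex ℝ (interior Dset) := by
    rw [int_eq]; exact hcoConv.interior
  refine ⟨int_eq, conv_int, ?_, ?_, ?_⟩
  · -- local boundedness
    intro x hx
    rw [int_eq] at hx
    obtain ⟨-, r, hr, M, hM⟩ := hanchor x hx
    refine ⟨Metric.ball x r, Metric.ball_mem_nhds x hr, ?_⟩
    apply Bornology.IsBounded.subset (Metric.isBounded_closedBall (x := (0 : StrongDual ℝ E)) (r := M))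
    intro f hf
    rw [Set.mem_iUnion₂] at hf
    obtain ⟨u, hu, hfu⟩ := hf
    rw [Metric.mem_closedBall, dist_zero_right]
    exact hM u hu f hfu
  · -- closure equality
    have hsub2 : Dset ⊆ closure (interior Dset) := by
      intro d hd
      rw [int_eq]
      obtain ⟨z, hz⟩ := hint
      rw [Metric.mem_closure_iff]
      intro ε hε
      set t := min (1:ℝ) (ε/(‖d - z‖+1)) with htdef
      have ht0 : 0 < t := lt_min one_pos (by positivity)
      have ht1 : t ≤ 1 := min_le_left _ _
      refine ⟨t • z + (1-t) • d, ?_, ?_⟩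
      · exact hcoConv.combo_interior_closure_mem_interior hz
          (subset_closure (subset_convexHull ℝ Dset hd)) ht0 (by linarith) (by ring)
      · have hdy : d - (t • z + (1-t) • d) = t • (d - z) := by module
        rw [dist_eq_norm, hdy, norm_smul, Real.norm_of_nonneg ht0.le]
        have h1 : t ≤ ε/(‖d - z‖+1) := min_le_right _ _
        have h2 : 0 ≤ ‖d - z‖ := norm_nonneg _
        have h3 : t * ‖d - z‖ ≤ (ε/(‖d - z‖+1)) * ‖d - z‖ :=
          mul_le_mul_of_nonneg_right h1 h2
        have h4 : (ε/(‖d - z‖+1)) * ‖d - z‖ < ε := by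
          rw [div_mul_eq_mul_div, div_lt_iff₀ (by positivity)]
          nlinarith
        linarith
    apply Subset.antisymm
    · exact closure_minimal hsub2 isClosed_closure
    · exact closure_mono interior_subset
  · -- convexity of the closure
    have hsub2 : Dset ⊆ closure (interior Dset) := by
      intro d hd
      rw [int_eq]
      obtain ⟨z, hz⟩ := hint
      rw [Metric.mem_closure_iff]
      intro ε hε
      set t := min (1:ℝ) (ε/(‖d - z‖+1)) with htdef
      have ht0 : 0 < t := lt_min one_pos (by positivity)
      have ht1 : t ≤ 1 := min_le_left _ _
      refine ⟨t • z + (1-t) • d, ?_, ?_⟩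
      · exact hcoConv.combo_interior_closure_mem_interior hz
          (subset_closure (subset_convexHull ℝ Dset hd)) ht0 (by linarith) (by ring)
      · have hdy : d - (t • z + (1-t) • d) = t • (d - z) := by module
        rw [dist_eq_norm, hdy, norm_smul, Real.norm_of_nonneg ht0.le]
        have h1 : t ≤ ε/(‖d - z‖+1) := min_le_right _ _
        have h2 : 0 ≤ ‖d - z‖ := norm_nonneg _
        have h3 : t * ‖d - z‖ ≤ (ε/(‖d - z‖+1)) * ‖d - z‖ :=
          mul_le_mul_of_nonneg_right h1 h2
        have h4 : (ε/(‖d - z‖+1)) * ‖d - z‖ < ε := by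
          rw [div_mul_eq_mul_div, div_lt_iff₀ (by positivity)]
          nlinarith
        linarith
    have hclos : closure Dset = closure (interior Dset) :=
      Subset.antisymm (closure_minimal hsub2 isClosed_closure)
        (closure_mono interior_subset)
    rw [hclos]
    exact conv_int.closure
end

section
/- Let E be a reflexive real Banach space and T : E → 2^{E*} a maximal monotone operator. Then the interior of R(T) is convex, and if the interior of R(T) is nonempty then the closure of R(T) is convex. -/
set_option maxHeartbeats 1600000
set_option synthInstance.maxHeartbeats 400000

open NormedSpace Metric Set Filter

section

variable {E : Type*} [NormedAddCommGroup E] [NormedSpace ℝ E]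

private lemma sq_combo {u v a b : ℝ} (ha : 0 ≤ a) (hb : 0 ≤ b)
    (hab : a + b = 1) {w : ℝ} (hw : 0 ≤ w) (hwle : w ≤ a * u + b * v) :
    w^2 ≤ a * u^2 + b * v^2 := by
  have h1 : w^2 ≤ (a * u + b * v)^2 := by nlinarith
  nlinarith [sq_nonneg (u - v), mul_nonneg ha hb]

private lemma exists_near_sup {X : Type*} [NormedAddCommGroup X] [NormedSpace ℝ X]
    (g : X →L[ℝ] ℝ) {ε : ℝ} (hε : 0 < ε) :
    ∃ x : X, (1/2) * ‖g‖^2 - ε ≤ g x - (1/2) * ‖x‖^2 := by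
  rcases eq_or_lt_of_le (norm_nonneg g) with h0 | h0
  · refine ⟨0, ?_⟩
    simp only [← h0, map_zero, norm_zero]
    nlinarith
  · set c := ‖g‖ with hc
    set m := min (ε / c) c with hm
    have hm0 : 0 < m := lt_min (div_pos hε h0) h0
    have hr : c - m < ‖g‖ := by rw [← hc]; linarith
    obtain ⟨x₀, hx₀, hgx₀⟩ := g.exists_lt_apply_of_lt_opNorm hr
    have hsign : ∃ x₁ : X, ‖x₁‖ ≤ 1 ∧ c - m < g x₁ := by
      rcases le_or_gt 0 (g x₀) with hsg | hsg
      · exact ⟨x₀, hx₀.le, by rwa [Real.norm_eq_abs, abs_of_nonneg hsg] at hgx₀⟩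
      · refine ⟨-x₀, by simpa using hx₀.le, ?_⟩
        rw [map_neg]
        rwa [Real.norm_eq_abs, abs_of_neg hsg] at hgx₀
    obtain ⟨x₁, hx₁, hgx₁⟩ := hsign
    refine ⟨c • x₁, ?_⟩
    have h1 : g (c • x₁) = c * g x₁ := by simp
    have h2 : ‖c • x₁‖ ≤ c := by
      rw [norm_smul, Real.norm_eq_abs, abs_of_pos h0]
      nlinarith
    have h3 : c * g x₁ ≥ c * (c - m) := by nlinarith
    have h4 : c * m ≤ ε := by
      have hle : m ≤ ε / c := min_le_left _ _
      calc c * m ≤ c * (ε / c) := by nlinarith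
        _ = ε := by field_simp
    have h5 : (1/2) * ‖c • x₁‖^2 ≤ (1/2) * c^2 := by nlinarith [norm_nonneg (c • x₁)]
    rw [h1]
    nlinarith

private lemma graph_nonempty (T : E → Set (StrongDual ℝ E))
    (hmax : ∀ x x', (∀ y y', y' ∈ T y → 0 ≤ (x' - y') (x - y)) → x' ∈ T x) :
    ∃ y y', y' ∈ T y := by
  by_contra h
  push_neg at h
  exact h 0 0 (hmax 0 0 (fun y y' hy => absurd hy (h y y')))

private def EPI (T : E → Set (StrongDual ℝ E)) (w : StrongDual ℝ E) (lam : ℝ) : Set (E × (StrongDual ℝ E) × ℝ) :=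
  {p | ∀ y y', y' ∈ T y → p.2.1 y + (lam⁻¹ • (y' - w)) p.1 - (lam⁻¹ • (y' - w)) y ≤ p.2.2}

private lemma epi_convex (T : E → Set (StrongDual ℝ E)) (w : StrongDual ℝ E) (lam : ℝ) :
    Convex ℝ (EPI T w lam) := by
  rintro ⟨x₁, xt₁, t₁⟩ h₁ ⟨x₂, xt₂, t₂⟩ h₂ a b ha hb hab
  intro y y' hy
  have e₁ := h₁ y y' hy
  have e₂ := h₂ y y' hy
  simp only [Prod.smul_mk, Prod.mk_add_mk, ContinuousLinearMap.add_apply,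
    ContinuousLinearMap.coe_smul', Pi.smul_apply, smul_eq_mul, map_add, map_smul] at *
  have hX : a * (lam⁻¹ * (y' - w) y) + b * (lam⁻¹ * (y' - w) y) = lam⁻¹ * (y' - w) y := by
    rw [← add_mul, hab, one_mul]
  nlinarith [mul_le_mul_of_nonneg_left e₁ ha, mul_le_mul_of_nonneg_left e₂ hb]

private lemma epi_graph_mem (T : E → Set (StrongDual ℝ E))
    (hmono : ∀ x y x' y', x' ∈ T x → y' ∈ T y → 0 ≤ (x' - y') (x - y))
    (w : StrongDual ℝ E) {lam : ℝ} (hlam : 0 < lam) {y : E} {y' : StrongDual ℝ E} (hy : y' ∈ T y) :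
    (y, (lam⁻¹ • (y' - w) : StrongDual ℝ E), (lam⁻¹ • (y' - w) : StrongDual ℝ E) y) ∈ EPI T w lam := by
  intro z z' hz
  have h := hmono y z y' z' hy hz
  have hlam' : (0:ℝ) ≤ lam⁻¹ := by positivity
  simp only [ContinuousLinearMap.coe_smul', Pi.smul_apply, smul_eq_mul, map_sub,
    ContinuousLinearMap.sub_apply] at *
  nlinarith [mul_le_mul_of_nonneg_left h hlam']

private lemma lin_zero {X : Type*} [NormedAddCommGroup X] [NormedSpace ℝ X]
    (g : X →L[ℝ] ℝ) (u : ℝ) (h : ∀ x, g x < u) : ∀ x, g x = 0 := by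
  intro x
  by_contra hne
  have key : ∀ z : X, 0 < g z → False := by
    intro z hz
    obtain ⟨n, hn⟩ := exists_nat_gt (u / g z)
    have h2 := h ((n : ℝ) • z)
    rw [map_smul, smul_eq_mul] at h2
    have h3 : u / g z * g z < (n : ℝ) * g z := mul_lt_mul_of_pos_right hn hz
    rw [div_mul_cancel₀ _ hz.ne'] at h3
    linarith
  rcases lt_or_gt_of_ne hne with hlt | hgt
  · exact key (-x) (by rw [map_neg]; linarith)
  · exact key x hgt

private lemma open_mem_lt {T : E → Set (StrongDual ℝ E)} {w : StrongDual ℝ E} {lam : ℝ} (hlam : 0 < lam)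
    (hmax : ∀ x x', (∀ y y', y' ∈ T y → 0 ≤ (x' - y') (x - y)) → x' ∈ T x)
    {x : E} {xt : StrongDual ℝ E} {t : ℝ}
    (hO : t + (1/2) * ‖x‖^2 + (1/2) * ‖xt‖^2 < 0) (hE : (x, xt, t) ∈ EPI T w lam) : False := by
  have hxtx : -(‖xt‖ * ‖x‖) ≤ xt x := by
    have h1 := xt.le_opNorm x
    rw [Real.norm_eq_abs] at h1
    linarith [abs_le.1 h1 |>.1]
  have h1 : t < xt x := by nlinarith [sq_nonneg (‖x‖ - ‖xt‖)]
  have hrel : ∀ y y', y' ∈ T y → 0 ≤ ((w + lam • xt) - y') (x - y) := by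
    intro y y' hy
    have hE' := hE y y' hy
    have key : 0 < (xt - lam⁻¹ • (y' - w)) (x - y) := by
      simp only [ContinuousLinearMap.sub_apply, ContinuousLinearMap.coe_smul', Pi.smul_apply,
        smul_eq_mul, map_sub] at hE' ⊢
      linarith
    have heq : (w + lam • xt - y') = lam • (xt - lam⁻¹ • (y' - w)) := by
      rw [smul_sub, smul_inv_smul₀ hlam.ne']
      abel
    rw [heq, ContinuousLinearMap.smul_apply, smul_eq_mul]
    positivity
  have hx' : (w + lam • xt) ∈ T x := hmax x _ hrel
  have hfin := hE x (w + lam • xt) hx'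
  have heq2 : lam⁻¹ • (w + lam • xt - w) = xt := by
    have h4 : w + lam • xt - w = lam • xt := by abel
    rw [h4, inv_smul_smul₀ hlam.ne']
  rw [heq2] at hfin
  simp only at hfin
  linarith

private lemma convex_openset :
    Convex ℝ {p : E × (StrongDual ℝ E) × ℝ | p.2.2 + (1/2) * ‖p.1‖^2 + (1/2) * ‖p.2.1‖^2 < 0} := by
  rintro ⟨x₁, xt₁, t₁⟩ h₁ ⟨x₂, xt₂, t₂⟩ h₂ a b ha hb hab
  simp only [mem_setOf_eq, Prod.smul_mk, Prod.mk_add_mk, smul_eq_mul] at *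
  have n1 : ‖a • x₁ + b • x₂‖ ≤ a * ‖x₁‖ + b * ‖x₂‖ := by
    calc ‖a • x₁ + b • x₂‖ ≤ ‖a • x₁‖ + ‖b • x₂‖ := norm_add_le _ _
      _ = a * ‖x₁‖ + b * ‖x₂‖ := by
        rw [norm_smul, norm_smul, Real.norm_eq_abs, Real.norm_eq_abs, abs_of_nonneg ha,
          abs_of_nonneg hb]
  have n2 : ‖a • xt₁ + b • xt₂‖ ≤ a * ‖xt₁‖ + b * ‖xt₂‖ := by
    calc ‖a • xt₁ + b • xt₂‖ ≤ ‖a • xt₁‖ + ‖b • xt₂‖ := norm_add_le _ _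
      _ = a * ‖xt₁‖ + b * ‖xt₂‖ := by
        rw [norm_smul, norm_smul, Real.norm_eq_abs, Real.norm_eq_abs, abs_of_nonneg ha,
          abs_of_nonneg hb]
  have s1 : ‖a • x₁ + b • x₂‖^2 ≤ a * ‖x₁‖^2 + b * ‖x₂‖^2 :=
    sq_combo ha hb hab (norm_nonneg _) n1
  have s2 : ‖a • xt₁ + b • xt₂‖^2 ≤ a * ‖xt₁‖^2 + b * ‖xt₂‖^2 :=
    sq_combo ha hb hab (norm_nonneg _) n2
  have ha1 : a * (t₁ + 1/2 * ‖x₁‖^2 + 1/2 * ‖xt₁‖^2) ≤ 0 :=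
    mul_nonpos_of_nonneg_of_nonpos ha h₁.le
  have hb1 : b * (t₂ + 1/2 * ‖x₂‖^2 + 1/2 * ‖xt₂‖^2) ≤ 0 :=
    mul_nonpos_of_nonneg_of_nonpos hb h₂.le
  rcases eq_or_lt_of_le ha with rfl | ha'
  · have hb' : b = 1 := by linarith
    subst hb'
    simp only [zero_smul, one_smul, zero_add, zero_mul, one_mul]
    linarith
  · nlinarith

/-- Main surjectivity lemma: `T + λJ` hits every `w`. -/
private lemma step1
    (hrefl : Function.Surjective (inclusionInDoubleDual ℝ E))
    (T : E → Set (StrongDual ℝ E))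
    (hmono : ∀ x y x' y', x' ∈ T x → y' ∈ T y → 0 ≤ (x' - y') (x - y))
    (hmax : ∀ x x', (∀ y y', y' ∈ T y → 0 ≤ (x' - y') (x - y)) → x' ∈ T x)
    (w : StrongDual ℝ E) {lam : ℝ} (hlam : 0 < lam) :
    ∃ (x : E) (x' : StrongDual ℝ E), x' ∈ T x ∧ ‖x' - w‖ = lam * ‖x‖ ∧ (w - x') x = lam * ‖x‖^2 := by
  obtain ⟨y₀, y₀', hy₀⟩ := graph_nonempty T hmax
  have hd : Disjoint {p : E × (StrongDual ℝ E) × ℝ | p.2.2 + (1/2) * ‖p.1‖^2 + (1/2) * ‖p.2.1‖^2 < 0}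
      (EPI T w lam) := by
    rw [Set.disjoint_left]
    rintro ⟨x, xt, t⟩ hO hEp
    exact open_mem_lt hlam hmax hO hEp
  have hcont : Continuous fun p : E × (StrongDual ℝ E) × ℝ =>
      p.2.2 + (1/2) * ‖p.1‖^2 + (1/2) * ‖p.2.1‖^2 := by fun_prop
  have hopen : IsOpen {p : E × (StrongDual ℝ E) × ℝ | p.2.2 + (1/2) * ‖p.1‖^2 + (1/2) * ‖p.2.1‖^2 < 0} :=
    isOpen_lt hcont continuous_const
  obtain ⟨f, u, hfO, hfE⟩ := geometric_hahn_banach_open convex_openset hopen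
    (epi_convex T w lam) hd
  set φ : E →L[ℝ] ℝ := f.comp (ContinuousLinearMap.inl ℝ E ((StrongDual ℝ E) × ℝ)) with hφdef
  set Ψ : (StrongDual ℝ E) →L[ℝ] ℝ :=
    f.comp ((ContinuousLinearMap.inr ℝ E ((StrongDual ℝ E) × ℝ)).comp
      (ContinuousLinearMap.inl ℝ (StrongDual ℝ E) ℝ)) with hΨdef
  set s : ℝ := f (0, 0, 1) with hsdef
  have hsplit : ∀ (x : E) (xt : StrongDual ℝ E) (t : ℝ), f (x, xt, t) = φ x + Ψ xt + t * s := by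
    intro x xt t
    have h1 : (x, xt, t) = ((x, (0:StrongDual ℝ E), (0:ℝ)) + ((0:E), xt, (0:ℝ))) +
        ((0:E), (0:StrongDual ℝ E), t) := by simp [Prod.ext_iff]
    rw [h1, map_add, map_add]
    have h2 : f ((0:E), (0:StrongDual ℝ E), t) = t * s := by
      have h3 : ((0:E), (0:StrongDual ℝ E), t) = t • ((0:E), (0:StrongDual ℝ E), (1:ℝ)) := by
        simp [Prod.ext_iff]
      rw [h3, map_smul, smul_eq_mul, hsdef]
    rw [h2]
    rfl
  have hOlt : ∀ (x : E) (xt : StrongDual ℝ E) (t : ℝ), t + (1/2)*‖x‖^2 + (1/2)*‖xt‖^2 < 0 →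
      φ x + Ψ xt + t * s < u := by
    intro x xt t ht
    have := hfO (x, xt, t) ht
    rwa [hsplit] at this
  clear_value φ Ψ s
  -- s > 0
  have hts : ∀ t : ℝ, t < 0 → t * s < u := by
    intro t ht
    have := hOlt 0 0 t (by simp [ht])
    simpa using this
  have hsnn : 0 ≤ s := by
    by_contra hneg
    push_neg at hneg
    set t : ℝ := min ((u + 1) / s) (-1) with htdef
    have ht : t < 0 := lt_of_le_of_lt (min_le_right _ _) (by norm_num)
    have h5 : t ≤ (u + 1) / s := min_le_left _ _
    have h6 : (u + 1) / s * s ≤ t * s := mul_le_mul_of_nonpos_right h5 hneg.le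
    rw [div_mul_cancel₀ _ hneg.ne] at h6
    linarith [hts t ht]
  have hsne : s ≠ 0 := by
    intro h0
    have hlin : ∀ (x : E) (xt : StrongDual ℝ E), φ x + Ψ xt < u := by
      intro x xt
      have := hOlt x xt (-(1/2)*‖x‖^2 - (1/2)*‖xt‖^2 - 1) (by ring_nf; norm_num)
      rw [h0, mul_zero, add_zero] at this
      exact this
    have hφ0 : ∀ x : E, φ x = 0 := by
      apply lin_zero φ (u - Ψ 0)
      intro x
      have := hlin x 0
      linarith
    have hΨ0 : ∀ xt : StrongDual ℝ E, Ψ xt = 0 := by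
      apply lin_zero Ψ (u - φ 0)
      intro xt
      have := hlin 0 xt
      linarith
    have hepi := hfE _ (epi_graph_mem T hmono w hlam hy₀)
    rw [hsplit, hφ0, hΨ0, h0, mul_zero] at hepi
    have hu0 : (0:ℝ) < u := by
      have := hlin 0 0
      rw [hφ0, hΨ0] at this
      linarith
    linarith
  have hs : 0 < s := lt_of_le_of_ne hsnn (Ne.symm hsne)
  -- normalized data
  set p : E →L[ℝ] ℝ := s⁻¹ • φ with hpdef
  set Ψ' : (StrongDual ℝ E) →L[ℝ] ℝ := s⁻¹ • Ψ with hΨ'def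
  set u' : ℝ := s⁻¹ * u with hu'def
  clear_value p Ψ' u'
  have hQ : ∀ (x : E) (xt : StrongDual ℝ E),
      p x + Ψ' xt - (1/2)*‖x‖^2 - (1/2)*‖xt‖^2 ≤ u' := by
    intro x xt
    have hB : φ x + Ψ xt - s * ((1/2)*‖x‖^2 + (1/2)*‖xt‖^2) ≤ u := by
      refine le_of_forall_pos_le_add ?_
      intro ε' hε'
      have hOin : -(1/2)*‖x‖^2 - (1/2)*‖xt‖^2 - ε'/s + (1/2)*‖x‖^2 + (1/2)*‖xt‖^2 < 0 := by
        have : 0 < ε'/s := div_pos hε' hs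
        linarith
      have hlt := hOlt x xt (-(1/2)*‖x‖^2 - (1/2)*‖xt‖^2 - ε'/s) hOin
      have hexp : (-(1/2)*‖x‖^2 - (1/2)*‖xt‖^2 - ε'/s) * s
          = -(s * ((1/2)*‖x‖^2 + (1/2)*‖xt‖^2)) - (ε'/s) * s := by ring
      rw [hexp, div_mul_cancel₀ _ hs.ne'] at hlt
      linarith
    have h7 := mul_le_mul_of_nonneg_left hB (inv_nonneg.2 hs.le)
    have h8 : s⁻¹ * (φ x + Ψ xt - s * ((1/2)*‖x‖^2 + (1/2)*‖xt‖^2))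
        = s⁻¹ * φ x + s⁻¹ * Ψ xt - (s⁻¹ * s) * ((1/2)*‖x‖^2 + (1/2)*‖xt‖^2) := by ring
    rw [h8, inv_mul_cancel₀ hs.ne', one_mul] at h7
    have h9 : p x = s⁻¹ * φ x := by rw [hpdef]; simp
    have h10 : Ψ' xt = s⁻¹ * Ψ xt := by rw [hΨ'def]; simp
    rw [h9, h10, hu'def]
    linarith
  have hG : ∀ y y', y' ∈ T y →
      u' ≤ p y + Ψ' (lam⁻¹ • (y' - w)) + (lam⁻¹ • (y' - w)) y := by
    intro y y' hy
    have hepi := hfE _ (epi_graph_mem T hmono w hlam hy)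
    rw [hsplit] at hepi
    have h7 := mul_le_mul_of_nonneg_left hepi (inv_nonneg.2 hs.le)
    have h8 : s⁻¹ * (φ y + Ψ (lam⁻¹ • (y' - w)) + ((lam⁻¹ • (y' - w)) y) * s)
        = s⁻¹ * φ y + s⁻¹ * Ψ (lam⁻¹ • (y' - w)) + (s⁻¹ * s) * ((lam⁻¹ • (y' - w)) y) := by ring
    rw [h8, inv_mul_cancel₀ hs.ne', one_mul] at h7
    have h9 : p y = s⁻¹ * φ y := by rw [hpdef]; simp
    have h10 : Ψ' (lam⁻¹ • (y' - w)) = s⁻¹ * Ψ (lam⁻¹ • (y' - w)) := by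
      rw [hΨ'def]
      simp only [ContinuousLinearMap.coe_smul', Pi.smul_apply, smul_eq_mul]
    rw [h9, h10, hu'def]
    linarith
  -- sup inequality
  have hsum : (1/2)*‖p‖^2 + (1/2)*‖Ψ'‖^2 ≤ u' := by
    refine le_of_forall_pos_le_add ?_
    intro ε hε
    obtain ⟨x, hx⟩ := exists_near_sup p (half_pos hε)
    obtain ⟨xt, hxt⟩ := exists_near_sup Ψ' (half_pos hε)
    have := hQ x xt
    linarith
  clear hd hcont hopen hfO hfE hsplit hOlt hts hQ hpdef hΨ'def hu'def hφdef hΨdef hsdef hsnn hsne hs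
  clear f φ Ψ s u
  -- reflexivity
  obtain ⟨e, he⟩ := hrefl Ψ'
  have hΨe : ∀ xt : StrongDual ℝ E, Ψ' xt = xt e := by
    intro xt
    rw [← he]
    rfl
  have hnorme : ‖Ψ'‖ = ‖e‖ := by
    rw [← he]
    exact (inclusionInDoubleDualLi ℝ (E := E)).norm_map e
  -- bounds on p e
  have hpe_lb : -(‖p‖ * ‖e‖) ≤ p e := by
    have h1 := p.le_opNorm e
    rw [Real.norm_eq_abs] at h1
    linarith [abs_le.1 h1 |>.1]
  have hpe_ub : p e ≤ ‖p‖ * ‖e‖ := by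
    have h1 := p.le_opNorm e
    rw [Real.norm_eq_abs] at h1
    linarith [abs_le.1 h1 |>.2]
  have hsum' : (1/2)*‖p‖^2 + (1/2)*‖e‖^2 ≤ u' := by rw [← hnorme]; exact hsum
  -- the monotonically related pair
  set X : E := -e with hXdef
  set X' : StrongDual ℝ E := w - lam • p with hX'def
  clear_value X X'
  have hkey0 : 0 ≤ p e + (1/2)*‖p‖^2 + (1/2)*‖e‖^2 := by
    nlinarith [sq_nonneg (‖p‖ - ‖e‖), hpe_lb]
  have hrelX : ∀ y y', y' ∈ T y → 0 ≤ (X' - y') (X - y) := by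
    intro y y' hy
    have hg := hG y y' hy
    rw [hΨe] at hg
    have hg2 : lam * u' ≤ lam * p y + ((y' - w) e) + ((y' - w) y) := by
      have h := mul_le_mul_of_nonneg_left hg hlam.le
      have hinv : lam * lam⁻¹ = 1 := mul_inv_cancel₀ hlam.ne'
      calc lam * u' ≤ lam * (p y + (lam⁻¹ • (y' - w)) e + (lam⁻¹ • (y' - w)) y) := h
        _ = lam * p y + (lam * lam⁻¹) * ((y' - w) e) + (lam * lam⁻¹) * ((y' - w) y) := by
            simp only [ContinuousLinearMap.coe_smul', Pi.smul_apply, smul_eq_mul]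
            ring
        _ = lam * p y + ((y' - w) e) + ((y' - w) y) := by rw [hinv]; ring
    have hg3 : lam * u' ≤ lam * p y + (y' e - w e) + (y' y - w y) := by
      simpa only [ContinuousLinearMap.sub_apply] using hg2
    have hgoal : (X' - y') (X - y)
        = -(w e) - w y + lam * (p e) + lam * (p y) + y' e + y' y := by
      simp only [hX'def, hXdef, ContinuousLinearMap.sub_apply, map_sub, map_neg,
        ContinuousLinearMap.coe_smul', Pi.smul_apply, smul_eq_mul]
      ring
    rw [hgoal]
    have hsum2 : lam * ((1/2)*‖p‖^2 + (1/2)*‖e‖^2) ≤ lam * u' :=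
      mul_le_mul_of_nonneg_left hsum' hlam.le
    have hsum3 : 0 ≤ lam * (p e) + lam * ((1/2)*‖p‖^2 + (1/2)*‖e‖^2) := by
      have := mul_nonneg hlam.le hkey0
      nlinarith
    linarith
  have hmem : X' ∈ T X := hmax X X' hrelX
  have hsp : (lam⁻¹ • (X' - w) : StrongDual ℝ E) = -p := by
    rw [hX'def]
    have h4 : w - lam • p - w = -(lam • p) := by abel
    rw [h4, smul_neg, inv_smul_smul₀ hlam.ne']
  have hgX := hG X X' hmem
  rw [hsp, hΨe] at hgX
  have hfin1 : u' ≤ -(p e) := by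
    have h1 : p X = -(p e) := by rw [hXdef, map_neg]
    have h2 : (-p : StrongDual ℝ E) e = -(p e) := by simp
    have h3 : (-p : StrongDual ℝ E) X = p e := by rw [hXdef]; simp
    rw [h1, h2, h3] at hgX
    linarith
  clear hrelX hsp hgX he hΨe
  have h9 : (‖p‖ - ‖e‖)^2 ≤ 0 := by nlinarith [hsum', hfin1, hpe_lb]
  have h10 : ‖p‖ = ‖e‖ := by
    have h11 : (‖p‖ - ‖e‖)^2 = 0 := le_antisymm h9 (sq_nonneg _)
    have h12 : ‖p‖ - ‖e‖ = 0 := by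
      have := sq_eq_zero_iff.1 h11
      exact this
    linarith
  have hpeval : p e = -(‖e‖^2) := by nlinarith [hsum', hfin1, hpe_ub, h10]
  refine ⟨X, X', hmem, ?_, ?_⟩
  · have h1 : X' - w = -(lam • p) := by rw [hX'def]; abel
    rw [h1, norm_neg, norm_smul, Real.norm_eq_abs, abs_of_pos hlam]
    rw [hXdef, norm_neg, ← h10]
  · have h1 : w - X' = lam • p := by rw [hX'def]; abel
    rw [h1, ContinuousLinearMap.smul_apply, smul_eq_mul, hXdef, map_neg, norm_neg, hpeval]
    ring


variable {E : Type*} [NormedAddCommGroup E] [NormedSpace ℝ E]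

/-- Baire category local boundedness lemma. -/
private lemma step2
    (T : E → Set (StrongDual ℝ E))
    (hmono : ∀ x y x' y', x' ∈ T x → y' ∈ T y → 0 ≤ (x' - y') (x - y))
    {w : StrongDual ℝ E} (hw : w ∈ interior (convexHull ℝ (⋃ x, T x))) {ρ : ℝ} (hρ : 0 < ρ) :
    ∃ δ > 0, ∃ K : ℝ, ∀ h : StrongDual ℝ E, ‖h‖ ≤ δ → ∀ y y', y' ∈ T y → ‖y' - w‖ ≤ ρ →
      (w + h - y') y ≤ K := by
  classical
  set R : Set (StrongDual ℝ E) := ⋃ x, T x with hR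
  -- the closed convex sets
  set F : ℕ → Set (StrongDual ℝ E) :=
    fun n => {v | ∀ y y', y' ∈ T y → ‖y' - w‖ ≤ ρ → (v - y') y ≤ n} with hF
  have hFclosed : ∀ n, IsClosed (F n) := by
    intro n
    have : F n = ⋂ (y : E), ⋂ (y' : StrongDual ℝ E), ⋂ (_ : y' ∈ T y ∧ ‖y' - w‖ ≤ ρ),
        {v : StrongDual ℝ E | (v - y') y ≤ n} := by
      ext v
      simp only [hF, mem_setOf_eq, mem_iInter]
      constructor
      · intro hv y y' ⟨h1, h2⟩; exact hv y y' h1 h2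
      · intro hv y y' h1 h2; exact hv y y' ⟨h1, h2⟩
    rw [this]
    refine isClosed_iInter fun y => isClosed_iInter fun y' => isClosed_iInter fun _ => ?_
    have hcont : Continuous fun v : StrongDual ℝ E => (v - y') y := by
      have : (fun v : StrongDual ℝ E => (v - y') y) = fun v : StrongDual ℝ E => v y - y' y := by
        ext v; simp
      rw [this]
      exact ((inclusionInDoubleDual ℝ E y).continuous).sub continuous_const
    exact isClosed_le hcont continuous_const
  have hFconvex : ∀ n, Convex ℝ (F n) := by
    intro n v₁ h₁ v₂ h₂ a b ha hb hab
    intro y y' hy hd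
    have e₁ := h₁ y y' hy hd
    have e₂ := h₂ y y' hy hd
    have hexp : ((a • v₁ + b • v₂ : StrongDual ℝ E) - y') y
        = a * ((v₁ - y') y) + b * ((v₂ - y') y) := by
      simp only [ContinuousLinearMap.sub_apply, ContinuousLinearMap.add_apply,
        ContinuousLinearMap.coe_smul', Pi.smul_apply, smul_eq_mul]
      have : a * (v₁ y - y' y) + b * (v₂ y - y' y) = a * v₁ y + b * v₂ y - (a + b) * y' y := by
        ring
      rw [this, hab, one_mul]
    rw [hexp]
    nlinarith [mul_le_mul_of_nonneg_left e₁ ha, mul_le_mul_of_nonneg_left e₂ hb]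
  have hFmono : ∀ m n : ℕ, m ≤ n → F m ⊆ F n := by
    intro m n hmn v hv y y' hy hd
    exact le_trans (hv y y' hy hd) (by exact_mod_cast Nat.cast_le.2 hmn)
  -- R is covered
  have hRsub : R ⊆ ⋃ n, F n := by
    intro v hv
    rw [hR, mem_iUnion] at hv
    obtain ⟨z, hz⟩ := hv
    refine mem_iUnion.2 ⟨⌈(‖v - w‖ + ρ) * ‖z‖⌉₊, ?_⟩
    intro y y' hy hd
    have hmo := hmono z y v y' hz hy
    have h1 : (v - y') y ≤ (v - y') z := by
      have : (v - y') (z - y) = (v - y') z - (v - y') y := by rw [map_sub]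
      linarith [hmo]
    have h2 : (v - y') z ≤ ‖v - y'‖ * ‖z‖ := by
      have := (v - y').le_opNorm z
      rw [Real.norm_eq_abs] at this
      linarith [abs_le.1 this |>.2]
    have h3 : ‖v - y'‖ ≤ ‖v - w‖ + ρ := by
      calc ‖v - y'‖ = ‖(v - w) + (w - y')‖ := by abel_nf
        _ ≤ ‖v - w‖ + ‖w - y'‖ := norm_add_le _ _
        _ ≤ ‖v - w‖ + ρ := by rw [← norm_neg (w - y')]; simp only [neg_sub]; linarith
    have h4 : ‖v - y'‖ * ‖z‖ ≤ (‖v - w‖ + ρ) * ‖z‖ :=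
      mul_le_mul_of_nonneg_right h3 (norm_nonneg z)
    calc (v - y') y ≤ (‖v - w‖ + ρ) * ‖z‖ := by linarith
      _ ≤ ⌈(‖v - w‖ + ρ) * ‖z‖⌉₊ := Nat.le_ceil _
  have hUconv : Convex ℝ (⋃ n, F n) := by
    intro v₁ h₁ v₂ h₂ a b ha hb hab
    obtain ⟨i, hi⟩ := mem_iUnion.1 h₁
    obtain ⟨j, hj⟩ := mem_iUnion.1 h₂
    exact mem_iUnion.2 ⟨max i j, hFconvex _ (hFmono _ _ (le_max_left i j) hi)
      (hFmono _ _ (le_max_right i j) hj) ha hb hab⟩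
  have hhull : convexHull ℝ R ⊆ ⋃ n, F n := convexHull_min hRsub hUconv
  -- a closed ball inside the hull
  obtain ⟨r', hr', hball⟩ := Metric.mem_nhds_iff.1 (mem_interior_iff_mem_nhds.1 hw)
  set r : ℝ := r' / 2 with hrdef
  have hr : 0 < r := by positivity
  have hBsub : closedBall w r ⊆ convexHull ℝ R := by
    refine subset_trans ?_ hball
    intro v hv
    rw [mem_closedBall] at hv
    rw [mem_ball]
    have : r < r' := by rw [hrdef]; linarith
    linarith
  -- Baire on the closed ball
  haveI : CompleteSpace (closedBall w r : Set (StrongDual ℝ E)) :=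
    (isClosed_closedBall).completeSpace_coe
  haveI : Nonempty (closedBall w r : Set (StrongDual ℝ E)) :=
    Set.Nonempty.to_subtype ⟨w, mem_closedBall_self hr.le⟩
  have hcover : (⋃ n, (Subtype.val ⁻¹' F n : Set (closedBall w r : Set (StrongDual ℝ E)))) = univ := by
    rw [eq_univ_iff_forall]
    rintro ⟨v, hv⟩
    have := hhull (hBsub hv)
    rw [mem_iUnion] at this ⊢
    obtain ⟨n, hn⟩ := this
    exact ⟨n, hn⟩
  obtain ⟨n, hn⟩ := nonempty_interior_of_iUnion_of_closed
    (fun n => (hFclosed n).preimage continuous_subtype_val) hcover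
  obtain ⟨⟨v₀, hv₀B⟩, hv₀⟩ := hn
  have hv₀nhds := mem_interior_iff_mem_nhds.1 hv₀
  obtain ⟨δ₀, hδ₀, hsub⟩ := Metric.mem_nhds_iff.1 hv₀nhds
  have hδball : ∀ v (hv : v ∈ closedBall w r), dist v v₀ < δ₀ → v ∈ F n := by
    intro v hv hd
    have : (⟨v, hv⟩ : (closedBall w r : Set (StrongDual ℝ E))) ∈ Metric.ball ⟨v₀, hv₀B⟩ δ₀ := by
      rw [mem_ball, Subtype.dist_eq]
      exact hd
    exact hsub this
  set δ' : ℝ := min δ₀ r with hδ'def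
  have hδ' : 0 < δ' := lt_min hδ₀ hr
  have hδ'r : δ' ≤ r := min_le_right _ _
  have hδ'δ : δ' ≤ δ₀ := min_le_left _ _
  set θ : ℝ := δ' / (2 * r) with hθdef
  have hθ : 0 < θ := by positivity
  have hθr : θ * r = δ' / 2 := by
    rw [hθdef]
    field_simp
  have hθ1 : θ ≤ 1/2 := by
    rw [hθdef, div_le_iff₀ (by positivity)]
    linarith
  have hv₀w : ‖v₀ - w‖ ≤ r := by
    rw [mem_closedBall, dist_eq_norm] at hv₀B
    exact hv₀B
  -- reflection point
  set vr : StrongDual ℝ E := w - (1 - θ) • (v₀ - w) with hvrdef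
  have hvrB : vr ∈ closedBall w r := by
    rw [mem_closedBall, dist_eq_norm]
    have h1 : vr - w = -((1 - θ) • (v₀ - w)) := by rw [hvrdef]; abel
    rw [h1, norm_neg, norm_smul, Real.norm_eq_abs, abs_of_nonneg (by linarith)]
    nlinarith [norm_nonneg (v₀ - w)]
  obtain ⟨m, hm⟩ := mem_iUnion.1 (hhull (hBsub hvrB))
  refine ⟨δ' / 16, by positivity, (max n m : ℕ), ?_⟩
  intro h hh y y' hy hd
  -- the two convex-combination points
  set A : StrongDual ℝ E := w + (1 - θ) • (v₀ - w) + (2:ℝ) • h with hAdef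
  have hAv₀ : ‖A - v₀‖ < δ₀ := by
    have h1 : A - v₀ = (-θ) • (v₀ - w) + (2:ℝ) • h := by
      rw [hAdef]
      module
    rw [h1]
    calc ‖(-θ) • (v₀ - w) + (2:ℝ) • h‖ ≤ ‖(-θ) • (v₀ - w)‖ + ‖(2:ℝ) • h‖ := norm_add_le _ _
      _ = θ * ‖v₀ - w‖ + 2 * ‖h‖ := by
          rw [norm_smul, norm_smul, Real.norm_eq_abs, Real.norm_eq_abs, abs_neg,
            abs_of_pos hθ]
          norm_num
      _ ≤ θ * r + 2 * (δ'/16) := by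
          have := mul_le_mul_of_nonneg_left hv₀w hθ.le
          linarith
      _ < δ' := by rw [hθr]; linarith
      _ ≤ δ₀ := hδ'δ
  have hAB : A ∈ closedBall w r := by
    rw [mem_closedBall, dist_eq_norm]
    have h1 : A - w = (1 - θ) • (v₀ - w) + (2:ℝ) • h := by rw [hAdef]; module
    rw [h1]
    calc ‖(1 - θ) • (v₀ - w) + (2:ℝ) • h‖ ≤ ‖(1 - θ) • (v₀ - w)‖ + ‖(2:ℝ) • h‖ :=
        norm_add_le _ _
      _ = (1 - θ) * ‖v₀ - w‖ + 2 * ‖h‖ := by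
          rw [norm_smul, norm_smul, Real.norm_eq_abs, Real.norm_eq_abs,
            abs_of_nonneg (by linarith : (0:ℝ) ≤ 1 - θ), abs_of_pos (by norm_num : (0:ℝ) < 2)]
      _ ≤ (1 - θ) * r + 2 * (δ'/16) := by
          have := mul_le_mul_of_nonneg_left hv₀w (by linarith : (0:ℝ) ≤ 1 - θ)
          linarith
      _ ≤ r := by nlinarith [hθr]
  have hAF : A ∈ F n := hδball A hAB (by rwa [dist_eq_norm])
  have hcombo : w + h = (1/2 : ℝ) • A + (1/2 : ℝ) • vr := by
    rw [hAdef, hvrdef]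
    module
  have hwh : w + h ∈ F (max n m) := by
    rw [hcombo]
    exact hFconvex (max n m) (hFmono _ _ (le_max_left n m) hAF)
      (hFmono _ _ (le_max_right n m) hm) (by norm_num) (by norm_num) (by norm_num)
  exact hwh y y' hy hd

private lemma cluster_ge {L b M' : ℝ} {a : ℕ → ℝ} (hclus : MapClusterPt L atTop a)
    (hlb : ∀ n : ℕ, b - M' * (1/(n+1:ℝ)) ≤ a n) : b ≤ L := by
  by_contra hc
  push_neg at hc
  set ε : ℝ := (b - L)/2 with hε
  have hεpos : 0 < ε := by simp only [hε]; linarith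
  have hfreq : ∃ᶠ n in atTop, a n ∈ Metric.ball L ε :=
    mapClusterPt_iff_frequently.1 hclus _ (Metric.ball_mem_nhds L hεpos)
  have hev : ∀ᶠ n : ℕ in atTop, M' * (1/(n+1:ℝ)) < ε := by
    have htend : Tendsto (fun n : ℕ => M' * (1/(n+1:ℝ))) atTop (nhds 0) := by
      have h1 : Tendsto (fun n : ℕ => 1/(n+1:ℝ)) atTop (nhds 0) :=
        tendsto_one_div_add_atTop_nhds_zero_nat
      have := h1.const_mul M'
      simpa using this
    exact (htend.eventually (eventually_lt_nhds hεpos)).mono (fun n h => h)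
  obtain ⟨n, hn1, hn2⟩ := (hfreq.and_eventually hev).exists
  rw [mem_ball, Real.dist_eq] at hn1
  have := hlb n
  have h3 := abs_lt.1 hn1 |>.2
  simp only [hε] at *
  linarith


/-- Key lemma: the interior of the convex hull of the range is contained in the range. -/
private lemma key_interior_subset
    (hrefl : Function.Surjective (inclusionInDoubleDual ℝ E))
    (T : E → Set (StrongDual ℝ E))
    (hmono : ∀ x y x' y', x' ∈ T x → y' ∈ T y → 0 ≤ (x' - y') (x - y))
    (hmax : ∀ x x', (∀ y y', y' ∈ T y → 0 ≤ (x' - y') (x - y)) → x' ∈ T x) :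
    interior (convexHull ℝ (⋃ x, T x)) ⊆ ⋃ x, T x := by
  intro w hw
  obtain ⟨y₀, y₀', hy₀⟩ := graph_nonempty T hmax
  have hρ : (0:ℝ) < ‖w - y₀'‖ + ‖y₀‖ + ‖w - y₀'‖ * ‖y₀‖ + 1 := by positivity
  obtain ⟨δ, hδ, K, hK⟩ := step2 T hmono hw hρ
  have hfam : ∀ n : ℕ, ∃ x x', x' ∈ T x ∧ ‖x' - w‖ = (1/(n+1:ℝ)) * ‖x‖ ∧
      (w - x') x = (1/(n+1:ℝ)) * ‖x‖^2 := fun n => step1 hrefl T hmono hmax w (by positivity)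
  choose xs xs' hmem hnrm hpair using hfam
  -- a priori bound on ‖xs' n − w‖
  have hapriori : ∀ n, ‖xs' n - w‖ ≤ ‖w - y₀'‖ + ‖y₀‖ + ‖w - y₀'‖ * ‖y₀‖ + 1 := by
    intro n
    have hlam0 : (0:ℝ) < 1/(n+1:ℝ) := by positivity
    have hlam1 : (1:ℝ)/(n+1:ℝ) ≤ 1 := by
      rw [div_le_one (by positivity)]
      linarith [Nat.cast_nonneg (α := ℝ) n]
    have hmo := hmono (xs n) y₀ (xs' n) y₀' (hmem n) hy₀
    have e1 : (xs' n - y₀') (xs n - y₀)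
        = -((w - xs' n) (xs n)) + (w - y₀') (xs n) - (xs' n - y₀') y₀ := by
      simp only [map_sub, ContinuousLinearMap.sub_apply]
      ring
    have e3 : (w - y₀') (xs n) ≤ ‖w - y₀'‖ * ‖xs n‖ := by
      have h := (w - y₀').le_opNorm (xs n)
      rw [Real.norm_eq_abs] at h
      linarith [abs_le.1 h |>.2]
    have e4 : -((xs' n - y₀') y₀) ≤ ((1/(n+1:ℝ)) * ‖xs n‖ + ‖w - y₀'‖) * ‖y₀‖ := by
      have h1 := (xs' n - y₀').le_opNorm y₀
      rw [Real.norm_eq_abs] at h1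
      have h2 : ‖xs' n - y₀'‖ ≤ (1/(n+1:ℝ)) * ‖xs n‖ + ‖w - y₀'‖ := by
        calc ‖xs' n - y₀'‖ = ‖(xs' n - w) + (w - y₀')‖ := by abel_nf
          _ ≤ ‖xs' n - w‖ + ‖w - y₀'‖ := norm_add_le _ _
          _ = (1/(n+1:ℝ)) * ‖xs n‖ + ‖w - y₀'‖ := by rw [hnrm n]
      have h3 := abs_le.1 h1 |>.1
      nlinarith [norm_nonneg y₀, norm_nonneg (xs' n - y₀')]
    have hineq : (1/(n+1:ℝ)) * ‖xs n‖^2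
        ≤ ‖w - y₀'‖ * ‖xs n‖ + (1/(n+1:ℝ)) * ‖xs n‖ * ‖y₀‖ + ‖w - y₀'‖ * ‖y₀‖ := by
      have hp := hpair n
      nlinarith [hmo, e1, e3, e4]
    rw [hnrm n]
    by_cases hcase : (1/(n+1:ℝ)) * ‖xs n‖ ≤ 1
    · nlinarith [norm_nonneg (w - y₀'), norm_nonneg y₀,
        mul_nonneg (norm_nonneg (w - y₀')) (norm_nonneg y₀)]
    · push_neg at hcase
      have hx1 : (1:ℝ) < ‖xs n‖ := by nlinarith [norm_nonneg (xs n)]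
      nlinarith [hineq, hx1, norm_nonneg (w - y₀'), norm_nonneg y₀,
        mul_nonneg (norm_nonneg (w - y₀')) (norm_nonneg y₀),
        mul_le_mul_of_nonneg_right hlam1 (mul_nonneg (norm_nonneg (xs n)) (norm_nonneg y₀)),
        mul_nonneg (mul_nonneg (norm_nonneg (w - y₀')) (norm_nonneg y₀))
          (sub_nonneg.2 hx1.le)]
  -- K is nonnegative
  have hK0 : 0 ≤ K := by
    have h1 := hK 0 (by simp [hδ.le]) (xs 0) (xs' 0) (hmem 0) (hapriori 0)
    have h2 : (w + 0 - xs' 0) (xs 0) = (w - xs' 0) (xs 0) := by norm_num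
    rw [h2, hpair 0] at h1
    have : (0:ℝ) ≤ (1/(0+1:ℝ)) * ‖xs 0‖^2 := by positivity
    linarith
  -- uniform bound on ‖xs n‖
  have hbd : ∀ n, ‖xs n‖ ≤ K / δ := by
    intro n
    have habs : ∀ h : StrongDual ℝ E, ‖h‖ ≤ δ → |h (xs n)| ≤ K := by
      intro h hh
      have h1 := hK h hh (xs n) (xs' n) (hmem n) (hapriori n)
      have h2 := hK (-h) (by rwa [norm_neg]) (xs n) (xs' n) (hmem n) (hapriori n)
      have e1 : (w + h - xs' n) (xs n) = (w - xs' n) (xs n) + h (xs n) := by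
        simp only [ContinuousLinearMap.sub_apply, ContinuousLinearMap.add_apply]
        ring
      have e2 : (w + -h - xs' n) (xs n) = (w - xs' n) (xs n) - h (xs n) := by
        simp only [ContinuousLinearMap.sub_apply, ContinuousLinearMap.add_apply,
          ContinuousLinearMap.neg_apply]
        ring
      have e3 : 0 ≤ (w - xs' n) (xs n) := by
        rw [hpair n]
        positivity
      rw [e1] at h1
      rw [e2] at h2
      rw [abs_le]
      constructor <;> linarith
    refine norm_le_dual_bound ℝ (xs n) (div_nonneg hK0 hδ.le) ?_
    intro f
    by_cases hf : f = 0
    · simp [hf]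
    · have hfn : 0 < ‖f‖ := norm_pos_iff.2 hf
      have hsc : ‖(δ/‖f‖) • f‖ ≤ δ := by
        rw [norm_smul, Real.norm_eq_abs, abs_of_pos (by positivity)]
        rw [div_mul_cancel₀ _ hfn.ne']
      have h4 := habs ((δ/‖f‖) • f) hsc
      rw [ContinuousLinearMap.smul_apply, smul_eq_mul, abs_mul,
        abs_of_pos (by positivity : (0:ℝ) < δ/‖f‖)] at h4
      have h5 := mul_le_mul_of_nonneg_right h4 (norm_nonneg f)
      have h6 : δ/‖f‖ * |f (xs n)| * ‖f‖ = δ * |f (xs n)| := by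
        field_simp
      rw [h6] at h5
      rw [Real.norm_eq_abs, div_mul_eq_mul_div, le_div_iff₀ hδ]
      linarith
  -- weak-* cluster point
  have huS : ∀ n : ℕ, (StrongDual.toWeakDual (inclusionInDoubleDual ℝ E (xs n))) ∈
      ((WeakDual.toStrongDual : WeakDual ℝ (StrongDual ℝ E) → StrongDual ℝ (StrongDual ℝ E)) ⁻¹'
        closedBall 0 (K/δ)) := by
    intro n
    simp only [mem_preimage, mem_closedBall_zero_iff]
    rw [show WeakDual.toStrongDual (StrongDual.toWeakDual (inclusionInDoubleDual ℝ E (xs n)))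
      = inclusionInDoubleDual ℝ E (xs n) from rfl]
    refine (mem_closedBall_zero_iff (E := StrongDual ℝ (StrongDual ℝ E))).2 ?_
    rw [show inclusionInDoubleDual ℝ E (xs n) = inclusionInDoubleDualLi ℝ (xs n) from rfl,
      (inclusionInDoubleDualLi ℝ (E := E)).norm_map (xs n)]
    exact hbd n
  obtain ⟨φ, hφS, hclus⟩ := (WeakDual.isCompact_closedBall (0 : StrongDual ℝ (StrongDual ℝ E))
      (K/δ)).exists_mapClusterPt (f := atTop) (u := fun n : ℕ =>
        StrongDual.toWeakDual (inclusionInDoubleDual ℝ E (xs n)))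
    (Filter.le_principal_iff.2 (Filter.mem_map.2 (Filter.Eventually.of_forall huS)))
  obtain ⟨xb, hxb⟩ := hrefl (WeakDual.toStrongDual φ)
  have hwmem : w ∈ T xb := by
    apply hmax
    intro y y' hy
    have hclc : MapClusterPt (φ (w - y')) atTop (fun n => (w - y') (xs n)) :=
      hclus.continuousAt_comp (WeakDual.eval_continuous (w - y')).continuousAt
    have hlb : ∀ n : ℕ, (w - y') y - ((K/δ) * ((K/δ) + ‖y‖)) * (1/(n+1:ℝ))
        ≤ (w - y') (xs n) := by
      intro n
      have hmo := hmono (xs n) y (xs' n) y' (hmem n) hy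
      have e1 : (w - y') (xs n) - (w - y') y
          = (xs' n - y') (xs n - y) + (w - xs' n) (xs n - y) := by
        simp only [map_sub, ContinuousLinearMap.sub_apply]
        ring
      have e2 : -(‖w - xs' n‖ * ‖xs n - y‖) ≤ (w - xs' n) (xs n - y) := by
        have h := (w - xs' n).le_opNorm (xs n - y)
        rw [Real.norm_eq_abs] at h
        linarith [abs_le.1 h |>.1]
      have e3 : ‖xs n - y‖ ≤ K/δ + ‖y‖ := by
        calc ‖xs n - y‖ ≤ ‖xs n‖ + ‖y‖ := norm_sub_le _ _
          _ ≤ K/δ + ‖y‖ := by linarith [hbd n]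
      have e4 : ‖w - xs' n‖ ≤ (K/δ) * (1/(n+1:ℝ)) := by
        rw [norm_sub_rev, hnrm n]
        rw [mul_comm]
        have := mul_le_mul_of_nonneg_left (hbd n) (le_of_lt (by positivity : (0:ℝ) < 1/(n+1:ℝ)))
        linarith
      have e5 : ‖w - xs' n‖ * ‖xs n - y‖ ≤ ((K/δ) * (1/(n+1:ℝ))) * (K/δ + ‖y‖) := by
        apply mul_le_mul e4 e3 (norm_nonneg _)
        positivity
      have e6 : ((K/δ) * (1/(n+1:ℝ))) * (K/δ + ‖y‖)
          = ((K/δ) * ((K/δ) + ‖y‖)) * (1/(n+1:ℝ)) := by ring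
      rw [e6] at e5
      linarith
    have hge : (w - y') y ≤ φ (w - y') := cluster_ge hclc hlb
    have heq : φ (w - y') = (w - y') xb := by
      rw [show φ (w - y') = (WeakDual.toStrongDual φ) (w - y') from rfl, ← hxb]
      rfl
    have : (w - y') (xb - y) = (w - y') xb - (w - y') y := by rw [map_sub]
    rw [this, ← heq]
    linarith
  exact mem_iUnion.2 ⟨xb, hwmem⟩

end

open NormedSpace

/-- If `E` is a reflexive real Banach space and `T : E → 2^{E*}` is maximal monotone, then the
interior of the range `R(T)` is convex, and if this interior is nonempty then the closure of
`R(T)` is convex. -/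
theorem interior_range_convex_of_reflexive
    {E : Type*} [NormedAddCommGroup E] [NormedSpace ℝ E] [CompleteSpace E]
    (hrefl : Function.Surjective (inclusionInDoubleDual ℝ E))
    (T : E → Set (StrongDual ℝ E))
    (hmono : ∀ x y x' y', x' ∈ T x → y' ∈ T y → 0 ≤ (x' - y') (x - y))
    (hmax : ∀ x x', (∀ y y', y' ∈ T y → 0 ≤ (x' - y') (x - y)) → x' ∈ T x) :
    Convex ℝ (interior (⋃ x, T x)) ∧
    ((interior (⋃ x, T x)).Nonempty → Convex ℝ (closure (⋃ x, T x))) := by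
  have hkey := key_interior_subset hrefl T hmono hmax
  have hint : interior (⋃ x, T x) = interior (convexHull ℝ (⋃ x, T x)) :=
    subset_antisymm (interior_mono (subset_convexHull ℝ _))
      (interior_maximal hkey isOpen_interior)
  constructor
  · rw [hint]
    exact (convex_convexHull ℝ _).interior
  · intro hne
    have hne' : (interior (convexHull ℝ (⋃ x, T x))).Nonempty := by rwa [← hint]
    obtain ⟨x₀, hx₀⟩ := hne'
    have hsub : convexHull ℝ (⋃ x, T x) ⊆ closure (⋃ x, T x) := by
      intro z hz
      have hcomb : ∀ n : ℕ, (1/(n+1:ℝ)) • x₀ + (1 - 1/(n+1:ℝ)) • z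
          ∈ interior (convexHull ℝ (⋃ x, T x)) := by
        intro n
        have h0 : (0:ℝ) < 1/(n+1:ℝ) := by positivity
        have h1 : (1:ℝ)/(n+1:ℝ) ≤ 1 := by
          rw [div_le_one (by positivity)]
          linarith [Nat.cast_nonneg (α := ℝ) n]
        exact (convex_convexHull ℝ _).combo_interior_self_mem_interior hx₀ hz h0
          (by linarith) (by ring)
      have htend : Filter.Tendsto (fun n : ℕ => (1/(n+1:ℝ)) • x₀ + (1 - 1/(n+1:ℝ)) • z)
          Filter.atTop (nhds z) := by
        have h1 : Filter.Tendsto (fun n : ℕ => 1/(n+1:ℝ)) Filter.atTop (nhds 0) :=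
          tendsto_one_div_add_atTop_nhds_zero_nat
        have h2 := (h1.smul_const x₀).add
          (((tendsto_const_nhds : Filter.Tendsto (fun _ : ℕ => (1:ℝ)) Filter.atTop
            (nhds 1)).sub h1).smul_const z)
        simpa using h2
      refine mem_closure_of_tendsto htend (Filter.Eventually.of_forall fun n => ?_)
      exact hkey (hcomb n)
    have hcl : closure (convexHull ℝ (⋃ x, T x)) = closure (⋃ x, T x) :=
      subset_antisymm (closure_minimal hsub isClosed_closure)
        (closure_mono (subset_convexHull ℝ _))
    rw [← hcl]
    exact (convex_convexHull ℝ _).closure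
end

section
/- (Borwein–Fitzpatrick) Let T : E → 2^{E*} be a monotone operator on a real Banach space E and let x ∈ D(T). If x is an absorbing point of D(T) (in particular, if x ∈ int D(T)), then T is locally bounded at x. -/
open NormedSpace

/-- **Borwein–Fitzpatrick.** If `T : E → 2^{E*}` is monotone on a real Banach space `E` and
`x ∈ D(T)` is an absorbing point of `D(T)` (i.e. `D(T) - x` is absorbing: for every `z ∈ E`
there is `t > 0` with `t • z ∈ D(T) - x`), then `T` is locally bounded at `x`. -/
theorem borwein_fitzpatrick_local_boundedness
    {E : Type*} [NormedAddCommGroup E] [NormedSpace ℝ E] [CompleteSpace E]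
    (T : E → Set (StrongDual ℝ E))
    (hmono : ∀ x y x' y', x' ∈ T x → y' ∈ T y → 0 ≤ (x' - y') (x - y))
    (x : E) (hx : (T x).Nonempty)
    (habs : ∀ z : E, ∃ t : ℝ, 0 < t ∧ (T (x + t • z)).Nonempty) :
    ∃ U ∈ nhds x, Bornology.IsBounded (⋃ u ∈ U, T u) := by
  classical
  obtain ⟨x', hx'⟩ := hx
  -- monotonicity against the base point
  have hmonf : ∀ y y', y' ∈ T (x + y) → 0 ≤ (y' - x') y := by
    intro y y' hy'
    have h := hmono (x + y) x y' x' hy' hx'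
    simpa using h
  -- key estimate in each direction
  have key : ∀ v : E, ∃ C t : ℝ, 0 ≤ C ∧ 0 < t ∧ ∀ c : ℝ, 0 < c → c ≤ t →
      ∀ y y', y' ∈ T (x + y) → ‖y‖ ≤ 1 → (y' - x') (c • v - y) ≤ C := by
    intro v
    obtain ⟨t, ht, z', hz'⟩ := habs v
    refine ⟨max (‖z' - x'‖ * (t * ‖v‖ + 1)) 0, t, le_max_right _ _, ht, ?_⟩
    intro c hc hct y y' hy' hy1
    set a := c / t with ha
    have ha0 : 0 < a := div_pos hc ht
    have ha1 : a ≤ 1 := (div_le_one ht).2 hct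
    have hdecomp : c • v - y = a • (t • v - y) + (1 - a) • (-y) := by
      have hat : a * t = c := by rw [ha]; field_simp
      rw [← hat]
      module
    have h1 : 0 ≤ (z' - y') (t • v - y) := by
      have h := hmono (x + t • v) (x + y) z' y' hz' hy'
      have h2 : (x + t • v) - (x + y) = t • v - y := by abel
      rwa [h2] at h
    have h3 : (z' - x') (t • v - y) ≤ ‖z' - x'‖ * (t * ‖v‖ + 1) := by
      have hn : ‖t • v - y‖ ≤ t * ‖v‖ + 1 := by
        calc ‖t • v - y‖ ≤ ‖t • v‖ + ‖y‖ := norm_sub_le _ _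
          _ ≤ t * ‖v‖ + 1 := by
              rw [norm_smul, Real.norm_eq_abs, abs_of_pos ht]; linarith
      calc (z' - x') (t • v - y) ≤ ‖(z' - x') (t • v - y)‖ := le_abs_self _
        _ ≤ ‖z' - x'‖ * ‖t • v - y‖ := (z' - x').le_opNorm _
        _ ≤ ‖z' - x'‖ * (t * ‖v‖ + 1) := by gcongr
    have h5 : (y' - x') (t • v - y) ≤ ‖z' - x'‖ * (t * ‖v‖ + 1) := by
      simp only [ContinuousLinearMap.sub_apply] at h1 h3 ⊢
      linarith
    have h4 : 0 ≤ (y' - x') y := hmonf y y' hy'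
    rw [hdecomp, map_add, map_smul, map_smul, map_neg, smul_eq_mul, smul_eq_mul]
    have hM0 : (0:ℝ) ≤ max (‖z' - x'‖ * (t * ‖v‖ + 1)) 0 := le_max_right _ _
    have hAM : (y' - x') (t • v - y) ≤ max (‖z' - x'‖ * (t * ‖v‖ + 1)) 0 :=
      h5.trans (le_max_left _ _)
    nlinarith [mul_le_mul_of_nonneg_left hAM ha0.le,
      mul_nonneg (sub_nonneg.2 ha1) h4,
      mul_nonneg (sub_nonneg.2 ha1) hM0]
  -- the closed sets
  set F : ℕ → ℕ → Set E := fun n m =>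
    {z : E | ∀ y y', y' ∈ T (x + y) → ‖y‖ ≤ 1 →
      (y' - x') (((m : ℝ) + 1)⁻¹ • z - y) ≤ n ∧
      (y' - x') (((m : ℝ) + 1)⁻¹ • (-z) - y) ≤ n} with hFdef
  have hclosed : ∀ n m, IsClosed (F n m) := by
    intro n m
    have hrw : F n m = ⋂ (y : E) (y' : StrongDual ℝ E) (_ : y' ∈ T (x + y)) (_ : ‖y‖ ≤ 1),
        {z : E | (y' - x') (((m : ℝ) + 1)⁻¹ • z - y) ≤ n ∧
          (y' - x') (((m : ℝ) + 1)⁻¹ • (-z) - y) ≤ n} := by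
      ext z
      simp only [hFdef, Set.mem_setOf_eq, Set.mem_iInter]
    rw [hrw]
    refine isClosed_iInter fun y => isClosed_iInter fun y' => isClosed_iInter fun _ =>
      isClosed_iInter fun _ => IsClosed.inter ?_ ?_
    · exact isClosed_le ((y' - x').continuous.comp
        ((continuous_const_smul _).sub continuous_const)) continuous_const
    · exact isClosed_le ((y' - x').continuous.comp
        (((continuous_const_smul _).comp continuous_neg).sub continuous_const)) continuous_const
  -- covering
  have hcover : ⋃ p : ℕ × ℕ, F p.1 p.2 = Set.univ := by
    ext z
    simp only [Set.mem_iUnion, Set.mem_univ, iff_true]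
    obtain ⟨C₁, t₁, hC₁, ht₁, hkey₁⟩ := key z
    obtain ⟨C₂, t₂, hC₂, ht₂, hkey₂⟩ := key (-z)
    obtain ⟨m, hm⟩ := exists_nat_gt (min t₁ t₂)⁻¹
    have hmin : 0 < min t₁ t₂ := lt_min ht₁ ht₂
    have hc0 : (0:ℝ) < ((m:ℝ) + 1)⁻¹ := by positivity
    have hcle : ((m:ℝ) + 1)⁻¹ ≤ min t₁ t₂ := by
      have h1 : (min t₁ t₂)⁻¹ < (m:ℝ) + 1 := hm.trans (lt_add_one _)
      have := (inv_lt_comm₀ hmin (by positivity : (0:ℝ) < (m:ℝ) + 1)).1 h1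
      linarith
    refine ⟨(⌈max C₁ C₂⌉₊, m), ?_⟩
    intro y y' hy' hy1
    constructor
    · calc (y' - x') (((m : ℝ) + 1)⁻¹ • z - y) ≤ C₁ :=
            hkey₁ _ hc0 (hcle.trans (min_le_left _ _)) y y' hy' hy1
        _ ≤ max C₁ C₂ := le_max_left _ _
        _ ≤ (⌈max C₁ C₂⌉₊ : ℝ) := Nat.le_ceil _
    · calc (y' - x') (((m : ℝ) + 1)⁻¹ • (-z) - y) ≤ C₂ :=
            hkey₂ _ hc0 (hcle.trans (min_le_right _ _)) y y' hy' hy1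
        _ ≤ max C₁ C₂ := le_max_right _ _
        _ ≤ (⌈max C₁ C₂⌉₊ : ℝ) := Nat.le_ceil _
  -- Baire category
  obtain ⟨⟨n, m⟩, z₀, hz₀⟩ := nonempty_interior_of_iUnion_of_closed
    (f := fun p : ℕ × ℕ => F p.1 p.2) (fun p => hclosed p.1 p.2) hcover
  set c : ℝ := ((m : ℝ) + 1)⁻¹ with hc_def
  have hc : 0 < c := by positivity
  obtain ⟨ε, hε, hball⟩ := Metric.isOpen_iff.1 isOpen_interior z₀ hz₀
  have hsub : Metric.ball z₀ ε ⊆ F n m := hball.trans interior_subset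
  -- symmetrize around 0
  have hmain : ∀ b : E, ‖b‖ < ε → ∀ y y', y' ∈ T (x + y) → ‖y‖ ≤ 1 →
      (y' - x') (c • b - y) ≤ n := by
    intro b hb y y' hy' hy1
    have hmem1 : z₀ + b ∈ Metric.ball z₀ ε := by
      rw [Metric.mem_ball, dist_eq_norm]
      simpa using hb
    have hmem2 : z₀ - b ∈ Metric.ball z₀ ε := by
      rw [Metric.mem_ball, dist_eq_norm]
      simpa using hb
    have h₁ := (hsub hmem1 y y' hy' hy1).1
    have h₂ := (hsub hmem2 y y' hy' hy1).2
    have harg : (c • (z₀ + b) - y) + (c • (-(z₀ - b)) - y) = (2:ℝ) • (c • b - y) := by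
      module
    have h3 : (2:ℝ) * (y' - x') (c • b - y) =
        (y' - x') (c • (z₀ + b) - y) + (y' - x') (c • (-(z₀ - b)) - y) := by
      rw [← map_add, harg, map_smul, smul_eq_mul]
    linarith
  set δ : ℝ := c * ε / 2 with hδ_def
  have hδ : 0 < δ := by positivity
  have hmain2 : ∀ w : E, ‖w‖ ≤ δ → ∀ y y', y' ∈ T (x + y) → ‖y‖ ≤ 1 →
      (y' - x') w ≤ n + (y' - x') y := by
    intro w hw y y' hy' hy1
    have hb : ‖c⁻¹ • w‖ < ε := by
      rw [norm_smul, Real.norm_eq_abs, abs_of_pos (inv_pos.2 hc)]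
      have h1 : c⁻¹ * ‖w‖ ≤ c⁻¹ * δ := by gcongr
      have h2 : c⁻¹ * δ = ε / 2 := by
        rw [hδ_def]; field_simp
      linarith
    have h := hmain _ hb y y' hy' hy1
    rw [smul_inv_smul₀ hc.ne'] at h
    rw [map_sub] at h
    linarith
  -- conclusion
  set r : ℝ := min (δ / 4) (1 / 2) with hr_def
  have hr : 0 < r := lt_min (by positivity) (by norm_num)
  refine ⟨Metric.ball x r, Metric.ball_mem_nhds x hr, ?_⟩
  have hRsub : (⋃ u ∈ Metric.ball x r, T u) ⊆
      Metric.closedBall 0 (‖x'‖ + 4 * n / δ) := by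
    intro y' hy'
    simp only [Set.mem_iUnion, exists_prop] at hy'
    obtain ⟨u, hu, hy'⟩ := hy'
    have hyu : u = x + (u - x) := by abel
    rw [hyu] at hy'
    set y := u - x with hy_def
    have hyr : ‖y‖ < r := by
      rw [hy_def, ← dist_eq_norm]
      exact Metric.mem_ball.1 hu
    have hy1 : ‖y‖ ≤ 1 := hyr.le.trans ((min_le_right _ _).trans (by norm_num))
    have hyδ : ‖y‖ ≤ δ / 4 := hyr.le.trans (min_le_left _ _)
    set f : StrongDual ℝ E := y' - x' with hf_def
    have hbound : ∀ w ∈ Metric.closedBall (0:E) δ, ‖f w‖ ≤ (n : ℝ) + ‖f‖ * (δ / 4) := by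
      intro w hw
      rw [Metric.mem_closedBall, dist_zero_right] at hw
      have h1 := hmain2 w hw y y' hy' hy1
      have h2 := hmain2 (-w) (by rwa [norm_neg]) y y' hy' hy1
      rw [map_neg] at h2
      have hfy : (y' - x') y ≤ ‖f‖ * (δ / 4) := by
        calc (y' - x') y ≤ ‖(y' - x') y‖ := le_abs_self _
          _ ≤ ‖f‖ * ‖y‖ := by rw [hf_def]; exact (y' - x').le_opNorm y
          _ ≤ ‖f‖ * (δ / 4) := by gcongr
      rw [Real.norm_eq_abs, abs_le]
      constructor
      · rw [hf_def]; linarith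
      · rw [hf_def]; linarith
    have hop : ‖f‖ ≤ ((n : ℝ) + ‖f‖ * (δ / 4)) / δ :=
      ContinuousLinearMap.opNorm_bound_of_ball_bound hδ _ f hbound
    have hop' : ‖f‖ * δ ≤ (n : ℝ) + ‖f‖ * (δ / 4) := (le_div_iff₀ hδ).1 hop
    have hfnorm : ‖f‖ ≤ 4 * n / δ := by
      rw [le_div_iff₀ hδ]
      have hn0 : (0:ℝ) ≤ (n : ℝ) := Nat.cast_nonneg _
      linarith
    rw [Metric.mem_closedBall, dist_zero_right]
    calc ‖y'‖ = ‖f + x'‖ := by rw [hf_def]; rw [sub_add_cancel]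
      _ ≤ ‖f‖ + ‖x'‖ := norm_add_le _ _
      _ ≤ ‖x'‖ + 4 * n / δ := by linarith
  exact Metric.isBounded_closedBall.subset hRsub
end

section
/- (Veselý) Let T : E → 2^{E*} be maximal monotone on a real Banach space E and suppose the closure of D(T) is convex. If x belongs to the closure of D(T) and T is locally bounded at x, then x ∈ int D(T). -/
open NormedSpace

open Filter Topology Metric Bornology Set

/-- Auxiliary: if `w` lies in the closure of the domain of a maximal monotone `T` and `T` is
bounded on a neighborhood of `w`, then `w` is in the domain of `T`. -/
lemma vesely_aux_mem_domain
    {E : Type*} [NormedAddCommGroup E] [NormedSpace ℝ E]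
    (T : E → Set (StrongDual ℝ E))
    (hmono : ∀ x y x' y', x' ∈ T x → y' ∈ T y → 0 ≤ (x' - y') (x - y))
    (hmax : ∀ x x', (∀ y y', y' ∈ T y → 0 ≤ (x' - y') (x - y)) → x' ∈ T x)
    {w : E} (hw : w ∈ closure {x | (T x).Nonempty})
    {U : Set E} (hU : U ∈ nhds w) {M : ℝ}
    (hM : ∀ u ∈ U, ∀ f ∈ T u, ‖f‖ ≤ M) : (T w).Nonempty := by
  obtain ⟨u, huD, hulim⟩ := mem_closure_iff_seq_limit.mp hw
  choose f hf using huD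
  have hev : ∀ᶠ n in atTop, u n ∈ U := hulim.eventually_mem hU
  have hevM : ∀ᶠ n in atTop, ‖f n‖ ≤ M := hev.mono fun n hn => hM _ hn _ (hf n)
  set seq : ℕ → WeakDual ℝ E := fun n => StrongDual.toWeakDual (f n) with hseq
  have hK : IsCompact (WeakDual.toStrongDual ⁻¹' Metric.closedBall (0 : StrongDual ℝ E) M) :=
    WeakDual.isCompact_closedBall (𝕜 := ℝ) (E := E) 0 M
  have hle : Filter.map seq Filter.atTop ≤
      𝓟 (WeakDual.toStrongDual ⁻¹' Metric.closedBall (0 : StrongDual ℝ E) M) := by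
    rw [Filter.le_principal_iff, Filter.mem_map]
    filter_upwards [hevM] with n hn
    simpa [seq, mem_closedBall_zero_iff] using hn
  obtain ⟨φ, hφmem, hφ⟩ := hK.exists_clusterPt hle
  refine ⟨WeakDual.toStrongDual φ, hmax w _ ?_⟩
  intro y y' hy'
  by_contra hneg
  push_neg at hneg
  set a : ℝ := (WeakDual.toStrongDual φ - y') (w - y) with ha
  have haneg : a < 0 := hneg
  have hφval : φ (w - y) - y' (w - y) = a := by
    simp [ha]
  have hO : {ψ : WeakDual ℝ E | ψ (w - y) - y' (w - y) < a / 2} ∈ 𝓝 φ := by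
    have hc : Continuous fun ψ : WeakDual ℝ E => ψ (w - y) - y' (w - y) :=
      (WeakDual.eval_continuous (w - y)).sub continuous_const
    have hmemO : φ (w - y) - y' (w - y) < a / 2 := by rw [hφval]; linarith
    exact (hc.isOpen_preimage _ isOpen_Iio).mem_nhds hmemO
  have hub : Tendsto (fun n => (M + ‖y'‖) * ‖w - u n‖) atTop (𝓝 0) := by
    have h1 : Tendsto (fun n => ‖w - u n‖) atTop (𝓝 0) := by
      have := (tendsto_iff_norm_sub_tendsto_zero).mp hulim
      simpa [norm_sub_rev] using this
    simpa using h1.const_mul (M + ‖y'‖)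
  have hcompl : {ψ : WeakDual ℝ E | ¬ (ψ (w - y) - y' (w - y) < a / 2)} ∈
      Filter.map seq Filter.atTop := by
    rw [Filter.mem_map]
    filter_upwards [hev, hevM, hub.eventually_lt_const (by linarith : (0:ℝ) < -a/2)]
      with n h1 h2 h3
    simp only [Set.mem_preimage, Set.mem_setOf_eq, not_lt]
    have hmono' := hmono (u n) y (f n) y' (hf n) hy'
    have hkey : (f n - y') (w - y) = (f n - y') (u n - y) + (f n - y') (w - u n) := by
      rw [← map_add]
      congr 1
      abel
    have hb : |(f n - y') (w - u n)| ≤ (M + ‖y'‖) * ‖w - u n‖ := by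
      calc |(f n - y') (w - u n)| ≤ ‖f n - y'‖ * ‖w - u n‖ := (f n - y').le_opNorm _
        _ ≤ (M + ‖y'‖) * ‖w - u n‖ := by
            gcongr
            exact (norm_sub_le _ _).trans (by linarith)
    have hb' : -((M + ‖y'‖) * ‖w - u n‖) ≤ (f n - y') (w - u n) := neg_le_of_abs_le hb
    have hseqval : seq n (w - y) - y' (w - y) = (f n - y') (w - y) := by
      simp [seq]
    rw [hseqval, hkey]
    linarith
  haveI := hφ.neBot
  obtain ⟨ψ, h1, h2⟩ := Filter.nonempty_of_mem
    (Filter.inter_mem (Filter.mem_inf_of_left hO) (Filter.mem_inf_of_right hcompl))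
  exact h2 h1

set_option maxHeartbeats 1000000 in
/-- Auxiliary Bishop–Phelps type result: if `C` is closed convex, `x ∈ C` and `z0 ∉ C`, there
is a support point `z` of `C` at distance at most `2‖z0 - x‖` from `x`. -/
lemma vesely_support_point
    {E : Type*} [NormedAddCommGroup E] [NormedSpace ℝ E] [CompleteSpace E]
    {C : Set E} (hC : Convex ℝ C) (hcl : IsClosed C) {x z0 : E}
    (hxC : x ∈ C) (hz0 : z0 ∉ C) :
    ∃ z ∈ C, ‖z - x‖ ≤ 2 * ‖z0 - x‖ ∧ ∃ g : StrongDual ℝ E, g ≠ 0 ∧ ∀ y ∈ C, g y ≤ g z := by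
  obtain ⟨f0, r, hfr, hrz⟩ := geometric_hahn_banach_closed_point hC hcl hz0
  have hf0x : f0 x < r := hfr x hxC
  have hnorm : 0 < ‖f0‖ := by
    rw [norm_pos_iff]
    intro h
    rw [h] at hf0x hrz
    simp at hf0x hrz
    linarith
  set κ : ℝ := ‖f0‖ / 2 with hκdef
  have hκpos : 0 < κ := by positivity
  have hκlt : κ < ‖f0‖ := by rw [hκdef]; linarith
  set S : E → Set E := fun w => {y ∈ C | κ * ‖y - w‖ ≤ f0 y - f0 w} with hSdef
  have hSelf : ∀ w ∈ C, w ∈ S w := fun w hw => ⟨hw, by simp⟩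
  have hSsubC : ∀ w, S w ⊆ C := fun w y hy => hy.1
  have hbdd : ∀ y ∈ C, f0 y ≤ r := fun y hy => (hfr y hy).le
  have key : ∀ (n : ℕ) (w : E), ∃ w', w ∈ C →
      (w' ∈ S w ∧ ∀ y ∈ S w, f0 y ≤ f0 w' + (1/2 : ℝ)^n) := by
    intro n w
    by_cases hw : w ∈ C
    · have hne : (f0 '' S w).Nonempty := ⟨f0 w, w, hSelf w hw, rfl⟩
      have hba : BddAbove (f0 '' S w) := ⟨r, by rintro _ ⟨y, hy, rfl⟩; exact hbdd y hy.1⟩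
      have hlt : sSup (f0 '' S w) - (1/2 : ℝ)^n < sSup (f0 '' S w) := by
        have : (0:ℝ) < (1/2 : ℝ)^n := by positivity
        linarith
      obtain ⟨_, ⟨w', hw', rfl⟩, hgt⟩ := exists_lt_of_lt_csSup hne hlt
      refine ⟨w', fun _ => ⟨hw', fun y hy => ?_⟩⟩
      have : f0 y ≤ sSup (f0 '' S w) := le_csSup hba ⟨y, hy, rfl⟩
      linarith
    · exact ⟨w, fun h => absurd h hw⟩
  choose step hstep using key
  set z : ℕ → E := fun n => Nat.rec x (fun n zn => step n zn) n with hzdef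
  have hzsucc : ∀ n, z (n + 1) = step n (z n) := fun n => rfl
  have hmem : ∀ n, z n ∈ C := by
    intro n
    induction n with
    | zero => exact hxC
    | succ n ih => exact ((hstep n (z n)) ih).1.1
  have hS1 : ∀ n, z (n + 1) ∈ S (z n) := fun n => (hstep n (z n) (hmem n)).1
  have hS2 : ∀ n, ∀ y ∈ S (z n), f0 y ≤ f0 (z (n + 1)) + (1/2 : ℝ)^n :=
    fun n => (hstep n (z n) (hmem n)).2
  have hrel : ∀ m n, m ≤ n → κ * ‖z n - z m‖ ≤ f0 (z n) - f0 (z m) := by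
    intro m n h
    induction n, h using Nat.le_induction with
    | base => simp
    | succ n hmn ih =>
      have h1 := (hS1 n).2
      have htri : ‖z (n+1) - z m‖ ≤ ‖z (n+1) - z n‖ + ‖z n - z m‖ :=
        norm_sub_le_norm_sub_add_norm_sub _ _ _
      have := mul_le_mul_of_nonneg_left htri hκpos.le
      nlinarith
  have hf0mono : Monotone fun n => f0 (z n) := by
    apply monotone_nat_of_le_succ
    intro n
    have h1 := (hS1 n).2
    nlinarith [norm_nonneg (z (n+1) - z n)]
  have hba : BddAbove (Set.range fun n => f0 (z n)) :=
    ⟨r, by rintro _ ⟨n, rfl⟩; exact hbdd _ (hmem n)⟩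
  have hf0tend : Tendsto (fun n => f0 (z n)) atTop (𝓝 (⨆ n, f0 (z n))) :=
    tendsto_atTop_ciSup hf0mono hba
  have hcau : CauchySeq z := by
    rw [Metric.cauchySeq_iff']
    intro ε hε
    obtain ⟨N, hN⟩ := (Metric.cauchySeq_iff'.mp hf0tend.cauchySeq) (κ * ε) (by positivity)
    refine ⟨N, fun n hn => ?_⟩
    have h1 := hrel N n hn
    have h2 := hN n hn
    rw [Real.dist_eq] at h2
    have h3 : f0 (z n) - f0 (z N) < κ * ε := lt_of_le_of_lt (le_abs_self _) h2
    have h4 : κ * ‖z n - z N‖ < κ * ε := by linarith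
    rw [dist_eq_norm]
    exact lt_of_mul_lt_mul_left h4 hκpos.le
  obtain ⟨ζ, hζ⟩ := cauchySeq_tendsto_of_complete hcau
  have hζC : ζ ∈ C := hcl.mem_of_tendsto hζ (Filter.Eventually.of_forall hmem)
  have hrelζ : ∀ m, κ * ‖ζ - z m‖ ≤ f0 ζ - f0 (z m) := by
    intro m
    have h1 : Tendsto (fun n => κ * ‖z n - z m‖) atTop (𝓝 (κ * ‖ζ - z m‖)) :=
      ((hζ.sub tendsto_const_nhds).norm).const_mul κ
    have h2 : Tendsto (fun n => f0 (z n) - f0 (z m)) atTop (𝓝 (f0 ζ - f0 (z m))) :=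
      ((f0.continuous.tendsto ζ).comp hζ).sub tendsto_const_nhds
    refine le_of_tendsto_of_tendsto h1 h2 ?_
    filter_upwards [eventually_ge_atTop m] with n hn
    exact hrel m n hn
  have hmaxζ : ∀ y ∈ C, κ * ‖y - ζ‖ ≤ f0 y - f0 ζ → y = ζ := by
    intro y hyC hyrel
    have hyS : ∀ m, y ∈ S (z m) := by
      intro m
      refine ⟨hyC, ?_⟩
      have h1 := hrelζ m
      have htri : ‖y - z m‖ ≤ ‖y - ζ‖ + ‖ζ - z m‖ := norm_sub_le_norm_sub_add_norm_sub _ _ _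
      have := mul_le_mul_of_nonneg_left htri hκpos.le
      nlinarith
    have hle2 : ∀ m : ℕ, f0 y ≤ f0 ζ + (1/2 : ℝ)^m := by
      intro m
      have h1 := hS2 m y (hyS m)
      have h2 := hrelζ (m + 1)
      nlinarith [norm_nonneg (ζ - z (m+1))]
    have hfyζ : f0 y ≤ f0 ζ := by
      have htend : Tendsto (fun m : ℕ => f0 ζ + (1/2 : ℝ)^m) atTop (𝓝 (f0 ζ)) := by
        have := tendsto_pow_atTop_nhds_zero_of_lt_one (by norm_num : (0:ℝ) ≤ 1/2)
          (by norm_num : (1/2 : ℝ) < 1)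
        simpa using tendsto_const_nhds.add this
      exact ge_of_tendsto htend (Filter.Eventually.of_forall hle2)
    have hn0 : ‖y - ζ‖ ≤ 0 := by nlinarith [norm_nonneg (y - ζ)]
    have : y - ζ = 0 := norm_le_zero_iff.mp hn0
    exact sub_eq_zero.mp this
  -- distance bound
  have hdist : ‖ζ - x‖ ≤ 2 * ‖z0 - x‖ := by
    have h1 := hrelζ 0
    have hz0' : z 0 = x := rfl
    rw [hz0'] at h1
    have h2 : f0 ζ - f0 x ≤ f0 z0 - f0 x := by
      have := hfr ζ hζC
      linarith
    have h3 : f0 z0 - f0 x ≤ ‖f0‖ * ‖z0 - x‖ := by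
      have := (f0.le_opNorm (z0 - x))
      have h4 : f0 z0 - f0 x = f0 (z0 - x) := by rw [map_sub]
      rw [h4]
      exact (le_abs_self _).trans this
    rw [hκdef] at h1
    nlinarith
  -- a direction strictly inside the cone
  have hvex : ∃ v : E, κ * ‖v‖ < f0 v := by
    by_contra h
    push_neg at h
    have : ‖f0‖ ≤ κ := by
      apply f0.opNorm_le_bound hκpos.le
      intro v
      rw [Real.norm_eq_abs, abs_le]
      constructor
      · have := h (-v)
        simp only [map_neg, norm_neg] at this
        linarith
      · exact h v
    linarith
  obtain ⟨v, hv⟩ := hvex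
  set O : Set E := {y | κ * ‖y - ζ‖ < f0 y - f0 ζ} with hOdef
  have hOopen : IsOpen O := by
    apply isOpen_lt
    · exact continuous_const.mul ((continuous_id.sub continuous_const).norm)
    · exact f0.continuous.sub continuous_const
  have hOconv : Convex ℝ O := by
    intro b hb c hc s t hs ht hst
    simp only [hOdef, Set.mem_setOf_eq] at hb hc ⊢
    have hcomb : (s • b + t • c) - ζ = s • (b - ζ) + t • (c - ζ) := by
      rw [smul_sub, smul_sub, ← sub_eq_zero]
      have h1 : s • b + t • c - ζ - (s • b - s • ζ + (t • c - t • ζ)) = (s + t - 1) • ζ := by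
        rw [sub_smul, add_smul, one_smul]
        abel
      rw [h1, show s + t - 1 = 0 by linarith, zero_smul]
    have htri : ‖(s • b + t • c) - ζ‖ ≤ s * ‖b - ζ‖ + t * ‖c - ζ‖ := by
      rw [hcomb]
      calc ‖s • (b - ζ) + t • (c - ζ)‖ ≤ ‖s • (b - ζ)‖ + ‖t • (c - ζ)‖ := norm_add_le _ _
        _ = s * ‖b - ζ‖ + t * ‖c - ζ‖ := by
            rw [norm_smul, norm_smul, Real.norm_of_nonneg hs, Real.norm_of_nonneg ht]
    have hf : f0 (s • b + t • c) - f0 ζ = s * (f0 b - f0 ζ) + t * (f0 c - f0 ζ) := by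
      simp only [map_add, map_smul, smul_eq_mul]
      linear_combination (f0 ζ) * hst
    rw [hf]
    have hmul := mul_le_mul_of_nonneg_left htri hκpos.le
    rcases hs.eq_or_lt with hs0 | hspos
    · have ht1 : t = 1 := by linarith
      rw [← hs0, ht1] at hmul ⊢
      nlinarith
    · have h1 : s * (κ * ‖b - ζ‖) < s * (f0 b - f0 ζ) := by
        exact mul_lt_mul_of_pos_left hb hspos
      have h2 : t * (κ * ‖c - ζ‖) ≤ t * (f0 c - f0 ζ) := mul_le_mul_of_nonneg_left hc.le ht
      nlinarith
  have hOmem : ∀ t : ℝ, 0 < t → ζ + t • v ∈ O := by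
    intro t htpos
    simp only [hOdef, Set.mem_setOf_eq, add_sub_cancel_left, map_add, map_smul, smul_eq_mul]
    rw [norm_smul, Real.norm_of_nonneg htpos.le]
    have := mul_lt_mul_of_pos_left hv htpos
    nlinarith
  have hdisj : Disjoint O C := by
    rw [Set.disjoint_left]
    intro y hyO hyC
    have heq := hmaxζ y hyC (le_of_lt hyO)
    rw [heq] at hyO
    have hlt : κ * ‖ζ - ζ‖ < f0 ζ - f0 ζ := hyO
    rw [sub_self, sub_self, norm_zero, mul_zero] at hlt
    exact lt_irrefl 0 hlt
  obtain ⟨g, ρ, hg1, hg2⟩ := geometric_hahn_banach_open hOconv hOopen hC hdisj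
  have hgζge : ρ ≤ g ζ := hg2 ζ hζC
  have hgζle : g ζ ≤ ρ := by
    have htend : Tendsto (fun t : ℝ => g (ζ + t • v)) (𝓝[>] 0) (𝓝 (g ζ)) := by
      have hc : Continuous fun t : ℝ => g (ζ + t • v) := by fun_prop
      have := hc.tendsto 0
      simp only [zero_smul, add_zero] at this
      exact this.mono_left nhdsWithin_le_nhds
    refine le_of_tendsto htend ?_
    filter_upwards [self_mem_nhdsWithin] with t ht
    exact (hg1 _ (hOmem t ht)).le
  have hgval : g ζ = ρ := le_antisymm hgζle hgζge
  have hgne : g ≠ 0 := by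
    intro h
    have h1 := hg1 (ζ + (1:ℝ) • v) (hOmem 1 one_pos)
    have h2 := hg2 ζ hζC
    rw [h] at h1 h2
    simp at h1 h2
    linarith
  refine ⟨ζ, hζC, hdist, -g, neg_ne_zero.mpr hgne, fun y hy => ?_⟩
  simp only [ContinuousLinearMap.neg_apply, neg_le_neg_iff]
  rw [hgval]
  exact hg2 y hy

/-- **Veselý.** Let `T` be maximal monotone on a real Banach space `E` with `closure D(T)`
convex.  If `x ∈ closure D(T)` and `T` is locally bounded at `x`, then `x ∈ int D(T)`. -/
theorem vesely_interior_of_locally_bounded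
    {E : Type*} [NormedAddCommGroup E] [NormedSpace ℝ E] [CompleteSpace E]
    (T : E → Set (StrongDual ℝ E))
    (hmono : ∀ x y x' y', x' ∈ T x → y' ∈ T y → 0 ≤ (x' - y') (x - y))
    (hmax : ∀ x x', (∀ y y', y' ∈ T y → 0 ≤ (x' - y') (x - y)) → x' ∈ T x)
    (hconv : Convex ℝ (closure {x | (T x).Nonempty}))
    (x : E) (hx : x ∈ closure {x | (T x).Nonempty})
    (hlb : ∃ U ∈ nhds x, Bornology.IsBounded (⋃ u ∈ U, T u)) :
    x ∈ interior {x | (T x).Nonempty} := by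
  classical
  obtain ⟨U, hU, hbdd⟩ := hlb
  obtain ⟨M, hMsub⟩ := hbdd.subset_closedBall 0
  have hM : ∀ u ∈ U, ∀ f ∈ T u, ‖f‖ ≤ M := by
    intro u hu f hfT
    have : f ∈ ⋃ u ∈ U, T u := Set.mem_biUnion hu hfT
    have := hMsub this
    rwa [mem_closedBall_zero_iff] at this
  obtain ⟨ε, hεpos, hball⟩ := Metric.mem_nhds_iff.mp hU
  set D : Set E := {x | (T x).Nonempty} with hD
  set C : Set E := closure D with hCdef
  have hCclosed : IsClosed C := isClosed_closure
  have hMball : ∀ u ∈ Metric.ball x ε, ∀ f ∈ T u, ‖f‖ ≤ M :=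
    fun u hu f hf => hM u (hball hu) f hf
  have claimA : ∀ w ∈ Metric.ball x ε, w ∈ C → (T w).Nonempty := by
    intro w hw hwC
    exact vesely_aux_mem_domain T hmono hmax hwC
      (Metric.isOpen_ball.mem_nhds hw) hMball
  have claimB : Metric.ball x (ε / 4) ⊆ C := by
    intro z0 hz0ball
    by_contra hz0
    obtain ⟨z, hzC, hzdist, g, hgne, hgsupp⟩ :=
      vesely_support_point hconv hCclosed hx hz0
    have hzball : z ∈ Metric.ball x ε := by
      rw [Metric.mem_ball, dist_eq_norm]
      rw [Metric.mem_ball, dist_eq_norm] at hz0ball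
      calc ‖z - x‖ ≤ 2 * ‖z0 - x‖ := hzdist
        _ < 2 * (ε / 4) := by linarith
        _ < ε := by linarith
    obtain ⟨z', hz'⟩ := claimA z hzball hzC
    have hgnorm : 0 < ‖g‖ := norm_pos_iff.mpr hgne
    set t : ℝ := (M + ‖z'‖ + 1) / ‖g‖ with htdef
    have hM0 : 0 ≤ M := le_trans (norm_nonneg z') (hMball z hzball z' hz')
    have htpos : 0 < t := by positivity
    have hray : z' + t • g ∈ T z := by
      apply hmax
      intro y y' hy'
      have h1 := hmono z y z' y' hz' hy'
      have h2 : g y ≤ g z := hgsupp y (subset_closure (show y ∈ D from ⟨y', hy'⟩))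
      have hexp : (z' + t • g - y') (z - y) = (z' - y') (z - y) + t * (g z - g y) := by
        simp only [ContinuousLinearMap.sub_apply, ContinuousLinearMap.add_apply,
          ContinuousLinearMap.smul_apply, smul_eq_mul, map_sub]
        ring
      rw [hexp]
      nlinarith
    have hle := hMball z hzball _ hray
    have hge : t * ‖g‖ - ‖z'‖ ≤ ‖z' + t • g‖ := by
      have h1 : ‖t • g‖ - ‖z'‖ ≤ ‖z' + t • g‖ := by
        have h0 : t • g = (z' + t • g) + (-z') := by abel
        have h2 : ‖t • g‖ ≤ ‖z' + t • g‖ + ‖z'‖ := by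
          rw [h0]
          simpa using norm_add_le (z' + t • g) (-z')
        linarith
      rw [norm_smul, Real.norm_of_nonneg htpos.le] at h1
      exact h1
    have htval : t * ‖g‖ = M + ‖z'‖ + 1 := by
      rw [htdef, div_mul_cancel₀]
      exact ne_of_gt hgnorm
    rw [htval] at hge
    linarith
  rw [mem_interior]
  refine ⟨Metric.ball x (ε / 4), ?_, Metric.isOpen_ball, Metric.mem_ball_self (by linarith)⟩
  intro w hw
  exact claimA w (Metric.ball_subset_ball (by linarith) hw) (claimB hw)
end

section
/- (Brøndsted–Rockafellar) Let f be a proper lower semicontinuous convex function on a real Banach space E. Given x₀ ∈ dom(f), ε > 0, λ > 0 and x₀* ∈ ∂_ε f(x₀), there exist x ∈ dom(f) and x* ∈ E* such that x* ∈ ∂f(x), ‖x − x₀‖ ≤ ε/λ and ‖x* − x₀*‖ ≤ λ. In particular D(∂f) is dense in dom(f), so the closures of D(∂f) and of dom(f) coincide and are convex. -/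
set_option maxHeartbeats 1000000
open NormedSpace Filter Pointwise

lemma lsc_le_cont_closed {α : Type*} [TopologicalSpace α] {f : α → EReal}
    (hlsc : LowerSemicontinuous f) {c : α → ℝ} (hc : Continuous c) :
    IsClosed {y | f y ≤ (c y : EReal)} := by
  rw [← isOpen_compl_iff, isOpen_iff_mem_nhds]
  intro y₀ hy₀
  simp only [Set.mem_compl_iff, Set.mem_setOf_eq, not_le] at hy₀
  obtain ⟨r, hr1, hr2⟩ := EReal.exists_between_coe_real hy₀
  have h1 : ∀ᶠ y in nhds y₀, (r : EReal) < f y := hlsc y₀ _ hr2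
  have h2 : ∀ᶠ y in nhds y₀, c y < r :=
    (hc.continuousAt (x := y₀)).eventually_lt continuousAt_const (EReal.coe_lt_coe_iff.1 hr1)
  filter_upwards [h1, h2] with y hy1 hy2
  simp only [Set.mem_compl_iff, Set.mem_setOf_eq, not_le]
  exact lt_trans (EReal.coe_lt_coe_iff.2 hy2) hy1

lemma br_exists {E : Type*} [NormedAddCommGroup E] [NormedSpace ℝ E] [CompleteSpace E]
    (f : E → EReal) (hbot : ∀ x, f x ≠ ⊥)
    (hlsc : LowerSemicontinuous f)
    (hconv : ∀ x y : E, ∀ a b : ℝ, 0 ≤ a → 0 ≤ b → a + b = 1 →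
      f (a • x + b • y) ≤ (a : EReal) * f x + (b : EReal) * f y)
    (x₀ : E) (hx₀ : f x₀ ≠ ⊤) (ε lam : ℝ) (hε : 0 < ε) (hlam : 0 < lam)
    (x₀' : StrongDual ℝ E)
    (hx₀' : ∀ y, ((x₀' (y - x₀) : ℝ) : EReal) + f x₀ ≤ f y + (ε : EReal)) :
    ∃ (x : E) (x' : StrongDual ℝ E), f x ≠ ⊤ ∧
      (∀ y, ((x' (y - x) : ℝ) : EReal) + f x ≤ f y) ∧
      ‖x - x₀‖ ≤ ε / lam ∧ ‖x' - x₀'‖ ≤ lam := by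
  classical
  set G : E → ℝ := fun y => (f y).toReal - x₀' y with hG
  set S : E → Set E := fun z => {y | f y ≤ ((G z + x₀' y - lam * ‖y - z‖ : ℝ) : EReal)} with hS
  have hcoe : ∀ y, f y ≠ ⊤ → f y = (((f y).toReal : ℝ) : EReal) :=
    fun y hy => (EReal.coe_toReal hy (hbot y)).symm
  have hSdom : ∀ z y, y ∈ S z → f y ≠ ⊤ := by
    intro z y hy
    exact (lt_of_le_of_lt hy (EReal.coe_lt_top _)).ne
  have hSreal : ∀ z y, y ∈ S z → G y + lam * ‖y - z‖ ≤ G z := by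
    intro z y hy
    have hyt := hSdom z y hy
    rw [Set.mem_setOf_eq, hcoe y hyt, EReal.coe_le_coe_iff] at hy
    simp only [hG] at *
    linarith
  have hSreal' : ∀ z y, f y ≠ ⊤ → G y + lam * ‖y - z‖ ≤ G z → y ∈ S z := by
    intro z y hyt h
    show f y ≤ _
    rw [hcoe y hyt, EReal.coe_le_coe_iff]
    simp only [hG] at h ⊢
    linarith
  have hSself : ∀ z, f z ≠ ⊤ → z ∈ S z := fun z hz => hSreal' z z hz (by simp)
  have hStrans : ∀ z y w, y ∈ S z → w ∈ S y → w ∈ S z := by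
    intro z y w hy hw
    refine hSreal' _ _ (hSdom _ _ hw) ?_
    have h1 := hSreal _ _ hy
    have h2 := hSreal _ _ hw
    have htri : ‖w - z‖ ≤ ‖w - y‖ + ‖y - z‖ := norm_sub_le_norm_sub_add_norm_sub w y z
    nlinarith [mul_le_mul_of_nonneg_left htri hlam.le]
  have hSclosed : ∀ z, IsClosed (S z) := by
    intro z
    exact lsc_le_cont_closed hlsc
      ((continuous_const.add x₀'.continuous).sub
        (continuous_const.mul ((continuous_id.sub continuous_const).norm)))
  have hlow : ∀ y, f y ≠ ⊤ → G x₀ - ε ≤ G y := by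
    intro y hyt
    have h := hx₀' y
    rw [hcoe y hyt, hcoe x₀ hx₀, ← EReal.coe_add, ← EReal.coe_add, EReal.coe_le_coe_iff,
      map_sub] at h
    simp only [hG]
    linarith
  set μ : E → ℝ := fun z => sInf (G '' S z) with hμ
  have hbdd : ∀ z, BddBelow (G '' S z) := by
    rintro z
    refine ⟨G x₀ - ε, ?_⟩
    rintro t ⟨y, hy, rfl⟩
    exact hlow y (hSdom _ _ hy)
  have hμlb : ∀ z y, y ∈ S z → μ z ≤ G y := fun z y hy => csInf_le (hbdd z) ⟨y, hy, rfl⟩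
  have hex : ∀ (n : ℕ) (z : {z : E // f z ≠ ⊤}),
      ∃ y : {z : E // f z ≠ ⊤}, y.1 ∈ S z.1 ∧ G y.1 < μ z.1 + (1/2)^n := by
    intro n z
    have hne : (G '' S z.1).Nonempty := ⟨G z.1, z.1, hSself z.1 z.2, rfl⟩
    have hlt : sInf (G '' S z.1) < μ z.1 + (1/2)^n := lt_add_of_pos_right _ (by positivity)
    obtain ⟨t, ⟨y, hy, rfl⟩, hty⟩ := exists_lt_of_csInf_lt hne hlt
    exact ⟨⟨y, hSdom _ _ hy⟩, hy, hty⟩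
  choose nxt hnxt1 hnxt2 using hex
  set seq : ℕ → {z : E // f z ≠ ⊤} :=
    fun n => Nat.rec ⟨x₀, hx₀⟩ (fun k ih => nxt k ih) n with hseq
  have hseq0 : (seq 0).1 = x₀ := rfl
  have hmem : ∀ n, (seq (n+1)).1 ∈ S (seq n).1 := fun n => hnxt1 n (seq n)
  have hGlt : ∀ n, G (seq (n+1)).1 < μ (seq n).1 + (1/2)^n := fun n => hnxt2 n (seq n)
  have hchain : ∀ n m, n ≤ m → (seq m).1 ∈ S (seq n).1 := by
    intro n m h
    induction h with
    | refl => exact hSself _ (seq n).2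
    | @step k hk ih =>
      exact hStrans _ _ _ ih (hmem k)
  have hkey : ∀ n, ∀ y, y ∈ S (seq (n+1)).1 → lam * ‖y - (seq (n+1)).1‖ ≤ (1/2)^n := by
    intro n y hy
    have h1 := hSreal _ _ hy
    have h2 : y ∈ S (seq n).1 := hStrans _ _ _ (hmem n) hy
    have h3 : μ (seq n).1 ≤ G y := hμlb _ _ h2
    have h4 := hGlt n
    simp only [hG, hμ] at *
    linarith
  set C : ℝ := max (ε/lam) (2/lam) with hC
  have hcauchy : CauchySeq (fun n => (seq n).1) := by
    refine cauchySeq_of_le_geometric (1/2) C (by norm_num) ?_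
    intro n
    rw [dist_eq_norm, norm_sub_rev]
    match n with
    | 0 =>
      have h1 := hSreal _ _ (hmem 0)
      norm_num [hseq0] at h1
      have h2 : G x₀ - ε ≤ G (seq 1).1 := hlow _ (seq 1).2
      have h3 : lam * ‖(seq 1).1 - x₀‖ ≤ ε := by linarith
      rw [hseq0]
      calc ‖(seq 1).1 - x₀‖ ≤ ε / lam := by rw [le_div_iff₀ hlam]; linarith
        _ ≤ C * (1/2)^0 := by simp [hC, le_max_left]
    | (n+1) =>
      have h1 := hkey n _ (hmem (n+1))
      have h2 : ‖(seq (n+2)).1 - (seq (n+1)).1‖ ≤ (2/lam) * (1/2)^(n+1) := by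
        have hr : (2/lam) * ((1:ℝ)/2)^(n+1) = (1/2)^n / lam := by
          field_simp
          ring
        rw [hr, le_div_iff₀ hlam]
        linarith
      calc ‖(seq (n+2)).1 - (seq (n+1)).1‖ ≤ (2/lam) * (1/2)^(n+1) := h2
        _ ≤ C * (1/2)^(n+1) := by
          have : (0:ℝ) ≤ (1/2)^(n+1) := by positivity
          exact mul_le_mul_of_nonneg_right (le_max_right _ _) this
  obtain ⟨x, hxlim⟩ := cauchySeq_tendsto_of_complete hcauchy
  have hxS : ∀ n, x ∈ S (seq n).1 := by
    intro n
    refine (hSclosed _).mem_of_tendsto hxlim ?_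
    exact Filter.eventually_atTop.2 ⟨n, fun m hm => hchain n m hm⟩
  have hxdom : f x ≠ ⊤ := hSdom _ _ (hxS 0)
  have hdistx : ‖x - x₀‖ ≤ ε / lam := by
    have h1 := hSreal _ _ (hxS 0)
    rw [hseq0] at h1
    have h2 := hlow x hxdom
    rw [le_div_iff₀ hlam]
    linarith
  have hmin : ∀ y, y ∈ S x → y = x := by
    intro y hy
    have h1 : ∀ n, lam * ‖y - (seq (n+1)).1‖ ≤ (1/2)^n :=
      fun n => hkey n y (hStrans _ _ _ (hxS (n+1)) hy)
    have h2 : Filter.Tendsto (fun n => (seq (n+1)).1) Filter.atTop (nhds x) :=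
      hxlim.comp (Filter.tendsto_add_atTop_nat 1)
    have h3 : Filter.Tendsto (fun n => lam * ‖y - (seq (n+1)).1‖) Filter.atTop
        (nhds (lam * ‖y - x‖)) := ((tendsto_const_nhds.sub h2).norm).const_mul lam
    have h4 : Filter.Tendsto (fun n : ℕ => ((1:ℝ)/2)^n) Filter.atTop (nhds 0) :=
      tendsto_pow_atTop_nhds_zero_of_lt_one (by norm_num) (by norm_num)
    have h5 : lam * ‖y - x‖ ≤ 0 := le_of_tendsto_of_tendsto' h3 h4 h1
    have h6 : ‖y - x‖ = 0 := by nlinarith [norm_nonneg (y - x)]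
    exact sub_eq_zero.1 (norm_eq_zero.1 h6)
  -- the star property: x is a minimum of f(y) - x₀'(y) + lam‖y - x‖
  have hstar : ∀ w, f (x + w) ≠ ⊤ →
      (f x).toReal + x₀' w - lam * ‖w‖ ≤ (f (x + w)).toReal := by
    intro w hw
    by_cases hw0 : x + w = x
    · have hw' : w = 0 := by
        have h := hw0
        rwa [add_eq_left] at h
      subst hw'
      simp
    · have hxw : x + w ∈ S x → x + w = x := hmin _
      have : ¬ (x + w ∈ S x) := fun h => hw0 (hxw h)
      simp only [hS, Set.mem_setOf_eq, not_le] at this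
      rw [hcoe _ hw] at this
      rw [EReal.coe_lt_coe_iff] at this
      simp only [hG] at this
      have hn : ‖x + w - x‖ = ‖w‖ := by rw [add_sub_cancel_left]
      have hl : x₀' (x + w) = x₀' x + x₀' w := map_add _ _ _
      rw [hn, hl] at this
      linarith
  set r : ℝ := (f x).toReal with hr
  set A : E → Set ℝ := fun v => {t | ∃ w, f (x + w) ≠ ⊤ ∧
    t = lam * ‖v - w‖ + ((f (x + w)).toReal - r - x₀' w)} with hA
  have hA0 : ∀ v, lam * ‖v‖ ∈ A v := by
    intro v
    refine ⟨0, by simpa using hxdom, ?_⟩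
    simp [hr]
  have hAlb : ∀ v, ∀ t ∈ A v, -(lam * ‖v‖) ≤ t := by
    rintro v t ⟨w, hw, rfl⟩
    have h1 := hstar w hw
    have h2 : ‖w‖ ≤ ‖v - w‖ + ‖v‖ := by
      calc ‖w‖ = ‖(w - v) + v‖ := by rw [sub_add_cancel]
        _ ≤ ‖w - v‖ + ‖v‖ := norm_add_le _ _
        _ = ‖v - w‖ + ‖v‖ := by rw [norm_sub_rev]
    nlinarith [mul_le_mul_of_nonneg_left h2 hlam.le]
  have hAne : ∀ v, (A v).Nonempty := fun v => ⟨_, hA0 v⟩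
  have hAbdd : ∀ v, BddBelow (A v) := fun v => ⟨-(lam * ‖v‖), fun t ht => hAlb v t ht⟩
  set p : E → ℝ := fun v => sInf (A v) with hp
  have hple : ∀ v, p v ≤ lam * ‖v‖ := fun v => csInf_le (hAbdd v) (hA0 v)
  have hpge : ∀ v, -(lam * ‖v‖) ≤ p v := fun v => le_csInf (hAne v) (hAlb v)
  have hp0 : p 0 = 0 := le_antisymm (by simpa using hple 0) (by simpa using hpge 0)
  have hpq : ∀ w, f (x + w) ≠ ⊤ → p w ≤ (f (x + w)).toReal - r - x₀' w := by
    intro w hw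
    refine csInf_le (hAbdd w) ⟨w, hw, ?_⟩
    simp
  -- convexity of p
  have hpconv : ∀ v w : E, ∀ a b : ℝ, 0 < a → 0 < b → a + b = 1 →
      p (a • v + b • w) ≤ a * p v + b * p w := by
    intro v w a b ha hb hab
    refine le_of_forall_pos_le_add ?_
    intro δ hδ
    obtain ⟨ta, htaA, htalt⟩ := exists_lt_of_csInf_lt (hAne v)
      (lt_add_of_pos_right (p v) (show (0:ℝ) < δ/(2*a) by positivity))
    obtain ⟨tb, htbA, htblt⟩ := exists_lt_of_csInf_lt (hAne w)
      (lt_add_of_pos_right (p w) (show (0:ℝ) < δ/(2*b) by positivity))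
    obtain ⟨wa, hwa, rfl⟩ := htaA
    obtain ⟨wb, hwb, rfl⟩ := htbA
    set w' : E := a • wa + b • wb with hw'
    have hsplit : x + w' = a • (x + wa) + b • (x + wb) := by
      have : a • (x + wa) + b • (x + wb) = (a + b) • x + (a • wa + b • wb) := by module
      rw [this, hab, one_smul]
    have hfw' : f (x + w') ≤ (((a * (f (x + wa)).toReal + b * (f (x + wb)).toReal : ℝ)) : EReal) := by
      rw [hsplit]
      calc f (a • (x + wa) + b • (x + wb)) ≤
          (a : EReal) * f (x + wa) + (b : EReal) * f (x + wb) :=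
            hconv _ _ a b ha.le hb.le hab
        _ = (((a * (f (x + wa)).toReal + b * (f (x + wb)).toReal : ℝ)) : EReal) := by
            rw [hcoe _ hwa, hcoe _ hwb, ← EReal.coe_mul, ← EReal.coe_mul, ← EReal.coe_add]
            simp [EReal.toReal_coe]
    have hw'dom : f (x + w') ≠ ⊤ := (lt_of_le_of_lt hfw' (EReal.coe_lt_top _)).ne
    have hw'real : (f (x + w')).toReal ≤ a * (f (x + wa)).toReal + b * (f (x + wb)).toReal := by
      rw [hcoe _ hw'dom, EReal.coe_le_coe_iff] at hfw'
      exact hfw'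
    have helem : lam * ‖(a • v + b • w) - w'‖ + ((f (x + w')).toReal - r - x₀' w') ∈
        A (a • v + b • w) := ⟨w', hw'dom, rfl⟩
    have h1 := csInf_le (hAbdd _) helem
    have hnorm : ‖(a • v + b • w) - w'‖ ≤ a * ‖v - wa‖ + b * ‖w - wb‖ := by
      have he : (a • v + b • w) - w' = a • (v - wa) + b • (w - wb) := by
        rw [hw']; module
      rw [he]
      refine (norm_add_le _ _).trans ?_
      rw [norm_smul, norm_smul, Real.norm_eq_abs, Real.norm_eq_abs,
        abs_of_pos ha, abs_of_pos hb]
    have hx₀'w' : x₀' w' = a * x₀' wa + b * x₀' wb := by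
      rw [hw', map_add, map_smul, map_smul]
      simp
    have hr' : r = a * r + b * r := by rw [← add_mul, hab, one_mul]
    have hmul : lam * ‖(a • v + b • w) - w'‖ ≤ a * (lam * ‖v - wa‖) + b * (lam * ‖w - wb‖) := by
      nlinarith [mul_le_mul_of_nonneg_left hnorm hlam.le]
    have hda : a * (δ/(2*a)) = δ/2 := by field_simp
    have hdb : b * (δ/(2*b)) = δ/2 := by field_simp
    have h2 : a * (lam * ‖v - wa‖ + ((f (x + wa)).toReal - r - x₀' wa)) ≤
        a * (p v + δ/(2*a)) := mul_le_mul_of_nonneg_left htalt.le ha.le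
    have h3 : b * (lam * ‖w - wb‖ + ((f (x + wb)).toReal - r - x₀' wb)) ≤
        b * (p w + δ/(2*b)) := mul_le_mul_of_nonneg_left htblt.le hb.le
    rw [mul_add a (p v) (δ/(2*a)), hda] at h2
    rw [mul_add b (p w) (δ/(2*b)), hdb] at h3
    calc p (a • v + b • w) ≤
        lam * ‖(a • v + b • w) - w'‖ + ((f (x + w')).toReal - r - x₀' w') := h1
      _ ≤ a * (lam * ‖v - wa‖ + ((f (x + wa)).toReal - r - x₀' wa)) +
          b * (lam * ‖w - wb‖ + ((f (x + wb)).toReal - r - x₀' wb)) := by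
            rw [hx₀'w']
            linarith [hw'real, hmul, hr']
      _ ≤ (a * p v + b * p w) + δ := by linarith
  -- monotonicity of t ↦ p (t • v) / t
  have hmono : ∀ v : E, ∀ t s : ℝ, 0 < t → t ≤ s → p (t • v) / t ≤ p (s • v) / s := by
    intro v t s ht hts
    have hs : 0 < s := lt_of_lt_of_le ht hts
    rcases eq_or_lt_of_le hts with h | h
    · subst h; exact le_rfl
    · have h1 : p (t • v) ≤ (t/s) * p (s • v) + (1 - t/s) * p 0 := by
        have hc := hpconv (s • v) 0 (t/s) (1 - t/s) (by positivity)
          (by rw [sub_pos]; exact (div_lt_one hs).2 h) (by ring)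
        have he : (t/s) • (s • v) + (1 - t/s) • (0:E) = t • v := by
          rw [smul_zero, add_zero, smul_smul, div_mul_cancel₀ _ hs.ne']
        rwa [he] at hc
      rw [hp0, mul_zero, add_zero] at h1
      rw [div_le_div_iff₀ ht hs]
      calc p (t • v) * s ≤ ((t/s) * p (s • v)) * s := mul_le_mul_of_nonneg_right h1 hs.le
        _ = p (s • v) * t := by field_simp
  set B : E → Set ℝ := fun v => {u | ∃ t : ℝ, 0 < t ∧ u = p (t • v) / t} with hB
  have hBne : ∀ v, (B v).Nonempty := fun v => ⟨p v, 1, one_pos, by rw [one_smul, div_one]⟩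
  have hBlb : ∀ v, ∀ u ∈ B v, -(lam * ‖v‖) ≤ u := by
    rintro v u ⟨t, ht, rfl⟩
    have h1 := hpge (t • v)
    have h2 : ‖t • v‖ = t * ‖v‖ := by
      rw [norm_smul, Real.norm_eq_abs, abs_of_pos ht]
    rw [le_div_iff₀ ht]
    rw [h2] at h1
    nlinarith
  have hBbdd : ∀ v, BddBelow (B v) := fun v => ⟨-(lam * ‖v‖), fun u hu => hBlb v u hu⟩
  set N : E → ℝ := fun v => sInf (B v) with hN
  have hNlep : ∀ v, N v ≤ p v := fun v => csInf_le (hBbdd v) ⟨1, one_pos, by rw [one_smul, div_one]⟩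
  have hN0 : N 0 = 0 := by
    refine le_antisymm (by simpa [hp0] using hNlep 0) ?_
    have := le_csInf (hBne 0) (hBlb 0)
    simpa using this
  have hNhom : ∀ c : ℝ, 0 < c → ∀ v, N (c • v) = c * N v := by
    intro c hc v
    have hBeq : B (c • v) = (fun u => c * u) '' B v := by
      ext u
      constructor
      · rintro ⟨t, ht, rfl⟩
        refine ⟨p ((t * c) • v) / (t * c), ⟨t * c, by positivity, rfl⟩, ?_⟩
        rw [smul_smul, mul_comm t c]
        field_simp
      · rintro ⟨u', ⟨t, ht, rfl⟩, rfl⟩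
        refine ⟨t / c, by positivity, ?_⟩
        rw [smul_smul, div_mul_cancel₀ _ hc.ne']
        field_simp
    have himg : (fun u => c * u) '' B v = c • B v := by
      ext u
      simp [Set.mem_smul_set, smul_eq_mul]
    rw [hN]
    simp only []
    rw [hBeq, himg, Real.sInf_smul_of_nonneg hc.le, smul_eq_mul]
  have hNadd : ∀ v w : E, N (v + w) ≤ N v + N w := by
    intro v w
    have key : ∀ u₁ ∈ B v, ∀ u₂ ∈ B w, N (v + w) ≤ u₁ + u₂ := by
      rintro _ ⟨s, hs, rfl⟩ _ ⟨t, ht, rfl⟩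
      set m := min s t with hm
      have hmpos : 0 < m := lt_min hs ht
      have h1 : N (v + w) ≤ p ((m/2) • (v + w)) / (m/2) :=
        csInf_le (hBbdd _) ⟨m/2, by positivity, rfl⟩
      have h2 : p ((m/2) • (v + w)) ≤ (1/2) * p (m • v) + (1/2) * p (m • w) := by
        have hc := hpconv (m • v) (m • w) (1/2) (1/2) (by norm_num) (by norm_num) (by norm_num)
        have he : (1/2 : ℝ) • (m • v) + (1/2 : ℝ) • (m • w) = (m/2) • (v + w) := by
          module
        rwa [he] at hc
      have h3 : p (m • v) / m ≤ p (s • v) / s := hmono v m s hmpos (min_le_left s t)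
      have h4 : p (m • w) / m ≤ p (t • w) / t := hmono w m t hmpos (min_le_right s t)
      have h6 : p ((m/2) • (v + w)) / (m/2) ≤ p (m • v) / m + p (m • w) / m := by
        rw [div_le_iff₀ (by positivity : (0:ℝ) < m/2)]
        have hcalc : (p (m • v) / m + p (m • w) / m) * (m/2) =
            (1/2) * p (m • v) + (1/2) * p (m • w) := by
          field_simp
        linarith [h2, hcalc]
      linarith
    have step1 : ∀ u₁ ∈ B v, N (v + w) - u₁ ≤ N w := by
      intro u₁ hu₁
      refine le_csInf (hBne w) ?_
      intro u₂ hu₂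
      linarith [key u₁ hu₁ u₂ hu₂]
    have step2 : N (v + w) - N w ≤ N v := by
      refine le_csInf (hBne v) ?_
      intro u₁ hu₁
      linarith [step1 u₁ hu₁]
    linarith
  -- Hahn–Banach extension from the zero subspace
  obtain ⟨g, hg1, hg2⟩ := exists_extension_of_le_sublinear ⟨⊥, 0⟩ N hNhom hNadd (by
    rintro ⟨z, hz⟩
    have hz0 : z = 0 := (Submodule.mem_bot ℝ).1 hz
    subst hz0
    simp [hN0])
  have hgle : ∀ v, g v ≤ p v := fun v => (hg2 v).trans (hNlep v)
  have hgnorm : ∀ v, ‖g v‖ ≤ lam * ‖v‖ := by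
    intro v
    rw [Real.norm_eq_abs, abs_le]
    constructor
    · have h1 := (hgle (-v)).trans (hple (-v))
      rw [map_neg, norm_neg] at h1
      linarith
    · exact (hgle v).trans (hple v)
  set ℓ : E →L[ℝ] ℝ := LinearMap.mkContinuous g lam hgnorm with hℓ
  have hℓnorm : ‖ℓ‖ ≤ lam := LinearMap.mkContinuous_norm_le g hlam.le hgnorm
  refine ⟨x, x₀' + ℓ, hxdom, ?_, hdistx, ?_⟩
  · intro y
    by_cases hy : f y = ⊤
    · rw [hy]
      exact le_top
    · rw [hcoe y hy, hcoe x hxdom, ← EReal.coe_add, EReal.coe_le_coe_iff]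
      have hxy : x + (y - x) = y := by abel
      have h1 := (hgle (y - x)).trans (hpq (y - x) (by rw [hxy]; exact hy))
      rw [hxy] at h1
      have h2 : (x₀' + ℓ) (y - x) = x₀' (y - x) + g (y - x) := rfl
      rw [h2, ← hr]
      linarith
  · have : x₀' + ℓ - x₀' = ℓ := by abel
    rw [this]
    exact hℓnorm

lemma exists_eps_subgrad {E : Type*} [NormedAddCommGroup E] [NormedSpace ℝ E]
    (f : E → EReal) (hbot : ∀ x, f x ≠ ⊥)
    (hlsc : LowerSemicontinuous f)
    (hconv : ∀ x y : E, ∀ a b : ℝ, 0 ≤ a → 0 ≤ b → a + b = 1 →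
      f (a • x + b • y) ≤ (a : EReal) * f x + (b : EReal) * f y)
    (x : E) (hx : f x ≠ ⊤) (ε : ℝ) (hε : 0 < ε) :
    ∃ x' : StrongDual ℝ E, ∀ y, ((x' (y - x) : ℝ) : EReal) + f x ≤ f y + (ε : EReal) := by
  classical
  set epi : Set (E × ℝ) := {p | f p.1 ≤ (p.2 : EReal)} with hepi
  have hclosed : IsClosed epi :=
    lsc_le_cont_closed (hlsc.comp continuous_fst) continuous_snd
  have hconvex : Convex ℝ epi := by
    rintro ⟨y₁, t₁⟩ h₁ ⟨y₂, t₂⟩ h₂ a b ha hb hab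
    simp only [hepi, Set.mem_setOf_eq, Prod.smul_mk, Prod.mk_add_mk, smul_eq_mul] at *
    calc f (a • y₁ + b • y₂) ≤ (a : EReal) * f y₁ + (b : EReal) * f y₂ :=
          hconv y₁ y₂ a b ha hb hab
      _ ≤ (a : EReal) * (t₁ : EReal) + (b : EReal) * (t₂ : EReal) := by
          gcongr
      _ = ((a * t₁ + b * t₂ : ℝ) : EReal) := by
          rw [← EReal.coe_mul, ← EReal.coe_mul, ← EReal.coe_add]
  have hF : f x = ((f x).toReal : EReal) := (EReal.coe_toReal hx (hbot x)).symm
  set r : ℝ := (f x).toReal with hr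
  have hz : (x, r - ε) ∉ epi := by
    simp only [hepi, Set.mem_setOf_eq, not_le]
    rw [hF]
    exact_mod_cast sub_lt_self r hε
  obtain ⟨φ, u, hu1, hu2⟩ := geometric_hahn_banach_point_closed hconvex hclosed hz
  set c : ℝ := φ (0, 1) with hc
  have hφsplit : ∀ y : E, ∀ t : ℝ, φ (y, t) = φ (y, 0) + t * c := by
    intro y t
    have : (y, t) = (y, (0:ℝ)) + t • ((0:E), (1:ℝ)) := by
      simp [Prod.ext_iff]
    rw [this, map_add, map_smul]
    simp [hc]
  have hmemx : (x, r) ∈ epi := by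
    simp only [hepi, Set.mem_setOf_eq]
    rw [hF]
  have hcpos : 0 < c := by
    have h1 := hu2 _ hmemx
    rw [hφsplit] at hu1 h1
    nlinarith
  refine ⟨(-c⁻¹) • (φ.comp (ContinuousLinearMap.inl ℝ E ℝ)), fun y => ?_⟩
  by_cases hy : f y = ⊤
  · rw [hy]
    simp [EReal.top_add_coe]
  · have hymem : (y, (f y).toReal) ∈ epi := by
      simp only [hepi, Set.mem_setOf_eq]
      rw [EReal.coe_toReal hy (hbot y)]
    have h1 := hu2 _ hymem
    have h2 := hu1
    rw [hφsplit] at h1 h2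
    have key : (-c⁻¹) * (φ (y - x, 0)) + r ≤ (f y).toReal + ε := by
      have hφsub : φ (y - x, (0:ℝ)) = φ (y, 0) - φ (x, 0) := by
        have : ((y - x : E), (0:ℝ)) = (y, (0:ℝ)) - (x, (0:ℝ)) := by simp [Prod.ext_iff]
        rw [this, map_sub]
      rw [hφsub]
      have h3 : φ (x, 0) + (r - ε) * c < φ (y, 0) + (f y).toReal * c := h2.trans h1
      have hcinv : 0 < c⁻¹ := inv_pos.2 hcpos
      have h4 : φ (x, 0) - φ (y, 0) ≤ ((f y).toReal + ε - r) * c := by linarith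
      have h5 : c⁻¹ * (φ (x, 0) - φ (y, 0)) ≤ c⁻¹ * (((f y).toReal + ε - r) * c) :=
        mul_le_mul_of_nonneg_left h4 (le_of_lt hcinv)
      rw [mul_comm c⁻¹ (((f y).toReal + ε - r) * c), mul_assoc,
        mul_inv_cancel₀ (ne_of_gt hcpos), mul_one] at h5
      linarith
    rw [hF, ← EReal.coe_toReal hy (hbot y)]
    simp only [ContinuousLinearMap.smul_apply, ContinuousLinearMap.comp_apply,
      ContinuousLinearMap.inl_apply, smul_eq_mul]
    exact_mod_cast key


/-- **Brøndsted–Rockafellar.** Let `f` be a proper lower semicontinuous convex function on a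
real Banach space `E` (with values in `ℝ ∪ {∞}`, modelled as `EReal` with `f x ≠ ⊥`).  Given
`x₀ ∈ dom f`, `ε > 0`, `λ > 0` and `x₀* ∈ ∂_ε f(x₀)`, there are `x ∈ dom f` and `x* ∈ ∂f(x)`
with `‖x - x₀‖ ≤ ε / λ` and `‖x* - x₀*‖ ≤ λ`.  In particular `D(∂f)` is dense in `dom f`:
the closures of `D(∂f)` and of `dom f` coincide, and this common closure is convex. -/
theorem brondsted_rockafellar
    {E : Type*} [NormedAddCommGroup E] [NormedSpace ℝ E] [CompleteSpace E]
    (f : E → EReal)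
    (hbot : ∀ x, f x ≠ ⊥) (hproper : ∃ x, f x ≠ ⊤)
    (hlsc : LowerSemicontinuous f)
    (hconv : ∀ x y : E, ∀ a b : ℝ, 0 ≤ a → 0 ≤ b → a + b = 1 →
      f (a • x + b • y) ≤ (a : EReal) * f x + (b : EReal) * f y)
    (x₀ : E) (hx₀ : f x₀ ≠ ⊤) (ε lam : ℝ) (hε : 0 < ε) (hlam : 0 < lam)
    (x₀' : StrongDual ℝ E)
    (hx₀' : ∀ y, ((x₀' (y - x₀) : ℝ) : EReal) + f x₀ ≤ f y + (ε : EReal)) :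
    (∃ (x : E) (x' : StrongDual ℝ E), f x ≠ ⊤ ∧
      (∀ y, ((x' (y - x) : ℝ) : EReal) + f x ≤ f y) ∧
      ‖x - x₀‖ ≤ ε / lam ∧ ‖x' - x₀'‖ ≤ lam) ∧
    closure {x | ∃ x' : StrongDual ℝ E, ∀ y, ((x' (y - x) : ℝ) : EReal) + f x ≤ f y}
      = closure {x | f x ≠ ⊤} ∧
    Convex ℝ (closure {x | f x ≠ ⊤}) := by
  refine ⟨br_exists f hbot hlsc hconv x₀ hx₀ ε lam hε hlam x₀' hx₀', ?_, ?_⟩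
  · -- closures coincide
    have hDsub : {x | ∃ x' : StrongDual ℝ E, ∀ y, ((x' (y - x) : ℝ) : EReal) + f x ≤ f y} ⊆
        {x | f x ≠ ⊤} := by
      rintro z ⟨z', hz'⟩ hzt
      obtain ⟨w, hw⟩ := hproper
      have h := hz' w
      rw [hzt, EReal.coe_add_top, top_le_iff] at h
      exact hw h
    have hdense : {x | f x ≠ ⊤} ⊆
        closure {x | ∃ x' : StrongDual ℝ E, ∀ y, ((x' (y - x) : ℝ) : EReal) + f x ≤ f y} := by
      intro z hz
      rw [Metric.mem_closure_iff]
      intro δ hδ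
      obtain ⟨z₀', hz₀'⟩ := exists_eps_subgrad f hbot hlsc hconv z hz 1 one_pos
      obtain ⟨w, w', hw1, hw2, hw3, hw4⟩ :=
        br_exists f hbot hlsc hconv z hz 1 (2/δ) one_pos (by positivity) z₀' hz₀'
      refine ⟨w, ⟨w', hw2⟩, ?_⟩
      have heq : (1:ℝ)/(2/δ) = δ/2 := by
        field_simp
      calc dist z w = ‖w - z‖ := by rw [dist_comm, dist_eq_norm]
        _ ≤ 1/(2/δ) := hw3
        _ = δ/2 := heq
        _ < δ := by linarith
    refine Set.Subset.antisymm (closure_mono hDsub) ?_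
    calc closure {x | f x ≠ ⊤} ⊆
        closure (closure {x | ∃ x' : StrongDual ℝ E, ∀ y, ((x' (y - x) : ℝ) : EReal) + f x ≤ f y}) :=
          closure_mono hdense
      _ = closure {x | ∃ x' : StrongDual ℝ E, ∀ y, ((x' (y - x) : ℝ) : EReal) + f x ≤ f y} :=
          closure_closure
  · -- convexity
    refine Convex.closure ?_
    intro u hu v hv a b ha hb hab
    simp only [Set.mem_setOf_eq] at hu hv ⊢
    have h := hconv u v a b ha hb hab
    obtain ⟨ru, hru⟩ : ∃ r : ℝ, f u = (r:EReal) := ⟨_, (EReal.coe_toReal hu (hbot u)).symm⟩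
    obtain ⟨rv, hrv⟩ : ∃ r : ℝ, f v = (r:EReal) := ⟨_, (EReal.coe_toReal hv (hbot v)).symm⟩
    have h1 : f (a • u + b • v) ≤ ((a * ru + b * rv : ℝ) : EReal) := by
      rw [hru, hrv] at h
      have hcast : ((a * ru + b * rv : ℝ) : EReal) = (a:EReal) * (ru:EReal) + (b:EReal) * (rv:EReal) := by
        norm_cast
      rw [hcast]
      exact h
    exact (lt_of_le_of_lt h1 (EReal.coe_lt_top _)).ne
end

section
/- Let f and g be proper lower semicontinuous convex functions on a real Banach space E and suppose there is a point of dom(f) ∩ dom(g) at which f is continuous. Then ∂(f + g)(x) = ∂f(x) + ∂g(x) for every x ∈ E, where ∂f(x) + ∂g(x) denotes the vector sum {x* + y* : x* ∈ ∂f(x), y* ∈ ∂g(x)}. -/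
open NormedSpace Pointwise

private lemma combo_lt_combo {a b α β X Y : ℝ} (ha : 0 ≤ a) (hb : 0 ≤ b) (hab : a + b = 1)
    (h1 : α < X) (h2 : β < Y) : a * α + b * β < a * X + b * Y := by
  rcases ha.lt_or_eq with ha' | ha'
  · have h3 := mul_lt_mul_of_pos_left h1 ha'
    have h4 := mul_le_mul_of_nonneg_left h2.le hb
    linarith
  · have hb' : b = 1 := by linarith
    rw [← ha', hb']; simpa using h2

set_option maxHeartbeats 1000000 in
/-- Sum rule for subdifferentials: if `f` and `g` are proper lower semicontinuous convex
functions on a real Banach space `E` and `f` is continuous at some point of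
`dom f ∩ dom g`, then `∂(f + g)(x) = ∂f(x) + ∂g(x)` (Minkowski sum) for every `x ∈ E`. -/
theorem subdifferential_sum_rule
    {E : Type*} [NormedAddCommGroup E] [NormedSpace ℝ E] [CompleteSpace E]
    (f g : E → EReal)
    (hfbot : ∀ x, f x ≠ ⊥) (hfproper : ∃ x, f x ≠ ⊤)
    (hflsc : LowerSemicontinuous f)
    (hfconv : ∀ x y : E, ∀ a b : ℝ, 0 ≤ a → 0 ≤ b → a + b = 1 →
      f (a • x + b • y) ≤ (a : EReal) * f x + (b : EReal) * f y)
    (hgbot : ∀ x, g x ≠ ⊥) (hgproper : ∃ x, g x ≠ ⊤)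
    (hglsc : LowerSemicontinuous g)
    (hgconv : ∀ x y : E, ∀ a b : ℝ, 0 ≤ a → 0 ≤ b → a + b = 1 →
      g (a • x + b • y) ≤ (a : EReal) * g x + (b : EReal) * g y)
    (x₀ : E) (hx₀f : f x₀ ≠ ⊤) (hx₀g : g x₀ ≠ ⊤) (hcont : ContinuousAt f x₀) :
    ∀ x : E,
      {x' : StrongDual ℝ E | ∀ y, ((x' (y - x) : ℝ) : EReal) + (f x + g x) ≤ f y + g y}
        = {x' : StrongDual ℝ E | ∀ y, ((x' (y - x) : ℝ) : EReal) + f x ≤ f y}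
          + {x' : StrongDual ℝ E | ∀ y, ((x' (y - x) : ℝ) : EReal) + g x ≤ g y} := by
  -- real values at x₀
  set fx₀ : ℝ := (f x₀).toReal with hfx₀_def
  have hfx₀ : f x₀ = (fx₀ : EReal) := (EReal.coe_toReal hx₀f (hfbot x₀)).symm
  set gx₀ : ℝ := (g x₀).toReal with hgx₀_def
  have hgx₀ : g x₀ = (gx₀ : EReal) := (EReal.coe_toReal hx₀g (hgbot x₀)).symm
  intro x
  ext x'
  simp only [Set.mem_setOf_eq, Set.mem_add]
  constructor
  · -- hard direction
    intro hx'
    -- degenerate case: f x = ⊤ or g x = ⊤ is impossible for members of the LHS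
    have hsum_ne : f x + g x ≠ ⊤ := by
      intro htop
      have h := hx' x₀
      rw [htop, hfx₀, hgx₀] at h
      have : ((x' (x₀ - x) : ℝ) : EReal) + ⊤ = ⊤ := by
        rw [EReal.add_top_iff_ne_bot]; exact EReal.coe_ne_bot _
      rw [this, top_le_iff, ← EReal.coe_add] at h
      exact EReal.coe_ne_top _ h
    have hfx_ne : f x ≠ ⊤ := fun h => hsum_ne (by rw [h, EReal.top_add_iff_ne_bot]; exact hgbot x)
    have hgx_ne : g x ≠ ⊤ := fun h => hsum_ne (by rw [h, EReal.add_top_iff_ne_bot]; exact hfbot x)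
    set fx : ℝ := (f x).toReal with hfx_def
    have hfx : f x = (fx : EReal) := (EReal.coe_toReal hfx_ne (hfbot x)).symm
    set gx : ℝ := (g x).toReal with hgx_def
    have hgx : g x = (gx : EReal) := (EReal.coe_toReal hgx_ne (hgbot x)).symm
    -- the two convex sets in E × ℝ
    set A : Set (E × ℝ) := {p | f (x + p.1) < ((p.2 + fx + x' p.1 : ℝ) : EReal)} with hA_def
    set B : Set (E × ℝ) := {p | g (x + p.1) ≤ ((gx - p.2 : ℝ) : EReal)} with hB_def
    have convA : Convex ℝ A := by
      intro p hp q hq a b ha hb hab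
      simp only [hA_def, Set.mem_setOf_eq] at hp hq ⊢
      have hpt : f (x + p.1) ≠ ⊤ := ne_top_of_lt hp
      have hqt : f (x + q.1) ≠ ⊤ := ne_top_of_lt hq
      obtain ⟨α, hα⟩ : ∃ α : ℝ, f (x + p.1) = (α : EReal) :=
        ⟨_, (EReal.coe_toReal hpt (hfbot _)).symm⟩
      obtain ⟨β, hβ⟩ : ∃ β : ℝ, f (x + q.1) = (β : EReal) :=
        ⟨_, (EReal.coe_toReal hqt (hfbot _)).symm⟩
      have hpoint : x + (a • p + b • q).1 = a • (x + p.1) + b • (x + q.1) := by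
        simp only [Prod.fst_add, Prod.smul_fst]
        rw [smul_add, smul_add, add_add_add_comm, Convex.combo_self hab]
      have hcv := hfconv (x + p.1) (x + q.1) a b ha hb hab
      rw [hα, hβ] at hcv
      rw [hpoint]
      refine lt_of_le_of_lt hcv ?_
      rw [← EReal.coe_mul, ← EReal.coe_mul, ← EReal.coe_add, EReal.coe_lt_coe_iff]
      rw [hα, EReal.coe_lt_coe_iff] at hp
      rw [hβ, EReal.coe_lt_coe_iff] at hq
      have := combo_lt_combo ha hb hab hp hq
      simp only [Prod.snd_add, Prod.smul_snd, Prod.fst_add, Prod.smul_fst, map_add, map_smul,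
        smul_eq_mul]
      have hfx' : a * fx + b * fx = fx := by rw [← add_mul, hab, one_mul]
      linarith
    have convB : Convex ℝ B := by
      intro p hp q hq a b ha hb hab
      simp only [hB_def, Set.mem_setOf_eq] at hp hq ⊢
      have hpt : g (x + p.1) ≠ ⊤ := by
        intro h; rw [h, top_le_iff] at hp; exact EReal.coe_ne_top _ hp
      have hqt : g (x + q.1) ≠ ⊤ := by
        intro h; rw [h, top_le_iff] at hq; exact EReal.coe_ne_top _ hq
      obtain ⟨α, hα⟩ : ∃ α : ℝ, g (x + p.1) = (α : EReal) :=
        ⟨_, (EReal.coe_toReal hpt (hgbot _)).symm⟩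
      obtain ⟨β, hβ⟩ : ∃ β : ℝ, g (x + q.1) = (β : EReal) :=
        ⟨_, (EReal.coe_toReal hqt (hgbot _)).symm⟩
      have hpoint : x + (a • p + b • q).1 = a • (x + p.1) + b • (x + q.1) := by
        simp only [Prod.fst_add, Prod.smul_fst]
        rw [smul_add, smul_add, add_add_add_comm, Convex.combo_self hab]
      have hcv := hgconv (x + p.1) (x + q.1) a b ha hb hab
      rw [hα, hβ] at hcv
      rw [hpoint]
      refine le_trans hcv ?_
      rw [← EReal.coe_mul, ← EReal.coe_mul, ← EReal.coe_add, EReal.coe_le_coe_iff]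
      rw [hα, EReal.coe_le_coe_iff] at hp
      rw [hβ, EReal.coe_le_coe_iff] at hq
      have h1 := mul_le_mul_of_nonneg_left hp ha
      have h2 := mul_le_mul_of_nonneg_left hq hb
      simp only [Prod.snd_add, Prod.smul_snd, smul_eq_mul]
      have hgx' : a * gx + b * gx = gx := by rw [← add_mul, hab, one_mul]
      nlinarith
    have disjAB : Disjoint A B := by
      rw [Set.disjoint_left]
      intro p hpA hpB
      simp only [hA_def, hB_def, Set.mem_setOf_eq] at hpA hpB
      have hpt : f (x + p.1) ≠ ⊤ := ne_top_of_lt hpA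
      have hqt : g (x + p.1) ≠ ⊤ := by
        intro h; rw [h, top_le_iff] at hpB; exact EReal.coe_ne_top _ hpB
      obtain ⟨α, hα⟩ : ∃ α : ℝ, f (x + p.1) = (α : EReal) :=
        ⟨_, (EReal.coe_toReal hpt (hfbot _)).symm⟩
      obtain ⟨β, hβ⟩ : ∃ β : ℝ, g (x + p.1) = (β : EReal) :=
        ⟨_, (EReal.coe_toReal hqt (hgbot _)).symm⟩
      have h := hx' (x + p.1)
      rw [add_sub_cancel_left, hα, hβ, hfx, hgx, ← EReal.coe_add, ← EReal.coe_add,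
        ← EReal.coe_add, EReal.coe_le_coe_iff] at h
      rw [hα, EReal.coe_lt_coe_iff] at hpA
      rw [hβ, EReal.coe_le_coe_iff] at hpB
      linarith
    -- nonempty interior of A via continuity of f at x₀
    obtain ⟨δ, hδpos, hball⟩ : ∃ δ > 0, ∀ y ∈ Metric.ball x₀ δ, f y < ((fx₀ + 1 : ℝ) : EReal) := by
      have hlt : f x₀ < ((fx₀ + 1 : ℝ) : EReal) := by
        rw [hfx₀, EReal.coe_lt_coe_iff]; linarith
      have hev : ∀ᶠ y in nhds x₀, f y < ((fx₀ + 1 : ℝ) : EReal) :=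
        hcont.eventually_lt_const hlt
      rw [Metric.eventually_nhds_iff] at hev
      obtain ⟨δ, hδ, h⟩ := hev
      exact ⟨δ, hδ, fun y hy => h (by simpa [Metric.mem_ball] using hy)⟩
    set z₀ : E := x₀ - x with hz₀_def
    set C : ℝ := fx₀ + 1 - fx + ‖x'‖ * (‖z₀‖ + δ) with hC_def
    set S : Set (E × ℝ) := (Metric.ball z₀ δ) ×ˢ (Set.Ioi C) with hS_def
    have hSA : S ⊆ A := by
      rintro ⟨z, t⟩ hzt
      simp only [hS_def, Set.mem_prod, Metric.mem_ball, Set.mem_Ioi] at hzt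
      obtain ⟨hz, ht⟩ := hzt
      simp only [hA_def, Set.mem_setOf_eq]
      have h1 : x + z ∈ Metric.ball x₀ δ := by
        rw [Metric.mem_ball, dist_eq_norm]
        have : x + z - x₀ = z - z₀ := by rw [hz₀_def]; abel
        rw [this]; rwa [dist_eq_norm] at hz
      have h2 := hball _ h1
      refine lt_of_lt_of_le h2 ?_
      rw [EReal.coe_le_coe_iff]
      have hz_norm : ‖z‖ ≤ ‖z₀‖ + δ := by
        have := norm_sub_norm_le z z₀
        rw [dist_eq_norm] at hz
        linarith
      have habs : |x' z| ≤ ‖x'‖ * (‖z₀‖ + δ) := by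
        calc |x' z| ≤ ‖x'‖ * ‖z‖ := x'.le_opNorm z
          _ ≤ ‖x'‖ * (‖z₀‖ + δ) := mul_le_mul_of_nonneg_left hz_norm (norm_nonneg _)
      have := abs_le.mp habs
      simp only [hC_def] at ht
      linarith
    have hS_open : IsOpen S := Metric.isOpen_ball.prod isOpen_Ioi
    have hS_int : S ⊆ interior A := hS_open.subset_interior_iff.mpr hSA
    have hw : (z₀, C + 1) ∈ interior A := hS_int (by
      simp only [hS_def, Set.mem_prod, Metric.mem_ball, Set.mem_Ioi]
      exact ⟨by simpa using hδpos, by linarith⟩)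
    -- separation
    obtain ⟨φ, u, hφA, hφB⟩ :=
      geometric_hahn_banach_open (convA.interior) isOpen_interior convB
        (disjAB.mono_left interior_subset)
    -- extend strict inequality on interior A to ≤ on A
    have hA_le : ∀ p ∈ A, φ p ≤ u := by
      intro p hp
      set w : E × ℝ := (z₀, C + 1) with hw_def
      have hcomb : ∀ ε : ℝ, ε ∈ Set.Ioo (0:ℝ) 1 → ε * φ w + (1 - ε) * φ p < u := by
        intro ε hε
        have hmem : ε • w + (1 - ε) • p ∈ interior A :=
          convA.combo_interior_self_mem_interior hw hp hε.1 (by linarith [hε.2]) (by ring)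
        have := hφA _ hmem
        simpa [map_add, map_smul, smul_eq_mul] using this
      have htend : Filter.Tendsto (fun ε : ℝ => ε * φ w + (1 - ε) * φ p)
          (nhdsWithin 0 (Set.Ioi 0)) (nhds (φ p)) := by
        have hc : Continuous (fun ε : ℝ => ε * φ w + (1 - ε) * φ p) :=
          (continuous_id.mul continuous_const).add
            ((continuous_const.sub continuous_id).mul continuous_const)
        have := hc.tendsto 0
        simp only [zero_mul, sub_zero, one_mul, zero_add] at this
        exact this.mono_left nhdsWithin_le_nhds
      refine le_of_tendsto htend ?_
      filter_upwards [Ioo_mem_nhdsGT_of_mem (Set.mem_Ico.mpr ⟨le_refl _, zero_lt_one⟩)] with ε hε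
      exact (hcomb ε hε).le
    -- decompose φ
    set ψ : StrongDual ℝ E := φ.comp (ContinuousLinearMap.inl ℝ E ℝ) with hψ_def
    set c : ℝ := φ (0, 1) with hc_def
    have hφ_eq : ∀ z : E, ∀ t : ℝ, φ (z, t) = ψ z + t * c := by
      intro z t
      have h1 : (z, t) = (z, (0:ℝ)) + t • ((0:E), (1:ℝ)) := by
        simp [Prod.ext_iff]
      rw [h1, map_add, map_smul]
      simp [hψ_def, hc_def, ContinuousLinearMap.inl_apply, smul_eq_mul]
    -- key inequality from A
    have key_f : ∀ z : E, ∀ α : ℝ, f (x + z) = (α : EReal) →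
        ψ z + (α - fx - x' z) * c ≤ u := by
      intro z α hα
      set t₀ : ℝ := α - fx - x' z with ht₀_def
      have hmem : ∀ t : ℝ, t₀ < t → ψ z + t * c ≤ u := by
        intro t ht
        have hzt : (z, t) ∈ A := by
          simp only [hA_def, Set.mem_setOf_eq, hα, EReal.coe_lt_coe_iff]
          simp only [ht₀_def] at ht
          linarith
        have := hA_le _ hzt
        rwa [hφ_eq] at this
      have htend : Filter.Tendsto (fun t : ℝ => ψ z + t * c)
          (nhdsWithin t₀ (Set.Ioi t₀)) (nhds (ψ z + t₀ * c)) := by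
        have hc : Continuous (fun t : ℝ => ψ z + t * c) :=
          continuous_const.add (continuous_id.mul continuous_const)
        exact (hc.tendsto t₀).mono_left nhdsWithin_le_nhds
      refine le_of_tendsto htend ?_
      filter_upwards [self_mem_nhdsWithin] with t ht
      exact hmem t ht
    have key_g : ∀ z : E, ∀ β : ℝ, g (x + z) = (β : EReal) →
        u ≤ ψ z + (gx - β) * c := by
      intro z β hβ
      have hzt : (z, gx - β) ∈ B := by
        simp only [hB_def, Set.mem_setOf_eq, hβ, EReal.coe_le_coe_iff]
        linarith
      have := hφB _ hzt
      rwa [hφ_eq] at this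
    -- u = 0 and c < 0
    have hψ0 : ψ (0 : E) = 0 := map_zero ψ
    have hf_at_x : f (x + 0) = ((fx : ℝ) : EReal) := by rw [add_zero]; exact hfx
    have hg_at_x : g (x + 0) = ((gx : ℝ) : EReal) := by rw [add_zero]; exact hgx
    have hu_nonneg : 0 ≤ u := by
      have := key_f 0 fx hf_at_x
      simpa [hψ0] using this
    have hu_nonpos : u ≤ 0 := by
      have := key_g 0 gx hg_at_x
      simpa [hψ0] using this
    have hu : u = 0 := le_antisymm hu_nonpos hu_nonneg
    have hc_nonpos : c ≤ 0 := by
      have h1 : ((0:E), (1:ℝ)) ∈ A := by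
        simp only [hA_def, Set.mem_setOf_eq, add_zero, hfx, map_zero, EReal.coe_lt_coe_iff]
        linarith
      have := hA_le _ h1
      rw [hφ_eq, hψ0, hu] at this
      linarith
    have hc_neg : c < 0 := by
      rcases hc_nonpos.lt_or_eq with h | h
      · exact h
      · exfalso
        have hz₀A : (z₀, C + 1) ∈ interior A := hw
        have h1 := hφA _ hz₀A
        rw [hφ_eq, hu] at h1
        have h2 := key_g z₀ gx₀ (by rw [hz₀_def, add_sub_cancel]; exact hgx₀)
        rw [hu, h, mul_zero, add_zero] at h2
        rw [h, mul_zero, add_zero] at h1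
        linarith
    -- construct the decomposition
    set v : StrongDual ℝ E := (-c)⁻¹ • ψ with hv_def
    have hnc : (0:ℝ) < -c := by linarith
    refine ⟨x' + v, ?_, -v, ?_, by abel⟩
    · intro y
      by_cases hy : f y = ⊤
      · rw [hy]; exact le_top
      · obtain ⟨α, hα⟩ : ∃ α : ℝ, f y = (α : EReal) := ⟨_, (EReal.coe_toReal hy (hfbot y)).symm⟩
        have hfy : f (x + (y - x)) = (α : EReal) := by rwa [add_sub_cancel]
        have hk := key_f (y - x) α hfy
        rw [hu] at hk
        rw [hα, hfx, ← EReal.coe_add, EReal.coe_le_coe_iff]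
        have hv_val : v (y - x) = (-c)⁻¹ * ψ (y - x) := by
          simp [hv_def, smul_eq_mul]
        simp only [ContinuousLinearMap.add_apply, hv_val]
        have h2 : (-c)⁻¹ * ψ (y - x) ≤ α - fx - x' (y - x) := by
          rw [inv_mul_le_iff₀ hnc]
          linarith
        linarith
    · intro y
      by_cases hy : g y = ⊤
      · rw [hy]; exact le_top
      · obtain ⟨β, hβ⟩ : ∃ β : ℝ, g y = (β : EReal) := ⟨_, (EReal.coe_toReal hy (hgbot y)).symm⟩
        have hgy : g (x + (y - x)) = (β : EReal) := by rwa [add_sub_cancel]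
        have hk := key_g (y - x) β hgy
        rw [hu] at hk
        rw [hβ, hgx, ← EReal.coe_add, EReal.coe_le_coe_iff]
        have hv_val : (-v) (y - x) = -((-c)⁻¹ * ψ (y - x)) := by
          simp [hv_def, smul_eq_mul]
        rw [hv_val]
        have h2 : gx - β ≤ (-c)⁻¹ * ψ (y - x) := by
          rw [inv_mul_eq_div, le_div_iff₀ hnc]
          linarith
        linarith
  · -- easy direction
    rintro ⟨a, ha, b, hb, rfl⟩
    intro y
    have h1 := ha y
    have h2 := hb y
    rw [ContinuousLinearMap.add_apply, EReal.coe_add, add_add_add_comm]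
    exact add_le_add h1 h2
end

section
/- Let f be a proper lower semicontinuous convex function on a real Banach space E and let x ∈ E (not necessarily in dom(f)) satisfy inf_E f < f(x). Then there exist z ∈ dom(f) and z* ∈ ∂f(z) such that f(z) < f(x) and ⟨z*, x − z⟩ > 0. -/
open NormedSpace Set Filter Topology

section Aux

variable {E : Type*} [NormedAddCommGroup E] [NormedSpace ℝ E]

/-- Weak form of Ekeland's variational principle for real-valued lsc functions bounded below. -/
lemma ekeland_weak [CompleteSpace E] (H : E → ℝ) (hH : LowerSemicontinuous H)
    (C : ℝ) (hC : ∀ y, C ≤ H y) (k : ℝ) (hk : 0 < k) (x₀ : E) :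
    ∃ z : E, H z + k * ‖z - x₀‖ ≤ H x₀ ∧ ∀ y, H z ≤ H y + k * ‖y - z‖ := by
  set S : E → Set E := fun w => {y | H y + k * ‖y - w‖ ≤ H w} with hS
  have hSelf : ∀ w, w ∈ S w := by intro w; simp [hS]
  have htrans : ∀ w y u, y ∈ S w → u ∈ S y → u ∈ S w := by
    intro w y u hy hu
    have h1 : H y + k * ‖y - w‖ ≤ H w := hy
    have h2 : H u + k * ‖u - y‖ ≤ H y := hu
    have h3 : ‖u - w‖ ≤ ‖u - y‖ + ‖y - w‖ := by
      simpa using norm_add_le (u - y) (y - w)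
    have h4 : k * ‖u - w‖ ≤ k * (‖u - y‖ + ‖y - w‖) :=
      mul_le_mul_of_nonneg_left h3 hk.le
    rw [mul_add] at h4
    show H u + k * ‖u - w‖ ≤ H w
    linarith
  have hclosed : ∀ w, IsClosed (S w) := by
    intro w
    have hlsc2 : LowerSemicontinuous fun y => H y + k * ‖y - w‖ :=
      hH.add ((continuous_const.mul ((continuous_id.sub continuous_const).norm)).lowerSemicontinuous)
    have : S w = ((fun y => H y + k * ‖y - w‖) ⁻¹' (Ioi (H w)))ᶜ := by
      ext y; simp [hS, not_lt]
    rw [this]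
    exact (lowerSemicontinuous_iff_isOpen_preimage.1 hlsc2 (H w)).isClosed_compl
  have hne : ∀ w, (H '' S w).Nonempty := fun w => ⟨H w, w, hSelf w, rfl⟩
  have hbdd : ∀ w, BddBelow (H '' S w) := fun w => ⟨C, by rintro t ⟨y, _, rfl⟩; exact hC y⟩
  have step : ∀ (n : ℕ) (w : E), ∃ y, y ∈ S w ∧ H y ≤ sInf (H '' S w) + (1/2) ^ n := by
    intro n w
    have hlt : sInf (H '' S w) < sInf (H '' S w) + (1/2) ^ n :=
      lt_add_of_pos_right _ (by positivity)
    obtain ⟨t, ⟨y, hy, rfl⟩, h⟩ := (csInf_lt_iff (hbdd w) (hne w)).1 hlt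
    exact ⟨y, hy, h.le⟩
  set zseq : ℕ → E := fun n => Nat.rec (motive := fun _ => E) x₀
    (fun n w => (step n w).choose) n with hzseq
  have hz0 : zseq 0 = x₀ := rfl
  have hmem : ∀ n, zseq (n+1) ∈ S (zseq n) := fun n => (step n (zseq n)).choose_spec.1
  have hinf : ∀ n, H (zseq (n+1)) ≤ sInf (H '' S (zseq n)) + (1/2) ^ n :=
    fun n => (step n (zseq n)).choose_spec.2
  have hchain : ∀ n m, n ≤ m → zseq m ∈ S (zseq n) := by
    intro n m hnm
    induction m, hnm using Nat.le_induction with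
    | base => exact hSelf _
    | succ m hm ih => exact htrans _ _ _ ih (hmem m)
  set a : ℕ → ℝ := fun n => H (zseq n) with ha
  have hanti : Antitone a := by
    apply antitone_nat_of_succ_le
    intro n
    have h1 : H (zseq (n+1)) + k * ‖zseq (n+1) - zseq n‖ ≤ H (zseq n) := hmem n
    have h2 : 0 ≤ k * ‖zseq (n+1) - zseq n‖ := by positivity
    simp only [ha]; linarith
  have hbddr : BddBelow (range a) := ⟨C, by rintro t ⟨n, rfl⟩; exact hC _⟩
  set L := ⨅ n, a n with hL
  have htend : Tendsto a atTop (𝓝 L) := tendsto_atTop_ciInf hanti hbddr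
  have hLle : ∀ n, L ≤ a n := fun n => ciInf_le hbddr n
  have hdist : ∀ n m, n ≤ m → k * ‖zseq m - zseq n‖ ≤ a n - a m := by
    intro n m h
    have h1 : H (zseq m) + k * ‖zseq m - zseq n‖ ≤ H (zseq n) := hchain n m h
    simp only [ha]; linarith
  have hcauchy : CauchySeq zseq := by
    rw [Metric.cauchySeq_iff']
    intro ε hε
    have hkε : 0 < k * ε := by positivity
    have hlt : (⨅ n, a n) < L + k * ε := by rw [← hL]; exact lt_add_of_pos_right _ hkε
    obtain ⟨N, hN⟩ := exists_lt_of_ciInf_lt hlt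
    refine ⟨N, fun n hn => ?_⟩
    rw [dist_eq_norm]
    have h1 : k * ‖zseq n - zseq N‖ ≤ a N - a n := hdist N n hn
    have h2 : L ≤ a n := hLle n
    have h3 : k * ‖zseq n - zseq N‖ < k * ε := by linarith
    exact lt_of_mul_lt_mul_left (by linarith) hk.le
  obtain ⟨z, hz⟩ := cauchySeq_tendsto_of_complete hcauchy
  have hzS : ∀ n, z ∈ S (zseq n) := by
    intro n
    refine (hclosed (zseq n)).mem_of_tendsto hz ?_
    filter_upwards [eventually_ge_atTop n] with m hm using hchain n m hm
  have hconc1 : H z + k * ‖z - x₀‖ ≤ H x₀ := by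
    have h := hzS 0
    rw [hz0] at h
    exact h
  refine ⟨z, hconc1, ?_⟩
  intro y
  by_contra hy
  push_neg at hy
  have hymem : ∀ n, y ∈ S (zseq n) := by
    intro n
    have hz_n : H z + k * ‖z - zseq n‖ ≤ H (zseq n) := hzS n
    have htri : ‖y - zseq n‖ ≤ ‖y - z‖ + ‖z - zseq n‖ := by
      simpa using norm_add_le (y - z) (z - zseq n)
    have h5 : k * ‖y - zseq n‖ ≤ k * ‖y - z‖ + k * ‖z - zseq n‖ := by
      rw [← mul_add]; exact mul_le_mul_of_nonneg_left htri hk.le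
    show H y + k * ‖y - zseq n‖ ≤ H (zseq n)
    linarith
  have hyinf : ∀ n, sInf (H '' S (zseq n)) ≤ H y :=
    fun n => csInf_le (hbdd _) ⟨y, hymem n, rfl⟩
  have hge : ∀ n, a (n+1) - (1/2:ℝ)^n ≤ H y := by
    intro n
    have h6 := hinf n
    have h7 := hyinf n
    simp only [ha]; linarith
  have htend2 : Tendsto (fun n => a (n+1) - (1/2:ℝ)^n) atTop (𝓝 (L - 0)) :=
    (htend.comp (tendsto_add_atTop_nat 1)).sub
      (tendsto_pow_atTop_nhds_zero_of_lt_one (by norm_num) (by norm_num))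
  rw [sub_zero] at htend2
  have hyL : L ≤ H y := le_of_tendsto htend2 (Filter.Eventually.of_forall hge)
  have hzLe : H z ≤ L := by
    refine le_ciInf fun n => ?_
    have hz_n : H z + k * ‖z - zseq n‖ ≤ a n := hzS n
    have : 0 ≤ k * ‖z - zseq n‖ := by positivity
    linarith
  have : 0 ≤ k * ‖y - z‖ := by positivity
  linarith

end Aux
section Aux2

variable {E : Type*} [NormedAddCommGroup E] [NormedSpace ℝ E] (f : E → EReal)

lemma epi_convex_s8
    (hconv : ∀ x y : E, ∀ a b : ℝ, 0 ≤ a → 0 ≤ b → a + b = 1 →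
      f (a • x + b • y) ≤ (a : EReal) * f x + (b : EReal) * f y) :
    Convex ℝ {p : E × ℝ | f p.1 ≤ (p.2 : EReal)} := by
  intro p hp q hq a b ha hb hab
  simp only [mem_setOf_eq] at hp hq ⊢
  have hfst : (a • p + b • q).1 = a • p.1 + b • q.1 := rfl
  have hsnd : (a • p + b • q).2 = a * p.2 + b * q.2 := rfl
  rw [hfst, hsnd]
  have h1 : f (a • p.1 + b • q.1) ≤ (a : EReal) * f p.1 + (b : EReal) * f q.1 :=
    hconv _ _ a b ha hb hab
  have h2 : (a : EReal) * f p.1 ≤ (a : EReal) * (p.2 : EReal) :=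
    mul_le_mul_of_nonneg_left hp (by exact_mod_cast ha)
  have h3 : (b : EReal) * f q.1 ≤ (b : EReal) * (q.2 : EReal) :=
    mul_le_mul_of_nonneg_left hq (by exact_mod_cast hb)
  calc f (a • p.1 + b • q.1) ≤ (a : EReal) * f p.1 + (b : EReal) * f q.1 := h1
    _ ≤ (a : EReal) * (p.2 : EReal) + (b : EReal) * (q.2 : EReal) := add_le_add h2 h3
    _ = ((a * p.2 + b * q.2 : ℝ) : EReal) := by
        rw [EReal.coe_add, EReal.coe_mul, EReal.coe_mul]

lemma epi_closed (hlsc : LowerSemicontinuous f) :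
    IsClosed {p : E × ℝ | f p.1 ≤ (p.2 : EReal)} := by
  rw [← isOpen_compl_iff, isOpen_iff_mem_nhds]
  rintro ⟨y₀, t₀⟩ hp
  simp only [mem_compl_iff, mem_setOf_eq, not_le] at hp
  obtain ⟨q, hq1, hq2⟩ := EReal.exists_between_coe_real hp
  have hopen : IsOpen {y : E | (q : EReal) < f y} :=
    lowerSemicontinuous_iff_isOpen_preimage.1 hlsc q
  have hmem : {y : E | (q : EReal) < f y} ×ˢ Iio q ∈ 𝓝 ((y₀, t₀) : E × ℝ) :=
    prod_mem_nhds (hopen.mem_nhds hq2) (Iio_mem_nhds (by exact_mod_cast hq1))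
  refine mem_of_superset hmem ?_
  rintro ⟨y, t⟩ ⟨hy, ht⟩
  simp only [mem_compl_iff, mem_setOf_eq, not_le]
  calc (t : EReal) < (q : EReal) := by exact_mod_cast ht
    _ < f y := hy

lemma exists_affine_minorant
    (hbot : ∀ x, f x ≠ ⊥) (hproper : ∃ x, f x ≠ ⊤)
    (hlsc : LowerSemicontinuous f)
    (hconv : ∀ x y : E, ∀ a b : ℝ, 0 ≤ a → 0 ≤ b → a + b = 1 →
      f (a • x + b • y) ≤ (a : EReal) * f x + (b : EReal) * f y) :
    ∃ (v : E →L[ℝ] ℝ) (c : ℝ), ∀ y, ((v y + c : ℝ) : EReal) ≤ f y := by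
  obtain ⟨x₁, hx₁⟩ := hproper
  set b := (f x₁).toReal with hb
  have hfx₁ : f x₁ = (b : EReal) := (EReal.coe_toReal hx₁ (hbot x₁)).symm
  have hnot : ((x₁, b - 1) : E × ℝ) ∉ {p : E × ℝ | f p.1 ≤ (p.2 : EReal)} := by
    simp only [mem_setOf_eq, hfx₁, not_le]
    exact_mod_cast (by linarith : b - 1 < b)
  obtain ⟨F, u, hFlt, hFgt⟩ :=
    geometric_hahn_banach_closed_point (epi_convex_s8 f hconv) (epi_closed f hlsc) hnot
  set c := F (0, 1) with hc
  have hdec : ∀ (y : E) (t : ℝ), F (y, t) = F (y, 0) + t * c := by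
    intro y t
    have h : ((y, t) : E × ℝ) = (y, 0) + t • ((0 : E), (1 : ℝ)) := by
      simp [Prod.ext_iff]
    rw [h, map_add, map_smul, smul_eq_mul, hc]
  have hepi : ∀ (y : E) (t : ℝ), f y ≤ (t : EReal) → F (y, 0) + t * c < u := by
    intro y t ht
    rw [← hdec]
    exact hFlt _ ht
  have hcle : c ≤ 0 := by
    by_contra hcpos
    push_neg at hcpos
    obtain ⟨n, hn⟩ := exists_nat_gt ((u - F (x₁, 0) - b * c) / c)
    have hmem : f x₁ ≤ ((b + n : ℝ) : EReal) := by
      rw [hfx₁]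
      have : (0:ℝ) ≤ n := Nat.cast_nonneg n
      exact_mod_cast (by linarith : b ≤ b + (n:ℝ))
    have h1 := hepi x₁ (b + n) hmem
    rw [div_lt_iff₀ hcpos] at hn
    nlinarith
  have hcne : c ≠ 0 := by
    intro h0
    have h1 := hepi x₁ b (le_of_eq hfx₁)
    have h2 := hFgt
    rw [hdec x₁ (b - 1), h0] at h2
    rw [h0] at h1
    simp only [mul_zero, add_zero] at h1 h2
    linarith
  have hcneg : c < 0 := lt_of_le_of_ne hcle hcne
  set G := F.comp (ContinuousLinearMap.inl ℝ E ℝ) with hG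
  have hGy : ∀ y : E, G y = F (y, 0) := fun y => rfl
  refine ⟨(-c)⁻¹ • G, u / c, fun y => ?_⟩
  by_cases hy : f y = ⊤
  · rw [hy]; exact le_top
  · set t := (f y).toReal with htdef
    have hft : f y = (t : EReal) := (EReal.coe_toReal hy (hbot y)).symm
    have h1 : F (y, 0) + t * c < u := hepi y t (le_of_eq hft)
    have hval : ((-c)⁻¹ • G) y + u / c = (u - F (y, 0)) / c := by
      simp only [ContinuousLinearMap.smul_apply, smul_eq_mul, hGy]
      field_simp [hcne]
      ring
    have h2 : (u - F (y, 0)) / c < t := by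
      rw [div_lt_iff_of_neg hcneg]
      linarith
    rw [hft, hval]
    exact_mod_cast h2.le

end Aux2

section Aux3

variable {E : Type*} [NormedAddCommGroup E] [NormedSpace ℝ E] (f : E → EReal)

lemma convexOn_norm_sub (w : E) : ConvexOn ℝ Set.univ fun y : E => ‖y - w‖ := by
  refine ⟨convex_univ, fun p _ q _ a b ha hb hab => ?_⟩
  have hw : a • w + b • w = w := by rw [← add_smul, hab, one_smul]
  have hsplit : a • p + b • q - w = a • (p - w) + b • (q - w) := by
    rw [smul_sub, smul_sub]
    rw [show a • p - a • w + (b • q - b • w) = a • p + b • q - (a • w + b • w) by abel, hw]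
  calc ‖a • p + b • q - w‖ = ‖a • (p - w) + b • (q - w)‖ := by rw [hsplit]
    _ ≤ ‖a • (p - w)‖ + ‖b • (q - w)‖ := norm_add_le _ _
    _ = a * ‖p - w‖ + b * ‖q - w‖ := by
        rw [norm_smul, norm_smul, Real.norm_of_nonneg ha, Real.norm_of_nonneg hb]
    _ = a • ‖p - w‖ + b • ‖q - w‖ := rfl

lemma subgradient_of_min
    (hbot : ∀ x, f x ≠ ⊥)
    (hlsc : LowerSemicontinuous f)
    (hconv : ∀ x y : E, ∀ a b : ℝ, 0 ≤ a → 0 ≤ b → a + b = 1 →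
      f (a • x + b • y) ≤ (a : EReal) * f x + (b : EReal) * f y)
    (z : E) (fz : ℝ) (hfz : f z = (fz : EReal))
    (ρ : E → ℝ) (hρc : Continuous ρ) (hρcvx : ConvexOn ℝ Set.univ ρ)
    (hmin : ∀ y, ((fz + ρ z : ℝ) : EReal) ≤ f y + (ρ y : EReal)) :
    ∃ v : E →L[ℝ] ℝ, (∀ y, ((v (y - z) : ℝ) : EReal) + f z ≤ f y) ∧
      ∀ y, ρ z - ρ y ≤ v (y - z) := by
  set A : Set (E × ℝ) := {p | p.2 + ρ p.1 < fz + ρ z} with hA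
  have hAopen : IsOpen A :=
    isOpen_lt (continuous_snd.add (hρc.comp continuous_fst)) continuous_const
  have hAconv : Convex ℝ A := by
    intro p hp q hq a b ha hb hab
    simp only [hA, mem_setOf_eq] at hp hq ⊢
    have hfst : (a • p + b • q).1 = a • p.1 + b • q.1 := rfl
    have hsnd : (a • p + b • q).2 = a * p.2 + b * q.2 := rfl
    rw [hfst, hsnd]
    have h1 : ρ (a • p.1 + b • q.1) ≤ a * ρ p.1 + b * ρ q.1 :=
      hρcvx.2 (mem_univ _) (mem_univ _) ha hb hab
    set M := max (p.2 + ρ p.1) (q.2 + ρ q.1) with hM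
    have h2 : a * (p.2 + ρ p.1) ≤ a * M := mul_le_mul_of_nonneg_left (le_max_left _ _) ha
    have h3 : b * (q.2 + ρ q.1) ≤ b * M := mul_le_mul_of_nonneg_left (le_max_right _ _) hb
    have h4 : M < fz + ρ z := max_lt hp hq
    have h5 : a * M + b * M = M := by rw [← add_mul, hab, one_mul]
    linarith
  have hdisj : Disjoint A {p : E × ℝ | f p.1 ≤ (p.2 : EReal)} := by
    rw [Set.disjoint_left]
    rintro ⟨y, t⟩ hA' hB'
    simp only [hA, mem_setOf_eq] at hA' hB'
    have h1 : f y + (ρ y : EReal) ≤ ((t + ρ y : ℝ) : EReal) := by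
      rw [EReal.coe_add]
      exact add_le_add hB' le_rfl
    have h2 : ((t + ρ y : ℝ) : EReal) < ((fz + ρ z : ℝ) : EReal) := by exact_mod_cast hA'
    exact absurd (hmin y) (not_le.2 (h1.trans_lt h2))
  obtain ⟨F, u, hFA, hFB⟩ :=
    geometric_hahn_banach_open hAconv hAopen (epi_convex_s8 f hconv) hdisj
  set c := F (0, 1) with hc
  have hdec : ∀ (y : E) (t : ℝ), F (y, t) = F (y, 0) + t * c := by
    intro y t
    have h : ((y, t) : E × ℝ) = (y, 0) + t • ((0 : E), (1 : ℝ)) := by simp [Prod.ext_iff]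
    rw [h, map_add, map_smul, smul_eq_mul, hc]
  have hAy : ∀ (y : E) (t : ℝ), t + ρ y < fz + ρ z → F (y, 0) + t * c < u := by
    intro y t ht
    rw [← hdec]
    exact hFA (y, t) ht
  have hc0 : 0 ≤ c := by
    by_contra hcneg
    push_neg at hcneg
    obtain ⟨n, hn⟩ := exists_nat_gt ((u - F (z, 0) - (fz - 1) * c) / (-c))
    have h1 := hAy z (fz - 1 - n) (by
      have : (0:ℝ) ≤ n := Nat.cast_nonneg n
      linarith)
    rw [div_lt_iff₀ (by linarith : (0:ℝ) < -c)] at hn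
    nlinarith
  have hcne : c ≠ 0 := by
    intro h0
    have h1 : ∀ y : E, F (y, 0) < u := by
      intro y
      have := hAy y (fz + ρ z - ρ y - 1) (by linarith)
      rwa [h0, mul_zero, add_zero] at this
    have h2 : u ≤ F (z, fz) := hFB (z, fz) (le_of_eq hfz)
    rw [hdec z fz, h0, mul_zero, add_zero] at h2
    exact absurd (h1 z) (not_lt.2 h2)
  have hcpos : 0 < c := lt_of_le_of_ne hc0 (Ne.symm hcne)
  have hkey1 : ∀ y : E, F (y, 0) + (fz + ρ z - ρ y) * c ≤ u := by
    intro y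
    by_contra h
    push_neg at h
    set s := fz + ρ z - ρ y with hs
    set ε := (F (y, 0) + s * c - u) / c with hε
    have hεpos : 0 < ε := div_pos (by linarith) hcpos
    have h1 := hAy y (s - ε) (by simp only [hs]; linarith)
    have hεc : ε * c = F (y, 0) + s * c - u := div_mul_cancel₀ _ hcne
    have h2 : (s - ε) * c = s * c - ε * c := by ring
    linarith
  have hkey2 : ∀ y : E, f y ≠ ⊤ → u ≤ F (y, 0) + (f y).toReal * c := by
    intro y hy
    have hle : f y ≤ (((f y).toReal : ℝ) : EReal) := le_of_eq (EReal.coe_toReal hy (hbot y)).symm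
    have := hFB (y, (f y).toReal) hle
    rwa [hdec] at this
  have hz1 : F (z, 0) + fz * c ≤ u := by
    have := hkey1 z
    rwa [show fz + ρ z - ρ z = fz by ring] at this
  have hz2 : u ≤ F (z, 0) + fz * c := by
    have h := hkey2 z (by rw [hfz]; exact EReal.coe_ne_top fz)
    rwa [hfz, EReal.toReal_coe] at h
  have hu : u = F (z, 0) + fz * c := le_antisymm hz2 hz1
  set G := F.comp (ContinuousLinearMap.inl ℝ E ℝ) with hG
  have hGy : ∀ y : E, G y = F (y, 0) := fun y => rfl
  refine ⟨-(c⁻¹) • G, ?_, ?_⟩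
  · intro y
    by_cases hy : f y = ⊤
    · rw [hy]; exact le_top
    · have h1 := hkey2 y hy
      rw [hu] at h1
      have h2 : fz + (-(c⁻¹) • G) (y - z) ≤ (f y).toReal := by
        simp only [ContinuousLinearMap.smul_apply, map_sub, hGy, smul_eq_mul]
        have h3 : fz * c + (F (z, 0) - F (y, 0)) ≤ (f y).toReal * c := by linarith
        have h4 := mul_le_mul_of_nonneg_right h3 (inv_nonneg.2 hcpos.le)
        have h5 : c * c⁻¹ = 1 := mul_inv_cancel₀ hcne
        have h6 : fz * c * c⁻¹ = fz := by rw [mul_assoc, h5, mul_one]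
        have h7 : (f y).toReal * c * c⁻¹ = (f y).toReal := by rw [mul_assoc, h5, mul_one]
        have h8 : (fz * c + (F (z, 0) - F (y, 0))) * c⁻¹
            = fz * c * c⁻¹ + F (z, 0) * c⁻¹ - F (y, 0) * c⁻¹ := by ring
        rw [h8, h6, h7] at h4
        linarith
      rw [hfz, ← EReal.coe_toReal hy (hbot y)]
      have := EReal.coe_le_coe_iff.2 h2
      rw [EReal.coe_add] at this
      calc ((((-(c⁻¹) • G) (y - z) : ℝ)) : EReal) + ((fz : ℝ) : EReal)
          = ((fz : ℝ) : EReal) + (((-(c⁻¹) • G) (y - z) : ℝ) : EReal) := by rw [add_comm]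
        _ ≤ (((f y).toReal : ℝ) : EReal) := this
  · intro y
    have h1 := hkey1 y
    rw [hu] at h1
    have h2 : (ρ z - ρ y) * c ≤ F (z, 0) - F (y, 0) := by nlinarith
    have h3 : ρ z - ρ y ≤ (F (z, 0) - F (y, 0)) / c := (le_div_iff₀ hcpos).2 h2
    calc ρ z - ρ y ≤ (F (z, 0) - F (y, 0)) / c := h3
      _ = (-(c⁻¹) • G) (y - z) := by
          simp only [ContinuousLinearMap.smul_apply, map_sub, hGy, smul_eq_mul]
          field_simp
          ring

end Aux3

/-- If `f` is a proper lower semicontinuous convex function on a real Banach space `E` and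
`x ∈ E` satisfies `inf_E f < f x`, then there exist `z ∈ dom f` and `z* ∈ ∂f(z)` with
`f z < f x` and `⟨z*, x - z⟩ > 0`. -/
theorem exists_subgradient_separating
    {E : Type*} [NormedAddCommGroup E] [NormedSpace ℝ E] [CompleteSpace E]
    (f : E → EReal)
    (hbot : ∀ x, f x ≠ ⊥) (hproper : ∃ x, f x ≠ ⊤)
    (hlsc : LowerSemicontinuous f)
    (hconv : ∀ x y : E, ∀ a b : ℝ, 0 ≤ a → 0 ≤ b → a + b = 1 →
      f (a • x + b • y) ≤ (a : EReal) * f x + (b : EReal) * f y)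
    (x : E) (hx : ⨅ y, f y < f x) :
    ∃ (z : E) (z' : StrongDual ℝ E), f z ≠ ⊤ ∧
      (∀ y, ((z' (y - z) : ℝ) : EReal) + f z ≤ f y) ∧
      f z < f x ∧ 0 < z' (x - z) := by
  obtain ⟨x₀, hx₀⟩ : ∃ y, f y < f x := iInf_lt_iff.1 hx
  obtain ⟨r, hr₁, hr₂⟩ := EReal.exists_between_coe_real hx₀
  have hfx₀top : f x₀ ≠ ⊤ := (hr₁.trans (EReal.coe_lt_top r)).ne
  obtain ⟨a, hfa⟩ : ∃ a : ℝ, f x₀ = (a : EReal) :=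
    ⟨(f x₀).toReal, (EReal.coe_toReal hfx₀top (hbot x₀)).symm⟩
  have har : a < r := by rw [hfa] at hr₁; exact_mod_cast hr₁
  obtain ⟨v₀, c₀, hmino⟩ := exists_affine_minorant f hbot hproper hlsc hconv
  set θ : ℝ := (r - a) / (‖x₀ - x‖ + 1) with hθdef
  have hθpos : 0 < θ := div_pos (by linarith) (by positivity)
  have hθx : a + θ * ‖x₀ - x‖ < r := by
    have hid : θ * (‖x₀ - x‖ + 1) = r - a := div_mul_cancel₀ _ (by positivity)
    nlinarith [hθpos]
  clear_value θ
  set R : ℝ := ‖x - x₀‖ with hRdef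
  clear_value R
  set ρ₀ : E → ℝ := fun y => θ * ‖y - x‖ + ‖v₀‖ * max (‖y - x₀‖ - R) 0 with hρ₀def
  clear_value ρ₀
  have hρ₀nonneg : ∀ y, 0 ≤ ρ₀ y := by
    intro y
    have h1 : 0 ≤ ‖v₀‖ * max (‖y - x₀‖ - R) 0 :=
      mul_nonneg (norm_nonneg _) (le_max_right _ _)
    have h2 : 0 ≤ θ * ‖y - x‖ := by positivity
    simp only [hρ₀def]; linarith
  have hρ₀x₀ : ρ₀ x₀ = θ * ‖x₀ - x‖ := by
    simp only [hρ₀def, sub_self, norm_zero, zero_sub]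
    rw [max_eq_right (neg_nonpos.2 (by rw [hRdef]; positivity)), mul_zero, add_zero]
  have hρ₀x : ρ₀ x = 0 := by
    simp [hρ₀def, hRdef]
  have hmin_ne_top : ∀ y, min (f y) (r : EReal) ≠ ⊤ :=
    fun y => ((min_le_right _ _).trans_lt (EReal.coe_lt_top r)).ne
  have hmin_ne_bot : ∀ y, min (f y) (r : EReal) ≠ ⊥ :=
    fun y => (lt_min (Ne.bot_lt (hbot y)) (EReal.bot_lt_coe r)).ne'
  have hlsc1 : LowerSemicontinuous fun y : E => (min (f y) (r : EReal)).toReal := by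
    intro y₀ b hb
    have hb' : (b : EReal) < min (f y₀) (r : EReal) := by
      have h := EReal.coe_lt_coe_iff.2 hb
      rwa [EReal.coe_toReal (hmin_ne_top y₀) (hmin_ne_bot y₀)] at h
    have hb1 : (b : EReal) < f y₀ := hb'.trans_le (min_le_left _ _)
    have hb2 : (b : EReal) < (r : EReal) := hb'.trans_le (min_le_right _ _)
    filter_upwards [hlsc y₀ b hb1] with y' hy'
    have h1 : (b : EReal) < min (f y') (r : EReal) := lt_min hy' hb2
    rw [← EReal.coe_toReal (hmin_ne_top y') (hmin_ne_bot y')] at h1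
    exact_mod_cast h1
  have hρ₀cont : Continuous ρ₀ := by
    rw [hρ₀def]
    apply Continuous.add
    · exact continuous_const.mul ((continuous_id.sub continuous_const).norm)
    · exact continuous_const.mul
        (((continuous_id.sub continuous_const).norm.sub continuous_const).max continuous_const)
  set H : E → ℝ := fun y => (min (f y) (r : EReal)).toReal + ρ₀ y with hHdef
  clear_value H
  have hlscH : LowerSemicontinuous H := by
    rw [hHdef]
    exact hlsc1.add hρ₀cont.lowerSemicontinuous
  set C : ℝ := min (v₀ x₀ + c₀ - ‖v₀‖ * R) r with hCdef
  clear_value C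
  have hCbound : ∀ y, C ≤ H y := by
    intro y
    have hcoe : ((min (v₀ y + c₀) r : ℝ) : EReal) ≤ min (f y) (r : EReal) := by
      refine le_min ?_ ?_
      · calc ((min (v₀ y + c₀) r : ℝ) : EReal) ≤ ((v₀ y + c₀ : ℝ) : EReal) := by
              exact_mod_cast min_le_left _ _
          _ ≤ f y := hmino y
      · exact_mod_cast min_le_right (v₀ y + c₀) r
    have hm : min (v₀ y + c₀) r ≤ (min (f y) (r : EReal)).toReal := by
      have h := EReal.toReal_le_toReal hcoe (EReal.coe_ne_bot _) (hmin_ne_top y)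
      rwa [EReal.toReal_coe] at h
    have hv : v₀ x₀ - ‖v₀‖ * ‖y - x₀‖ ≤ v₀ y := by
      have h1 : ‖v₀ (x₀ - y)‖ ≤ ‖v₀‖ * ‖x₀ - y‖ := v₀.le_opNorm _
      have h2 : v₀ (x₀ - y) = v₀ x₀ - v₀ y := map_sub _ _ _
      have h3 : ‖x₀ - y‖ = ‖y - x₀‖ := norm_sub_rev _ _
      rw [h2, h3, Real.norm_eq_abs] at h1
      have h4 := abs_le.1 h1
      linarith [h4.1, h4.2]
    have hmax : ‖v₀‖ * (‖y - x₀‖ - R) ≤ ‖v₀‖ * max (‖y - x₀‖ - R) 0 :=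
      mul_le_mul_of_nonneg_left (le_max_left _ _) (norm_nonneg _)
    have hθ0 : 0 ≤ θ * ‖y - x‖ := by positivity
    have hHy : H y = (min (f y) (r : EReal)).toReal
        + (θ * ‖y - x‖ + ‖v₀‖ * max (‖y - x₀‖ - R) 0) := by simp only [hHdef, hρ₀def]
    rcases le_total (v₀ y + c₀) r with hcase | hcase
    · rw [min_eq_left hcase] at hm
      have hC1 : C ≤ v₀ x₀ + c₀ - ‖v₀‖ * R := by rw [hCdef]; exact min_le_left _ _
      rw [hHy]
      nlinarith [hv, hmax, hm, hθ0, hC1]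
    · rw [min_eq_right hcase] at hm
      have hC2 : C ≤ r := by rw [hCdef]; exact min_le_right _ _
      have hmax0 : 0 ≤ ‖v₀‖ * max (‖y - x₀‖ - R) 0 :=
        mul_nonneg (norm_nonneg _) (le_max_right _ _)
      rw [hHy]
      linarith [hm, hθ0, hmax0, hC2]
  obtain ⟨z, he1, he2⟩ := ekeland_weak H hlscH C hCbound (θ/2) (by positivity) x₀
  have hminx₀ : min (f x₀) (r : EReal) = f x₀ := min_eq_left hr₁.le
  have hHx₀ : H x₀ = a + θ * ‖x₀ - x‖ := by
    simp only [hHdef]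
    rw [hminx₀, hfa, EReal.toReal_coe, hρ₀x₀]
  have hHzle : H z ≤ H x₀ := by
    have h1 : 0 ≤ θ/2 * ‖z - x₀‖ := by positivity
    exact le_trans (le_add_of_nonneg_right h1) he1
  have hHxr : H x₀ < r := by rw [hHx₀]; exact hθx
  have hHz_eq : H z = (min (f z) (r : EReal)).toReal + ρ₀ z := by simp only [hHdef]
  have htr : (min (f z) (r : EReal)).toReal < r := by
    have := hρ₀nonneg z
    linarith [hHzle, hHxr]
  have h6 : min (f z) (r : EReal) < (r : EReal) := by
    rw [← EReal.coe_toReal (hmin_ne_top z) (hmin_ne_bot z)]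
    exact_mod_cast htr
  have h7 : f z < (r : EReal) := by
    rcases lt_or_ge (f z) ((r : EReal)) with h | h
    · exact h
    · rw [min_eq_right h] at h6; exact absurd h6 (lt_irrefl _)
  have hfz_ne_top : f z ≠ ⊤ := (h7.trans (EReal.coe_lt_top r)).ne
  obtain ⟨fzR, hfzcoe⟩ : ∃ t : ℝ, f z = (t : EReal) :=
    ⟨(f z).toReal, (EReal.coe_toReal hfz_ne_top (hbot z)).symm⟩
  have hminz : min (f z) (r : EReal) = f z := min_eq_left h7.le
  have hHzval : H z = fzR + ρ₀ z := by
    rw [hHz_eq, hminz, hfzcoe, EReal.toReal_coe]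
  set ρt : E → ℝ := fun y => ρ₀ y + (θ/2) * ‖y - z‖ with hρtdef
  clear_value ρt
  have hρtz : ρt z = ρ₀ z := by simp [hρtdef]
  have hρtcont : Continuous ρt := by
    rw [hρtdef]
    exact hρ₀cont.add (continuous_const.mul ((continuous_id.sub continuous_const).norm))
  have hcvx1 : ConvexOn ℝ Set.univ fun y : E => θ * ‖y - x‖ := by
    have h := (convexOn_norm_sub (E := E) x).smul hθpos.le
    simpa [smul_eq_mul] using h
  have hcvx2 : ConvexOn ℝ Set.univ fun y : E => ‖v₀‖ * max (‖y - x₀‖ - R) 0 := by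
    have h1 : ConvexOn ℝ Set.univ fun y : E => ‖y - x₀‖ - R := by
      simpa [sub_eq_add_neg, Pi.add_def] using
        (convexOn_norm_sub (E := E) x₀).add (convexOn_const (-R) convex_univ)
    have h2 := h1.sup (convexOn_const (0:ℝ) convex_univ)
    have h3 := h2.smul (norm_nonneg v₀)
    simpa [smul_eq_mul, Pi.sup_apply] using h3
  have hcvx3 : ConvexOn ℝ Set.univ fun y : E => (θ/2) * ‖y - z‖ := by
    have h := (convexOn_norm_sub (E := E) z).smul (by positivity : (0:ℝ) ≤ θ/2)
    simpa [smul_eq_mul] using h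
  have hρtcvx : ConvexOn ℝ Set.univ ρt := by
    have h := (hcvx1.add hcvx2).add hcvx3
    have heq : ρt = fun y =>
        ((θ * ‖y - x‖ + ‖v₀‖ * max (‖y - x₀‖ - R) 0) + (θ/2) * ‖y - z‖) := by
      funext y; simp only [hρtdef, hρ₀def]
    rw [heq]
    exact h
  have hminineq : ∀ y, ((fzR + ρt z : ℝ) : EReal) ≤ f y + (ρt y : EReal) := by
    intro y
    have hH2 := he2 y
    have hHy_eq : H y = (min (f y) (r : EReal)).toReal + ρ₀ y := by simp only [hHdef]
    have hreal : fzR + ρt z ≤ (min (f y) (r : EReal)).toReal + ρt y := by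
      rw [hHzval, hHy_eq] at hH2
      rw [hρtz]
      simp only [hρtdef]
      linarith [hH2]
    calc ((fzR + ρt z : ℝ) : EReal)
        ≤ (((min (f y) (r : EReal)).toReal + ρt y : ℝ) : EReal) := by exact_mod_cast hreal
      _ = ((min (f y) (r : EReal)).toReal : EReal) + (ρt y : EReal) := EReal.coe_add _ _
      _ ≤ f y + (ρt y : EReal) := by
          refine add_le_add ?_ le_rfl
          rw [EReal.coe_toReal (hmin_ne_top y) (hmin_ne_bot y)]
          exact min_le_left _ _
  obtain ⟨v, hsub, hvρ⟩ :=
    subgradient_of_min f hbot hlsc hconv z fzR hfzcoe ρt hρtcont hρtcvx hminineq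
  have hzx : z ≠ x := by
    intro h
    rw [h] at h7
    exact absurd (h7.trans hr₂) (lt_irrefl _)
  have hnorm_pos : 0 < ‖x - z‖ := by
    rw [norm_pos_iff, sub_ne_zero]
    exact fun h => hzx h.symm
  have h8 := hvρ x
  have hρtx : ρt x = (θ/2) * ‖x - z‖ := by
    simp only [hρtdef]
    rw [hρ₀x, zero_add]
  have hρtz_ge : θ * ‖z - x‖ ≤ ρt z := by
    rw [hρtz]
    simp only [hρ₀def]
    have h9 : 0 ≤ ‖v₀‖ * max (‖z - x₀‖ - R) 0 :=
      mul_nonneg (norm_nonneg _) (le_max_right _ _)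
    linarith
  have hnr : ‖z - x‖ = ‖x - z‖ := norm_sub_rev _ _
  have hpos : 0 < v (x - z) := by
    rw [hρtx] at h8
    rw [hnr] at hρtz_ge
    nlinarith [h8, hρtz_ge, mul_pos hθpos hnorm_pos]
  exact ⟨z, v, hfz_ne_top, hsub, h7.trans hr₂, hpos⟩
end
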